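/- arXiv:1301.4786 — 9 statements merged into one kernel-verified Lean document; each statement's English description precedes it below -/
import Mathlib

section
/- (Charging BS 1's storage while draining BS 2's storage does not improve the optimal cost when β > α.) Suppose 0 < α < β ≤ 1 and Δ ≥ 0 satisfy σ₁ + α·Δ ≤ S_max and β·Δ/α ≤ σ₂. Then J*_k(σ₁, σ₂) ≤ J*_k(σ₁ + α·Δ, σ₂ − β·Δ/α). -/
/-- Auxiliary recursion tracking the storage deficit of BS 1 (`.1`) and the
storage surplus of BS 2 (`.2`) along the policy simulation. -/
noncomputable def abRec (α β Smax : ℝ) (k : ℕ) (d₁ s₂ : ℕ → ℝ) (a0 b0 : ℝ) : ℕ → ℝ × ℝ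
  | 0 => (a0, b0)
  | n + 1 =>
    let p := abRec α β Smax k d₁ s₂ a0 b0 n
    let m := min p.1 (d₁ (k + n))
    let v := max 0 (s₂ (k + n + 1) + p.2 - m / β - Smax)
    let g := min (v / α) ((p.1 - m) / (α * β))
    (p.1 - m - α * β * g, p.2 - m / β - v)

noncomputable def mf (α β Smax : ℝ) (k : ℕ) (d₁ s₂ : ℕ → ℝ) (a0 b0 : ℝ) (n : ℕ) : ℝ :=
  min (abRec α β Smax k d₁ s₂ a0 b0 n).1 (d₁ (k + n))

noncomputable def vf (α β Smax : ℝ) (k : ℕ) (d₁ s₂ : ℕ → ℝ) (a0 b0 : ℝ) (n : ℕ) : ℝ :=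
  max 0 (s₂ (k + n + 1) + (abRec α β Smax k d₁ s₂ a0 b0 n).2
    - mf α β Smax k d₁ s₂ a0 b0 n / β - Smax)

noncomputable def gf (α β Smax : ℝ) (k : ℕ) (d₁ s₂ : ℕ → ℝ) (a0 b0 : ℝ) (n : ℕ) : ℝ :=
  min (vf α β Smax k d₁ s₂ a0 b0 n / α)
    (((abRec α β Smax k d₁ s₂ a0 b0 n).1 - mf α β Smax k d₁ s₂ a0 b0 n) / (α * β))

lemma abRec_succ (α β Smax : ℝ) (k : ℕ) (d₁ s₂ : ℕ → ℝ) (a0 b0 : ℝ) (n : ℕ) :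
    abRec α β Smax k d₁ s₂ a0 b0 (n + 1) =
      ((abRec α β Smax k d₁ s₂ a0 b0 n).1 - mf α β Smax k d₁ s₂ a0 b0 n
          - α * β * gf α β Smax k d₁ s₂ a0 b0 n,
        (abRec α β Smax k d₁ s₂ a0 b0 n).2 - mf α β Smax k d₁ s₂ a0 b0 n / β
          - vf α β Smax k d₁ s₂ a0 b0 n) := rfl

/-- A feasible policy for the two-base-station energy cooperation problem over
slots `t ∈ {k, …, N}` from initial storage state `(σ₁, σ₂)`. -/
def Feasible (α β Smax : ℝ) (k N : ℕ) (E₁ E₂ : ℕ → ℝ) (σ₁ σ₂ : ℝ)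
    (w₁ w₂ c₁ c₂ d₁ d₂ x₁₂ x₂₁ s₁ s₂ : ℕ → ℝ) : Prop :=
  s₁ k = σ₁ ∧ s₂ k = σ₂ ∧
  (∀ t ∈ Finset.Icc k N,
    0 ≤ w₁ t ∧ 0 ≤ w₂ t ∧ 0 ≤ c₁ t ∧ 0 ≤ c₂ t ∧ 0 ≤ d₁ t ∧ 0 ≤ d₂ t ∧
      0 ≤ x₁₂ t ∧ 0 ≤ x₂₁ t ∧
      s₁ (t + 1) = s₁ t + α * c₁ t - d₁ t ∧
      s₂ (t + 1) = s₂ t + α * c₂ t - d₂ t ∧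
      d₁ t ≤ s₁ t ∧ d₂ t ≤ s₂ t ∧
      0 ≤ E₁ t + w₁ t - c₁ t + α * d₁ t - x₁₂ t + β * x₂₁ t ∧
      0 ≤ E₂ t + w₂ t - c₂ t + α * d₂ t - x₂₁ t + β * x₁₂ t) ∧
  (∀ t ∈ Finset.Icc k (N + 1),
    0 ≤ s₁ t ∧ s₁ t ≤ Smax ∧ 0 ≤ s₂ t ∧ s₂ t ≤ Smax)

/-- Optimal cost `J*_k(σ₁, σ₂)`: the infimum of total grid draw over feasible policies. -/
noncomputable def Jstar (α β Smax : ℝ) (k N : ℕ) (E₁ E₂ : ℕ → ℝ) (σ₁ σ₂ : ℝ) : ℝ :=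
  sInf {r : ℝ | ∃ w₁ w₂ c₁ c₂ d₁ d₂ x₁₂ x₂₁ s₁ s₂ : ℕ → ℝ,
    Feasible α β Smax k N E₁ E₂ σ₁ σ₂ w₁ w₂ c₁ c₂ d₁ d₂ x₁₂ x₂₁ s₁ s₂ ∧
    (∑ t ∈ Finset.Icc k N, (w₁ t + w₂ t)) = r}

set_option maxHeartbeats 1000000 in
/-- charging BS 1's storage while draining BS 2's storage does not
improve the optimal cost when `β > α`. -/
theorem charge_one_drain_two_not_better
    (α β Smax : ℝ) (hα : 0 < α) (hαβ : α < β) (hβ : β ≤ 1) (hS : 0 < Smax)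
    (k N : ℕ) (hkN : k ≤ N) (E₁ E₂ : ℕ → ℝ)
    (σ₁ σ₂ : ℝ) (hσ₁ : 0 ≤ σ₁ ∧ σ₁ ≤ Smax) (hσ₂ : 0 ≤ σ₂ ∧ σ₂ ≤ Smax)
    (Δ : ℝ) (hΔ : 0 ≤ Δ)
    (hcap₁ : σ₁ + α * Δ ≤ Smax) (hcap₂ : β * Δ / α ≤ σ₂) :
    Jstar α β Smax k N E₁ E₂ σ₁ σ₂ ≤
      Jstar α β Smax k N E₁ E₂ (σ₁ + α * Δ) (σ₂ - β * Δ / α) := by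
  obtain ⟨hσ₁0, hσ₁S⟩ := hσ₁
  obtain ⟨hσ₂0, hσ₂S⟩ := hσ₂
  have hβ0 : 0 < β := hα.trans hαβ
  apply csInf_le_csInf
  · -- bounded below by 0
    refine ⟨0, ?_⟩
    rintro r ⟨w₁, w₂, c₁, c₂, d₁, d₂, x₁₂, x₂₁, s₁, s₂, ⟨_, _, hslot, _⟩, rfl⟩
    exact Finset.sum_nonneg fun t ht => by
      obtain ⟨h1, h2, -⟩ := hslot t ht; linarith
  · -- nonempty: trivial policy
    refine ⟨∑ t ∈ Finset.Icc k N, (max (-(E₁ t)) 0 + max (-(E₂ t)) 0),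
      fun t => max (-(E₁ t)) 0, fun t => max (-(E₂ t)) 0,
      0, 0, 0, 0, 0, 0, fun _ => σ₁ + α * Δ, fun _ => σ₂ - β * Δ / α,
      ⟨rfl, rfl, ?_, ?_⟩, rfl⟩
    · intro t ht
      have h1 : -(E₁ t) ≤ max (-(E₁ t)) 0 := le_max_left _ _
      have h2 : -(E₂ t) ≤ max (-(E₂ t)) 0 := le_max_left _ _
      have h3 : 0 ≤ α * Δ := by positivity
      have h4 : 0 ≤ β * Δ / α := by positivity
      dsimp only [Pi.zero_apply]
      refine ⟨le_max_right _ _, le_max_right _ _, le_rfl, le_rfl, le_rfl, le_rfl,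
        le_rfl, le_rfl, by ring, by ring, by linarith, by linarith,
        by linarith, by linarith⟩
    · intro t ht
      have h3 : 0 ≤ α * Δ := by positivity
      have h4 : 0 ≤ β * Δ / α := by positivity
      dsimp only
      exact ⟨by linarith, hcap₁, by linarith, by linarith⟩
  · -- every cost achievable from the shifted state is achievable from (σ₁, σ₂)
    rintro r ⟨w₁, w₂, c₁, c₂, d₁, d₂, x₁₂, x₂₁, s₁, s₂,
      ⟨hs1k, hs2k, hslot, hbound⟩, rfl⟩
    obtain ⟨Q, M, V, G, hQ01, hQ02, hQs1, hQs2, hM', hV', hG'⟩ :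
        ∃ (Q : ℕ → ℝ × ℝ) (M V G : ℕ → ℝ),
          (Q 0).1 = α * Δ ∧ (Q 0).2 = β * Δ / α ∧
          (∀ n, (Q (n + 1)).1 = (Q n).1 - M n - α * β * G n) ∧
          (∀ n, (Q (n + 1)).2 = (Q n).2 - M n / β - V n) ∧
          (∀ n, M n = min (Q n).1 (d₁ (k + n))) ∧
          (∀ n, V n = max 0 (s₂ (k + n + 1) + (Q n).2 - M n / β - Smax)) ∧
          (∀ n, G n = min (V n / α) (((Q n).1 - M n) / (α * β))) := by
      refine ⟨abRec α β Smax k d₁ s₂ (α * Δ) (β * Δ / α),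
        mf α β Smax k d₁ s₂ (α * Δ) (β * Δ / α),
        vf α β Smax k d₁ s₂ (α * Δ) (β * Δ / α),
        gf α β Smax k d₁ s₂ (α * Δ) (β * Δ / α),
        rfl, rfl, fun n => ?_, fun n => ?_, fun n => rfl, fun n => rfl,
        fun n => rfl⟩
      · rw [abRec_succ]
      · rw [abRec_succ]
    -- the invariant along the simulation
    have inv : ∀ n, k + n ≤ N + 1 →
        0 ≤ (Q n).1 ∧ (Q n).1 ≤ β * (Q n).2 ∧ (Q n).1 ≤ s₁ (k + n) ∧
          0 ≤ (Q n).2 ∧ s₂ (k + n) + (Q n).2 ≤ Smax := by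
      intro n
      induction n with
      | zero =>
        intro _
        rw [hQ01, hQ02]
        have hab : α * Δ ≤ β * (β * Δ / α) := by
          have e : β * (β * Δ / α) = β * β * Δ / α := by ring
          rw [e, le_div_iff₀ hα]
          have h1 : 0 ≤ (β * β - α * α) * Δ :=
            mul_nonneg (by nlinarith) hΔ
          nlinarith [h1]
        have hb00 : 0 ≤ β * Δ / α := by positivity
        refine ⟨by positivity, hab, ?_, hb00, ?_⟩
        · simp only [Nat.add_zero]
          rw [hs1k]; linarith
        · simp only [Nat.add_zero]
          rw [hs2k]; linarith
      | succ n ih =>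
        intro hn1
        have hn : k + n ≤ N := by omega
        obtain ⟨hab0, hab, has, hbpos, hbs⟩ := ih (by omega)
        obtain ⟨hw₁, hw₂, hc₁, hc₂, hd₁, hd₂, hx₁₂, hx₂₁, hr₁, hr₂, hds₁, hds₂,
          he₁, he₂⟩ := hslot (k + n) (Finset.mem_Icc.mpr ⟨Nat.le_add_right _ _, hn⟩)
        obtain ⟨hsb1, hsb2, hsb3, hsb4⟩ :=
          hbound (k + n + 1) (Finset.mem_Icc.mpr ⟨by omega, by omega⟩)
        have hm0 : 0 ≤ M n := by rw [hM']; exact le_min hab0 hd₁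
        have hm1 : M n ≤ (Q n).1 := by rw [hM']; exact min_le_left _ _
        have hm2 : M n ≤ d₁ (k + n) := by rw [hM']; exact min_le_right _ _
        have hv0 : 0 ≤ V n := by rw [hV']; exact le_max_left _ _
        have hg0 : 0 ≤ G n := by
          rw [hG']
          exact le_min (by positivity) (div_nonneg (by linarith) (by positivity))
        have hg2 : α * β * G n ≤ (Q n).1 - M n := by
          have h : G n ≤ ((Q n).1 - M n) / (α * β) := by
            rw [hG']; exact min_le_right _ _
          rw [le_div_iff₀ (by positivity : (0:ℝ) < α * β)] at h
          have e : α * β * G n = G n * (α * β) := by ring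
          linarith
        have hmb : M n / β ≤ (Q n).2 := by
          rw [div_le_iff₀ hβ0]
          have e : β * (Q n).2 = (Q n).2 * β := by ring
          linarith
        have hb1 : 0 ≤ (Q n).2 - M n / β := by linarith
        have hvb : V n ≤ (Q n).2 - M n / β := by
          rw [hV']; exact max_le hb1 (by linarith)
        have hbn' : 0 ≤ (Q n).2 - M n / β - V n := by linarith
        rw [hQs1 n, hQs2 n, show k + (n + 1) = k + n + 1 by omega]
        refine ⟨by linarith, ?_, ?_, hbn', ?_⟩
        · -- a' ≤ β * b'
          rcases le_total (V n / α) (((Q n).1 - M n) / (α * β)) with h | h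
          · have hGe : G n = V n / α := by rw [hG']; exact min_eq_left h
            have e1 : α * β * (V n / α) = β * V n := by field_simp
            have e3 : β * ((Q n).2 - M n / β - V n)
                = β * (Q n).2 - M n - β * V n := by field_simp
            rw [hGe]
            linarith [e1, e3, hab]
          · have hGe : G n = ((Q n).1 - M n) / (α * β) := by
              rw [hG']; exact min_eq_right h
            have e1 : α * β * (((Q n).1 - M n) / (α * β)) = (Q n).1 - M n := by
              field_simp
            have e2 : 0 ≤ β * ((Q n).2 - M n / β - V n) :=
              mul_nonneg hβ0.le hbn'
            rw [hGe]
            linarith [e1, e2]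
        · -- a' ≤ s₁ (k+n+1)
          have hαβg : 0 ≤ α * β * G n := by positivity
          rcases le_total (Q n).1 (d₁ (k + n)) with h | h
          · have hMe : M n = (Q n).1 := by rw [hM']; exact min_eq_left h
            linarith [hsb1, hαβg, hMe]
          · have hMe : M n = d₁ (k + n) := by rw [hM']; exact min_eq_right h
            have hc : 0 ≤ α * c₁ (k + n) := by positivity
            rw [hr₁] at hsb1 ⊢
            linarith [has, hMe, hc, hαβg]
        · -- s₂ (k+n+1) + b' ≤ Smax
          rcases le_or_gt (s₂ (k + n + 1) + (Q n).2 - M n / β - Smax) 0 with h | h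
          · have hVe : V n = 0 := by rw [hV']; exact max_eq_left h
            linarith [hVe, h]
          · have hVe : V n = s₂ (k + n + 1) + (Q n).2 - M n / β - Smax := by
              rw [hV']; exact max_eq_right h.le
            linarith [hVe]
    -- the modified policy
    refine ⟨w₁, w₂, fun t => c₁ t + β * G (t - k), fun t => c₂ t - V (t - k) / α,
      fun t => d₁ t - M (t - k), fun t => d₂ t + M (t - k) / β, x₁₂,
      fun t => x₂₁ t + α * M (t - k) / β + G (t - k),
      fun t => s₁ t - (Q (t - k)).1, fun t => s₂ t + (Q (t - k)).2,
      ⟨?_, ?_, ?_, ?_⟩, rfl⟩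
    · show s₁ k - (Q (k - k)).1 = σ₁
      rw [Nat.sub_self, hQ01, hs1k]; ring
    · show s₂ k + (Q (k - k)).2 = σ₂
      rw [Nat.sub_self, hQ02, hs2k]; ring
    · -- per-slot constraints
      intro t ht
      rw [Finset.mem_Icc] at ht
      obtain ⟨n, rfl⟩ := Nat.exists_eq_add_of_le ht.1
      have hk1 : k + n - k = n := by omega
      have hk2 : k + n + 1 - k = n + 1 := by omega
      have hn : k + n ≤ N := ht.2
      obtain ⟨hab0, hab, has, hbpos, hbs⟩ := inv n (by omega)
      obtain ⟨hw₁, hw₂, hc₁, hc₂, hd₁, hd₂, hx₁₂, hx₂₁, hr₁, hr₂, hds₁, hds₂,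
        he₁, he₂⟩ := hslot (k + n) (Finset.mem_Icc.mpr ⟨Nat.le_add_right _ _, hn⟩)
      have hm0 : 0 ≤ M n := by rw [hM']; exact le_min hab0 hd₁
      have hm1 : M n ≤ (Q n).1 := by rw [hM']; exact min_le_left _ _
      have hm2 : M n ≤ d₁ (k + n) := by rw [hM']; exact min_le_right _ _
      have hv0 : 0 ≤ V n := by rw [hV']; exact le_max_left _ _
      have hg0 : 0 ≤ G n := by
        rw [hG']
        exact le_min (by positivity) (div_nonneg (by linarith) (by positivity))
      have hg1 : G n ≤ V n / α := by rw [hG']; exact min_le_left _ _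
      have hmb : M n / β ≤ (Q n).2 := by
        rw [div_le_iff₀ hβ0]
        have e : β * (Q n).2 = (Q n).2 * β := by ring
        linarith
      have hvc : V n ≤ α * c₂ (k + n) := by
        rw [hV']
        refine max_le (by positivity) ?_
        have hmβ : 0 ≤ M n / β := by positivity
        rw [hr₂]
        linarith [hbs, hd₂, hmβ]
      dsimp only
      rw [hk1, hk2]
      refine ⟨hw₁, hw₂, ?_, ?_, ?_, ?_, hx₁₂, ?_, ?_, ?_, ?_, ?_, ?_, ?_⟩
      · have : 0 ≤ β * G n := by positivity
        linarith
      · have : V n / α ≤ c₂ (k + n) := by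
          rw [div_le_iff₀ hα]
          have e : α * c₂ (k + n) = c₂ (k + n) * α := by ring
          linarith
        linarith
      · linarith
      · have : 0 ≤ M n / β := by positivity
        linarith
      · have h1 : 0 ≤ α * M n / β := by positivity
        linarith
      · -- storage recursion for BS 1
        rw [hQs1 n, hr₁]; ring
      · -- storage recursion for BS 2
        rw [hQs2 n, hr₂]
        field_simp
        ring
      · -- d₁' ≤ s₁'
        rcases le_total (Q n).1 (d₁ (k + n)) with h | h
        · have hMe : M n = (Q n).1 := by rw [hM']; exact min_eq_left h
          linarith [hds₁, hMe]
        · have hMe : M n = d₁ (k + n) := by rw [hM']; exact min_eq_right h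
          linarith [has, hMe]
      · -- d₂' ≤ s₂'
        linarith [hmb, hds₂]
      · -- energy balance at BS 1
        have e : E₁ (k + n) + w₁ (k + n) - (c₁ (k + n) + β * G n)
            + α * (d₁ (k + n) - M n) - x₁₂ (k + n)
            + β * (x₂₁ (k + n) + α * M n / β + G n)
            = E₁ (k + n) + w₁ (k + n) - c₁ (k + n) + α * d₁ (k + n)
              - x₁₂ (k + n) + β * x₂₁ (k + n) := by
          field_simp
          ring
        rw [e]
        exact he₁
      · -- energy balance at BS 2
        have e : E₂ (k + n) + w₂ (k + n) - (c₂ (k + n) - V n / α)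
            + α * (d₂ (k + n) + M n / β) - (x₂₁ (k + n) + α * M n / β + G n)
            + β * x₁₂ (k + n)
            = (E₂ (k + n) + w₂ (k + n) - c₂ (k + n) + α * d₂ (k + n)
              - x₂₁ (k + n) + β * x₁₂ (k + n)) + (V n / α - G n) := by
          field_simp
          ring
        rw [e]
        have : 0 ≤ V n / α - G n := by linarith [hg1]
        linarith [he₂]
    · -- storage bounds
      intro t ht
      rw [Finset.mem_Icc] at ht
      obtain ⟨n, rfl⟩ := Nat.exists_eq_add_of_le ht.1
      have hk1 : k + n - k = n := by omega
      obtain ⟨hab0, hab, has, hbpos, hbs⟩ := inv n ht.2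
      obtain ⟨hsb1, hsb2, hsb3, hsb4⟩ :=
        hbound (k + n) (Finset.mem_Icc.mpr ⟨Nat.le_add_right _ _, ht.2⟩)
      dsimp only
      rw [hk1]
      refine ⟨by linarith, by linarith, by linarith, by linarith⟩
end

section
/- (Claim 2 in the proof of Proposition 6.) Suppose 0 < α ≤ 1, 0 < β ≤ 1, E₁(t) ≥ 0 and E₂(t) ≤ 0 for all t ∈ {k,…,N}, and Δ ≥ 0 satisfies Δ ≤ min{(S_max − σ₁)/α, α·σ₂/β}. Then J*_k(σ₁, σ₂) ≤ J*_k(σ₁ + α·Δ, σ₂ − β·Δ/α). -/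
set_option maxHeartbeats 2000000 in
lemma key (α β Smax : ℝ) (hα0 : 0 < α) (hα1 : α ≤ 1) (hβ0 : 0 < β) (hβ1 : β ≤ 1)
    (N : ℕ) (E₁ E₂ : ℕ → ℝ) :
    ∀ (n k : ℕ), k + n = N + 1 →
    (∀ t ∈ Finset.Icc k N, 0 ≤ E₁ t) → (∀ t ∈ Finset.Icc k N, E₂ t ≤ 0) →
    ∀ (a b m r₁ r₂ : ℝ), 0 ≤ a → 0 ≤ b → 0 ≤ m → a ≤ r₁ → r₂ + b ≤ Smax →
    β * a ≤ α * b + m →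
    ∀ w₁ w₂ c₁ c₂ d₁ d₂ x₁₂ x₂₁ s₁ s₂,
      Feasible α β Smax k N E₁ E₂ r₁ r₂ w₁ w₂ c₁ c₂ d₁ d₂ x₁₂ x₂₁ s₁ s₂ →
      ∃ W₁ W₂ C₁ C₂ D₁ D₂ X₁₂ X₂₁ S₁ S₂,
        Feasible α β Smax k N E₁ E₂ (r₁ - a) (r₂ + b) W₁ W₂ C₁ C₂ D₁ D₂ X₁₂ X₂₁ S₁ S₂ ∧
        (∑ t ∈ Finset.Icc k N, (W₁ t + W₂ t)) ≤ (∑ t ∈ Finset.Icc k N, (w₁ t + w₂ t)) + m := by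
  intro n
  induction n with
  | zero =>
      intro k hk hE1 hE2 a b m r₁ r₂ ha hb hm har hrb hC w₁ w₂ c₁ c₂ d₁ d₂ x₁₂ x₂₁ s₁ s₂ hF
      have hkN : k = N + 1 := by omega
      obtain ⟨hs1k, hs2k, _, hbound⟩ := hF
      have hbk := hbound k (by simp [Finset.mem_Icc]; omega)
      rw [hs1k, hs2k] at hbk
      refine ⟨fun _ => 0, fun _ => 0, fun _ => 0, fun _ => 0, fun _ => 0, fun _ => 0,
        fun _ => 0, fun _ => 0, fun _ => r₁ - a, fun _ => r₂ + b, ⟨rfl, rfl, ?_, ?_⟩, ?_⟩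
      · intro t ht
        exfalso
        simp [Finset.mem_Icc] at ht; omega
      · intro t _
        dsimp only
        exact ⟨by linarith, by linarith [hbk.2.1], by linarith [hbk.2.2.1], hrb⟩
      · rw [Finset.Icc_eq_empty (by omega)]
        simpa using hm
  | succ n ih =>
      intro k hk hE1 hE2 a b m r₁ r₂ ha hb hm har hrb hC w₁ w₂ c₁ c₂ d₁ d₂ x₁₂ x₂₁ s₁ s₂ hF
      have hkN : k ≤ N := by omega
      obtain ⟨hs1k, hs2k, hslot, hbound⟩ := hF
      have hkmem : k ∈ Finset.Icc k N := by simp [Finset.mem_Icc]; omega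
      obtain ⟨hu1, hu2, hc1, hc2, hd1, hd2, hy12, hy21, hdyn1, hdyn2, hds1, hds2, hB1, hB2⟩ :=
        hslot k hkmem
      rw [hs1k] at hdyn1 hds1
      rw [hs2k] at hdyn2 hds2
      have hbk := hbound k (by simp [Finset.mem_Icc]; omega)
      rw [hs1k, hs2k] at hbk
      have hbk1 := hbound (k+1) (by simp [Finset.mem_Icc]; omega)
      have hE1k := hE1 k hkmem
      have hE2k := hE2 k hkmem
      -- the slot-k surgery quantities
      obtain ⟨δ, hδdef⟩ : ∃ x, x = max 0 (a + d₁ k - r₁) := ⟨_, rfl⟩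
      obtain ⟨Dd, hDddef⟩ : ∃ x, x = max 0 (α*δ - (E₁ k + w₁ k - c₁ k + α*d₁ k - x₁₂ k + β*x₂₁ k)) := ⟨_, rfl⟩
      obtain ⟨ε, hεdef⟩ : ∃ x, x = min Dd (c₁ k) := ⟨_, rfl⟩
      obtain ⟨ρ, hρdef⟩ : ∃ x, x = Dd - ε := ⟨_, rfl⟩
      obtain ⟨ρb, hρbdef⟩ : ∃ x, x = min ρ (α*b/β) := ⟨_, rfl⟩
      obtain ⟨ρm, hρmdef⟩ : ∃ x, x = ρ - ρb := ⟨_, rfl⟩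
      obtain ⟨b1, hb1def⟩ : ∃ x, x = b - β/α*ρb := ⟨_, rfl⟩
      obtain ⟨a1, ha1def⟩ : ∃ x, x = a - δ + α*ε := ⟨_, rfl⟩
      obtain ⟨e, hedef⟩ : ∃ x, x = max 0 (s₂ (k+1) + b1 - Smax) := ⟨_, rfl⟩
      obtain ⟨ex, hexdef⟩ : ∃ x, x = min e (α*β*(x₁₂ k - ρ)) := ⟨_, rfl⟩
      obtain ⟨ew, hewdef⟩ : ∃ x, x = e - ex := ⟨_, rfl⟩
      obtain ⟨γ, hγdef⟩ : ∃ x, x = min (ex/(α*β)) (a1/α) := ⟨_, rfl⟩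
      obtain ⟨a2, ha2def⟩ : ∃ x, x = a1 - α*γ := ⟨_, rfl⟩
      obtain ⟨b2, hb2def⟩ : ∃ x, x = b1 - e := ⟨_, rfl⟩
      obtain ⟨m2, hm2def⟩ : ∃ x, x = m - β*ρm + ew/α := ⟨_, rfl⟩
      -- basic facts
      have hδ0 : 0 ≤ δ := by rw [hδdef]; exact le_max_left _ _
      have hδd : δ ≤ d₁ k := by rw [hδdef]; exact max_le hd1 (by linarith only [har])
      have hδa : δ ≤ a := by rw [hδdef]; exact max_le ha (by linarith only [hds1])
      have hδge : a + d₁ k - r₁ ≤ δ := by rw [hδdef]; exact le_max_right _ _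
      have hD0 : 0 ≤ Dd := by rw [hDddef]; exact le_max_left _ _
      have hDδ : Dd ≤ α*δ := by
        rw [hDddef]
        exact max_le (by positivity) (by linarith only [hB1])
      have hDge : α*δ - (E₁ k + w₁ k - c₁ k + α*d₁ k - x₁₂ k + β*x₂₁ k) ≤ Dd := by
        rw [hDddef]; exact le_max_right _ _
      have hDcx : Dd ≤ c₁ k + x₁₂ k := by
        have h1 : α*δ ≤ α*d₁ k := mul_le_mul_of_nonneg_left hδd hα0.le
        have h2 : 0 ≤ β*x₂₁ k := by positivity
        rw [hDddef]
        exact max_le (by linarith only [hc1, hy12]) (by linarith only [h1, h2, hE1k, hu1])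
      have hε0 : 0 ≤ ε := by rw [hεdef]; exact le_min hD0 hc1
      have hεc : ε ≤ c₁ k := by rw [hεdef]; exact min_le_right _ _
      have hεD : ε ≤ Dd := by rw [hεdef]; exact min_le_left _ _
      have hρ0 : 0 ≤ ρ := by rw [hρdef]; linarith only [hεD]
      have hρx : ρ ≤ x₁₂ k := by
        rcases le_total Dd (c₁ k) with h | h
        · have : ε = Dd := by rw [hεdef]; exact min_eq_left h
          rw [hρdef, this]; linarith only [hD0, hy12]
        · have : ε = c₁ k := by rw [hεdef]; exact min_eq_right h
          rw [hρdef, this]; linarith only [hDcx]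
      have hαδδ : α*δ ≤ δ := by simpa using mul_le_mul_of_nonneg_right hα1 hδ0
      have hαεε : α*ε ≤ ε := by simpa using mul_le_mul_of_nonneg_right hα1 hε0
      have hαε0 : 0 ≤ α*ε := by positivity
      have hρδ : ρ ≤ δ - α*ε := by rw [hρdef]; linarith only [hDδ, hαδδ, hαεε, hεD]
      have hρa : ρ ≤ a := by linarith only [hρδ, hδa, hαε0]
      have hρb0 : 0 ≤ ρb := by rw [hρbdef]; exact le_min hρ0 (by positivity)
      have hρbρ : ρb ≤ ρ := by rw [hρbdef]; exact min_le_left _ _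
      have hρbb : β*ρb ≤ α*b := by
        have h := min_le_right ρ (α*b/β)
        rw [← hρbdef] at h
        have h2 : β*ρb ≤ β*(α*b/β) := mul_le_mul_of_nonneg_left h hβ0.le
        have h3 : β*(α*b/β) = α*b := by field_simp
        linarith only [h2, h3]
      have hρm0 : 0 ≤ ρm := by rw [hρmdef]; linarith only [hρbρ]
      have hρmm : β*ρm ≤ m := by
        rcases le_total ρ (α*b/β) with h | h
        · have : ρb = ρ := by rw [hρbdef]; exact min_eq_left h
          rw [hρmdef, this]; simpa using hm
        · have hbb : ρb = α*b/β := by rw [hρbdef]; exact min_eq_right h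
          have h2 : β*ρb = α*b := by rw [hbb]; field_simp
          have h3 : β*ρ ≤ β*a := mul_le_mul_of_nonneg_left hρa hβ0.le
          have h4 : β*(ρ - ρb) = β*ρ - β*ρb := by ring
          rw [hρmdef]; linarith only [h2, h3, h4, hC]
      have hq0 : 0 ≤ β/α*ρb := mul_nonneg (by positivity) hρb0
      have hbrb : β/α*ρb ≤ b := by
        rw [div_mul_eq_mul_div, div_le_iff₀ hα0]
        linarith only [hρbb]
      have hb10 : 0 ≤ b1 := by rw [hb1def]; linarith only [hbrb]
      have ha10 : 0 ≤ a1 := by rw [ha1def]; linarith only [hδa, hαε0]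
      have ha1s : a1 ≤ s₁ (k+1) := by
        have h1 : α*ε ≤ α*c₁ k := mul_le_mul_of_nonneg_left hεc hα0.le
        rw [ha1def, hdyn1]; linarith only [h1, hδge]
      have he0 : 0 ≤ e := by rw [hedef]; exact le_max_left _ _
      have hex0 : 0 ≤ ex := by
        rw [hexdef]
        exact le_min he0 (mul_nonneg (by positivity) (by linarith only [hρx]))
      have hexe : ex ≤ e := by rw [hexdef]; exact min_le_left _ _
      have hexle : ex ≤ α*β*(x₁₂ k - ρ) := by rw [hexdef]; exact min_le_right _ _
      have hew0 : 0 ≤ ew := by rw [hewdef]; linarith only [hexe]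
      -- the case analysis on whether the cap binds
      have hmain : e ≤ α*c₂ k ∧ ew ≤ α*w₂ k + α*β*ρm ∧ 0 ≤ b2 ∧ s₂ (k+1) + b2 ≤ Smax := by
        have hs2p : s₂ (k+1) ≤ Smax := hbk1.2.2.2
        have hαα : α*α ≤ 1 := by
          have := mul_le_mul_of_nonneg_right hα1 hα0.le
          linarith only [this, hα1]
        rcases le_or_gt (s₂ (k+1) + b1 - Smax) 0 with hcap | hcap
        · have he : e = 0 := by rw [hedef]; exact max_eq_left hcap
          have hex' : ex = 0 := le_antisymm (by rw [← he]; exact hexe) hex0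
          have hew' : ew = 0 := by rw [hewdef, he, hex']; ring
          refine ⟨by rw [he]; positivity, by rw [hew']; positivity, ?_, ?_⟩
          · rw [hb2def, he]; linarith only [hb10]
          · rw [hb2def, he]; linarith only [hcap]
        · have he : e = s₂ (k+1) + b1 - Smax := by rw [hedef]; exact max_eq_right hcap.le
          have hkey : e ≤ α*c₂ k - (d₂ k + β/α*ρb) := by
            rw [he, hdyn2, hb1def]; linarith only [hrb]
          have hc2ub : c₂ k ≤ w₂ k + α*d₂ k + β*x₁₂ k := by linarith only [hB2, hE2k, hy21]
          refine ⟨by linarith only [hkey, hd2, hq0], ?_, ?_, ?_⟩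
          · rcases le_total e (α*β*(x₁₂ k - ρ)) with hm1 | hm1
            · have hh : ex = e := by rw [hexdef]; exact min_eq_left hm1
              have hh2 : ew = 0 := by rw [hewdef, hh]; ring
              rw [hh2]; positivity
            · have hexeq : ex = α*β*(x₁₂ k - ρ) := by rw [hexdef]; exact min_eq_right hm1
              have h5 : α*c₂ k ≤ α*(w₂ k + α*d₂ k + β*x₁₂ k) :=
                mul_le_mul_of_nonneg_left hc2ub hα0.le
              have h6 : α*(α*d₂ k) ≤ d₂ k := by
                have := mul_le_mul_of_nonneg_right hαα hd2
                linarith only [this]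
              have h7 : α*β*ρb ≤ β/α*ρb := by
                rw [div_mul_eq_mul_div, le_div_iff₀ hα0]
                have := mul_le_mul_of_nonneg_right hαα (mul_nonneg hβ0.le hρb0)
                linarith only [this]
              rw [hewdef, hexeq, hρmdef]
              linarith only [hkey, h5, h6, h7]
          · rw [hb2def, he]; linarith only [hs2p]
          · rw [hb2def, he]; linarith only []
      obtain ⟨heC2, hewb, hb20, hs2b2⟩ := hmain
      have hγ1 : γ ≤ ex/(α*β) := by rw [hγdef]; exact min_le_left _ _
      have hγ2 : γ ≤ a1/α := by rw [hγdef]; exact min_le_right _ _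
      have hγ0 : 0 ≤ γ := by
        rw [hγdef]
        exact le_min (div_nonneg hex0 (by positivity)) (div_nonneg ha10 hα0.le)
      have hγa : α*γ ≤ a1 := by
        rw [le_div_iff₀ hα0] at hγ2; linarith only [hγ2]
      have hγx : α*β*γ ≤ ex := by
        rw [le_div_iff₀ (by positivity : (0:ℝ) < α*β)] at hγ1; linarith only [hγ1]
      have ha20 : 0 ≤ a2 := by rw [ha2def]; linarith only [hγa]
      have hαγ0 : 0 ≤ α*γ := by positivity
      have ha2a1 : a2 ≤ a1 := by rw [ha2def]; linarith only [hαγ0]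
      have hm20 : 0 ≤ m2 := by
        rw [hm2def]
        have : 0 ≤ ew/α := by positivity
        linarith only [hρmm, this]
      have hC' : β*a2 ≤ α*b2 + m2 := by
        rcases le_total (ex/(α*β)) (a1/α) with hg | hg
        · have hγeq : γ = ex/(α*β) := by rw [hγdef]; exact min_eq_left hg
          have hgid : α*(β*γ) = ex := by rw [hγeq]; field_simp
          have hβρ : β*ρ ≤ β*(δ - α*ε) := mul_le_mul_of_nonneg_left hρδ hβ0.le
          have hid2 : α*(β/α*ρb) = β*ρb := by field_simp
          have hexα : α*ex ≤ ex := by simpa using mul_le_mul_of_nonneg_right hα1 hex0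
          have hewα : α*ew ≤ ew := by simpa using mul_le_mul_of_nonneg_right hα1 hew0
          have hew1 : ew ≤ ew/α := by
            rw [le_div_iff₀ hα0]
            have := mul_le_mul_of_nonneg_left hα1 hew0
            linarith only [this]
          have hb2e : β*a2 = β*a - β*δ + β*(α*ε) - α*(β*γ) := by rw [ha2def, ha1def]; ring
          have hrhs : α*b2 + m2 = α*b - α*(β/α*ρb) - α*e + m - β*ρ + β*ρb + ew/α := by
            rw [hb2def, hb1def, hm2def, hρmdef]; ring
          have heeq : α*e = α*ex + α*ew := by rw [hewdef]; ring
          rw [hb2e, hrhs]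
          linarith only [hC, hβρ, hexα, hew1, hewα, hgid, hid2, heeq]
        · have hγeq : γ = a1/α := by rw [hγdef]; exact min_eq_right hg
          have hgid : α*γ = a1 := by rw [hγeq]; field_simp
          have ha2z : a2 = 0 := by rw [ha2def, hgid]; ring
          have h1 : 0 ≤ α*b2 := mul_nonneg hα0.le hb20
          rw [ha2z, mul_zero]
          linarith only [h1, hm20]
      -- apply the induction hypothesis to the tail
      have htail : Feasible α β Smax (k+1) N E₁ E₂ (s₁ (k+1)) (s₂ (k+1)) w₁ w₂ c₁ c₂ d₁ d₂ x₁₂ x₂₁ s₁ s₂ := by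
        refine ⟨rfl, rfl, fun t ht => hslot t ?_, fun t ht => hbound t ?_⟩
        · simp [Finset.mem_Icc] at ht ⊢; omega
        · simp [Finset.mem_Icc] at ht ⊢; omega
      obtain ⟨W₁, W₂, C₁, C₂, D₁, D₂, X₁₂, X₂₁, S₁, S₂, hFt, hcostt⟩ :=
        ih (k+1) (by omega) (fun t ht => hE1 t (by simp [Finset.mem_Icc] at ht ⊢; omega))
          (fun t ht => hE2 t (by simp [Finset.mem_Icc] at ht ⊢; omega))
          a2 b2 m2 (s₁ (k+1)) (s₂ (k+1)) ha20 hb20 hm20 (le_trans ha2a1 ha1s) hs2b2 hC'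
          w₁ w₂ c₁ c₂ d₁ d₂ x₁₂ x₂₁ s₁ s₂ htail
      obtain ⟨hS1i, hS2i, hslott, hboundt⟩ := hFt
      have hk1 : ¬ (k + 1 = k) := by omega
      refine ⟨(fun t => if t = k then w₁ k else W₁ t),
        (fun t => if t = k then w₂ k + β*ρm - ew/α else W₂ t),
        (fun t => if t = k then c₁ k - ε + γ else C₁ t),
        (fun t => if t = k then c₂ k - e/α else C₂ t),
        (fun t => if t = k then d₁ k - δ else D₁ t),
        (fun t => if t = k then d₂ k + β/α*ρb else D₂ t),
        (fun t => if t = k then x₁₂ k - ρ - ex/(α*β) else X₁₂ t),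
        (fun t => if t = k then x₂₁ k else X₂₁ t),
        (fun t => if t = k then r₁ - a else S₁ t),
        (fun t => if t = k then r₂ + b else S₂ t),
        ⟨by simp, by simp, ?_, ?_⟩, ?_⟩
      · -- slot constraints
        intro t ht
        by_cases htk : t = k
        · subst htk
          simp only [if_pos rfl, eq_self_iff_true, if_true, if_neg hk1]
          refine ⟨hu1, ?_, ?_, ?_, by linarith only [hδd], by linarith only [hd2, hq0],
            ?_, hy21, ?_, ?_, by linarith only [hδge], by linarith only [hds2, hbrb], ?_, ?_⟩
          · -- 0 ≤ w₂ t + β*ρm - ew/α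
            have h : ew/α ≤ w₂ t + β*ρm := by rw [div_le_iff₀ hα0]; linarith only [hewb]
            linarith only [h]
          · linarith only [hεc, hγ0] -- 0 ≤ c₁ t - ε + γ
          · -- 0 ≤ c₂ t - e/α
            have h : e/α ≤ c₂ t := by rw [div_le_iff₀ hα0]; linarith only [heC2]
            linarith only [h]
          · -- 0 ≤ x₁₂ t - ρ - ex/(α*β)
            have h : ex/(α*β) ≤ x₁₂ t - ρ := by
              rw [div_le_iff₀ (by positivity : (0:ℝ) < α*β)]
              linarith only [hexle]
            linarith only [h]
          · -- dyn1
            rw [hS1i, hdyn1, ha2def, ha1def]; ring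
          · -- dyn2
            rw [hS2i, hdyn2, hb2def, hb1def]
            field_simp
            ring
          · -- B1
            linarith only [hDge, hγ1, hρdef]
          · -- B2
            have hid2 : α*(β/α*ρb) = β*ρb := by field_simp
            have hid3 : β*(ex/(α*β)) = ex/α := by field_simp
            have hid5 : ew/α = e/α - ex/α := by rw [hewdef]; ring
            have hβρm : β*ρm = β*ρ - β*ρb := by rw [hρmdef]; ring
            linarith only [hB2, hid2, hid3, hid5, hβρm]
        · have ht' : t ∈ Finset.Icc (k+1) N := by
            simp [Finset.mem_Icc] at ht ⊢; omega
          have ht1 : ¬ (t + 1 = k) := by simp [Finset.mem_Icc] at ht'; omega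
          simp only [if_neg htk, if_neg ht1]
          exact hslott t ht'
      · -- storage bounds
        intro t ht
        by_cases htk : t = k
        · subst htk
          simp only [if_pos rfl, eq_self_iff_true, if_true]
          exact ⟨by linarith only [har], by linarith only [hbk.2.1, ha], by linarith only [hbk.2.2.1, hb], hrb⟩
        · have ht' : t ∈ Finset.Icc (k+1) (N+1) := by
            simp [Finset.mem_Icc] at ht ⊢; omega
          simp only [if_neg htk]
          exact hboundt t ht'
      · -- cost
        have hIcc : Finset.Icc k N = insert k (Finset.Icc (k+1) N) := by
          ext x; simp [Finset.mem_Icc, Finset.mem_insert]; omega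
        have hknot : k ∉ Finset.Icc (k+1) N := by simp [Finset.mem_Icc]
        rw [hIcc, Finset.sum_insert hknot, Finset.sum_insert hknot]
        simp only [if_pos rfl, eq_self_iff_true, if_true]
        have htsum : (∑ t ∈ Finset.Icc (k+1) N,
            ((if t = k then w₁ k else W₁ t) + (if t = k then w₂ k + β*ρm - ew/α else W₂ t)))
            = ∑ t ∈ Finset.Icc (k+1) N, (W₁ t + W₂ t) := by
          refine Finset.sum_congr rfl fun t ht => ?_
          have : ¬ (t = k) := by simp [Finset.mem_Icc] at ht; omega
          simp [this]
        rw [htsum]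
        have h1 : 0 ≤ ew/α := by positivity
        have h2 : 0 ≤ β*ρm := by positivity
        rw [hm2def] at hcostt
        linarith only [hcostt, h1, h2]

/-- Claim 2 in the proof of Proposition 6. -/
theorem claim2_prop6
    (α β Smax : ℝ) (hα : 0 < α ∧ α ≤ 1) (hβ : 0 < β ∧ β ≤ 1) (hS : 0 < Smax)
    (k N : ℕ) (hkN : k ≤ N) (E₁ E₂ : ℕ → ℝ)
    (hE₁ : ∀ t ∈ Finset.Icc k N, 0 ≤ E₁ t)
    (hE₂ : ∀ t ∈ Finset.Icc k N, E₂ t ≤ 0)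
    (σ₁ σ₂ : ℝ) (hσ₁ : 0 ≤ σ₁ ∧ σ₁ ≤ Smax) (hσ₂ : 0 ≤ σ₂ ∧ σ₂ ≤ Smax)
    (Δ : ℝ) (hΔ : 0 ≤ Δ)
    (hΔle : Δ ≤ min ((Smax - σ₁) / α) (α * σ₂ / β)) :
    Jstar α β Smax k N E₁ E₂ σ₁ σ₂ ≤
      Jstar α β Smax k N E₁ E₂ (σ₁ + α * Δ) (σ₂ - β * Δ / α) := by
  obtain ⟨hα0, hα1⟩ := hα
  obtain ⟨hβ0, hβ1⟩ := hβ
  have hΔ1 : α * Δ ≤ Smax - σ₁ := by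
    have h := le_trans hΔle (min_le_left _ _)
    rw [le_div_iff₀ hα0] at h
    linarith only [h]
  have hΔ2 : β * Δ / α ≤ σ₂ := by
    have h := le_trans hΔle (min_le_right _ _)
    rw [le_div_iff₀ hβ0] at h
    rw [div_le_iff₀ hα0]
    linarith only [h]
  have hb0 : 0 ≤ β * Δ / α := by positivity
  have ha0' : 0 ≤ α * Δ := by positivity
  have hrich1a : 0 ≤ σ₁ + α * Δ := by linarith [hσ₁.1]
  have hrich1b : σ₁ + α * Δ ≤ Smax := by linarith
  have hrich2a : 0 ≤ σ₂ - β * Δ / α := by linarith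
  have hrich2b : σ₂ - β * Δ / α ≤ Smax := by linarith [hσ₂.2]
  rw [Jstar, Jstar]
  apply le_csInf
  · -- the rich feasible set of costs is nonempty
    refine ⟨∑ t ∈ Finset.Icc k N, ((0:ℝ) + max 0 (-E₂ t)),
      fun _ => 0, fun t => max 0 (-E₂ t), fun _ => 0, fun _ => 0, fun _ => 0, fun _ => 0,
      fun _ => 0, fun _ => 0, fun _ => σ₁ + α*Δ, fun _ => σ₂ - β*Δ/α, ⟨rfl, rfl, ?_, ?_⟩, rfl⟩
    · intro t ht
      have h1 := hE₁ t ht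
      have h3 := le_max_right 0 (-E₂ t)
      exact ⟨le_rfl, le_max_left _ _, le_rfl, le_rfl, le_rfl, le_rfl, le_rfl, le_rfl,
        by dsimp only; ring, by dsimp only; ring, by dsimp only; linarith,
        by dsimp only; linarith, by dsimp only; linarith, by dsimp only; linarith⟩
    · intro t ht
      exact ⟨hrich1a, hrich1b, hrich2a, hrich2b⟩
  · rintro r ⟨w₁, w₂, c₁, c₂, d₁, d₂, x₁₂, x₂₁, s₁, s₂, hF, rfl⟩
    have hCinit : β*(α*Δ) ≤ α*(β*Δ/α) + 0 := by
      have h : α*(β*Δ/α) = β*Δ := by field_simp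
      nlinarith [mul_nonneg hβ0.le hΔ, hα1]
    obtain ⟨W₁, W₂, C₁, C₂, D₁, D₂, X₁₂, X₂₁, S₁, S₂, hF', hcost⟩ :=
      key α β Smax hα0 hα1 hβ0 hβ1 N E₁ E₂ (N + 1 - k) k (by omega) hE₁ hE₂
        (α*Δ) (β*Δ/α) 0 (σ₁ + α*Δ) (σ₂ - β*Δ/α) ha0' hb0 le_rfl (by linarith [hσ₁.1])
        (by linarith [hσ₂.2]) hCinit
        w₁ w₂ c₁ c₂ d₁ d₂ x₁₂ x₂₁ s₁ s₂ hF
    have he1 : σ₁ + α*Δ - α*Δ = σ₁ := by ring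
    have he2 : σ₂ - β*Δ/α + β*Δ/α = σ₂ := by ring
    rw [he1, he2] at hF'
    have hbdd : BddBelow {r : ℝ | ∃ w₁ w₂ c₁ c₂ d₁ d₂ x₁₂ x₂₁ s₁ s₂ : ℕ → ℝ,
        Feasible α β Smax k N E₁ E₂ σ₁ σ₂ w₁ w₂ c₁ c₂ d₁ d₂ x₁₂ x₂₁ s₁ s₂ ∧
        (∑ t ∈ Finset.Icc k N, (w₁ t + w₂ t)) = r} := by
      refine ⟨0, fun x hx => ?_⟩
      obtain ⟨v₁, v₂, e₁, e₂, f₁, f₂, g₁, g₂, z₁, z₂, hFx, hsx⟩ := hx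
      rw [← hsx]
      refine Finset.sum_nonneg fun t ht => ?_
      obtain ⟨h1, h2, _⟩ := hFx.2.2.1 t ht
      linarith
    have hmem : (∑ t ∈ Finset.Icc k N, (W₁ t + W₂ t)) ∈ {r : ℝ | ∃ w₁ w₂ c₁ c₂ d₁ d₂ x₁₂ x₂₁ s₁ s₂ : ℕ → ℝ,
        Feasible α β Smax k N E₁ E₂ σ₁ σ₂ w₁ w₂ c₁ c₂ d₁ d₂ x₁₂ x₂₁ s₁ s₂ ∧
        (∑ t ∈ Finset.Icc k N, (w₁ t + w₂ t)) = r} :=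
      ⟨W₁, W₂, C₁, C₂, D₁, D₂, X₁₂, X₂₁, S₁, S₂, hF', rfl⟩
    exact le_trans (csInf_le hbdd hmem) (by linarith [hcost])
end

section
/- (Optimality of the greedy policy when BS 1 always has a surplus and β > α.) Suppose 0 < α < β ≤ 1 and E₁(t) ≥ 0 for all t ∈ {k,…,N}. Then for every state (σ₁,σ₂) ∈ [0,S_max]², there exists a one-step feasible action at (σ₁,σ₂) with net energies (E₁(k),E₂(k)) whose grid draw w₁+w₂ equals the one-step minimum V₁(σ₁,σ₂,E₁(k),E₂(k)) and whose next state (σ₁',σ₂') satisfies J*_k(σ₁,σ₂) = V₁(σ₁,σ₂,E₁(k),E₂(k)) + J*_{k+1}(σ₁',σ₂'), where J*_{k+1} denotes the optimal cost of the problem over slots {k+1,…,N} (taken to be 0 when k = N). -/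
/-- A one-step feasible action at state `(s₁, s₂)` with net energies `(E₁, E₂)`. -/
def OneStep (α β Smax s₁ s₂ E₁ E₂ w₁ w₂ c₁ c₂ d₁ d₂ x₁₂ x₂₁ : ℝ) : Prop :=
  0 ≤ w₁ ∧ 0 ≤ w₂ ∧ 0 ≤ c₁ ∧ 0 ≤ c₂ ∧ 0 ≤ d₁ ∧ 0 ≤ d₂ ∧ 0 ≤ x₁₂ ∧ 0 ≤ x₂₁ ∧
  d₁ ≤ s₁ ∧ d₂ ≤ s₂ ∧
  0 ≤ s₁ + α * c₁ - d₁ ∧ s₁ + α * c₁ - d₁ ≤ Smax ∧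
  0 ≤ s₂ + α * c₂ - d₂ ∧ s₂ + α * c₂ - d₂ ≤ Smax ∧
  0 ≤ E₁ + w₁ - c₁ + α * d₁ - x₁₂ + β * x₂₁ ∧
  0 ≤ E₂ + w₂ - c₂ + α * d₂ - x₂₁ + β * x₁₂

/-- One-step minimal grid draw `V₁(s₁, s₂, E₁, E₂)`. -/
noncomputable def V1 (α β Smax s₁ s₂ E₁ E₂ : ℝ) : ℝ :=
  sInf {r : ℝ | ∃ w₁ w₂ c₁ c₂ d₁ d₂ x₁₂ x₂₁ : ℝ,
    OneStep α β Smax s₁ s₂ E₁ E₂ w₁ w₂ c₁ c₂ d₁ d₂ x₁₂ x₂₁ ∧ w₁ + w₂ = r}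

namespace EC

def JSet (α β Smax : ℝ) (k N : ℕ) (E₁ E₂ : ℕ → ℝ) (σ₁ σ₂ : ℝ) : Set ℝ :=
  {r : ℝ | ∃ w₁ w₂ c₁ c₂ d₁ d₂ x₁₂ x₂₁ s₁ s₂ : ℕ → ℝ,
    Feasible α β Smax k N E₁ E₂ σ₁ σ₂ w₁ w₂ c₁ c₂ d₁ d₂ x₁₂ x₂₁ s₁ s₂ ∧
    (∑ t ∈ Finset.Icc k N, (w₁ t + w₂ t)) = r}

lemma Jstar_eq_sInf (α β Smax : ℝ) (k N : ℕ) (E₁ E₂ : ℕ → ℝ) (σ₁ σ₂ : ℝ) :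
    Jstar α β Smax k N E₁ E₂ σ₁ σ₂ = sInf (JSet α β Smax k N E₁ E₂ σ₁ σ₂) := rfl

lemma JSet_nonneg {α β Smax : ℝ} {k N : ℕ} {E₁ E₂ : ℕ → ℝ} {σ₁ σ₂ r : ℝ}
    (hr : r ∈ JSet α β Smax k N E₁ E₂ σ₁ σ₂) : 0 ≤ r := by
  obtain ⟨w₁, w₂, c₁, c₂, d₁, d₂, x₁₂, x₂₁, s₁, s₂, hF, hsum⟩ := hr
  rw [← hsum]
  refine Finset.sum_nonneg fun t ht => ?_
  have h := hF.2.2.1 t ht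
  linarith [h.1, h.2.1]

lemma JSet_bddBelow (α β Smax : ℝ) (k N : ℕ) (E₁ E₂ : ℕ → ℝ) (σ₁ σ₂ : ℝ) :
    BddBelow (JSet α β Smax k N E₁ E₂ σ₁ σ₂) :=
  ⟨0, fun _ hr => JSet_nonneg hr⟩

lemma Jstar_nonneg (α β Smax : ℝ) (k N : ℕ) (E₁ E₂ : ℕ → ℝ) (σ₁ σ₂ : ℝ) :
    0 ≤ Jstar α β Smax k N E₁ E₂ σ₁ σ₂ :=
  Real.sInf_nonneg (fun _ hr => JSet_nonneg hr)

lemma JSet_nonempty {α β Smax : ℝ} (k N : ℕ) (E₁ E₂ : ℕ → ℝ) {σ₁ σ₂ : ℝ}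
    (h1 : 0 ≤ σ₁) (h2 : σ₁ ≤ Smax) (h3 : 0 ≤ σ₂) (h4 : σ₂ ≤ Smax) :
    (JSet α β Smax k N E₁ E₂ σ₁ σ₂).Nonempty := by
  refine ⟨_, (fun t => max 0 (-(E₁ t))), (fun t => max 0 (-(E₂ t))), 0, 0, 0, 0, 0, 0,
    (fun _ => σ₁), (fun _ => σ₂), ⟨rfl, rfl, fun t ht => ?_, fun t ht => ?_⟩, rfl⟩
  · simp only [Pi.zero_apply]
    refine ⟨le_max_left _ _, le_max_left _ _, le_rfl, le_rfl, le_rfl, le_rfl, le_rfl, le_rfl,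
      by ring, by ring, h1, h3, ?_, ?_⟩
    · have := le_max_right 0 (-(E₁ t)); linarith
    · have := le_max_right 0 (-(E₂ t)); linarith
  · exact ⟨h1, h2, h3, h4⟩

end EC

namespace EC2
open EC

lemma sum_split {f : ℕ → ℝ} {k N : ℕ} (hkN : k ≤ N) :
    (∑ t ∈ Finset.Icc k N, f t) = f k + ∑ t ∈ Finset.Icc (k+1) N, f t := by
  have h : Finset.Icc k N = insert k (Finset.Icc (k+1) N) := by
    rw [Finset.Icc_add_one_left_eq_Ioc, Finset.Ioc_insert_left hkN]
  rw [h, Finset.sum_insert (by simp [Finset.mem_Icc])]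

lemma Jstar_of_gt {α β Smax : ℝ} {k N : ℕ} (E₁ E₂ : ℕ → ℝ) {σ₁ σ₂ : ℝ}
    (hkN : N < k) (h1 : 0 ≤ σ₁) (h2 : σ₁ ≤ Smax) (h3 : 0 ≤ σ₂) (h4 : σ₂ ≤ Smax) :
    Jstar α β Smax k N E₁ E₂ σ₁ σ₂ = 0 := by
  have hempty : Finset.Icc k N = ∅ := Finset.Icc_eq_empty (by omega)
  refine le_antisymm ?_ (Jstar_nonneg ..)
  refine csInf_le (JSet_bddBelow ..) ?_
  refine ⟨(fun t => max 0 (-(E₁ t))), (fun t => max 0 (-(E₂ t))), 0, 0, 0, 0, 0, 0,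
    (fun _ => σ₁), (fun _ => σ₂), ⟨rfl, rfl, fun t ht => ?_, fun t ht => ?_⟩, by
      rw [hempty, Finset.sum_empty]⟩
  · simp only [Pi.zero_apply]
    refine ⟨le_max_left _ _, le_max_left _ _, le_rfl, le_rfl, le_rfl, le_rfl, le_rfl, le_rfl,
      by ring, by ring, h1, h3, ?_, ?_⟩
    · have := le_max_right 0 (-(E₁ t)); linarith
    · have := le_max_right 0 (-(E₂ t)); linarith
  · exact ⟨h1, h2, h3, h4⟩

lemma tail_mem {α β Smax : ℝ} {k N : ℕ} {E₁ E₂ : ℕ → ℝ} {σ₁ σ₂ : ℝ}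
    {w₁ w₂ c₁ c₂ d₁ d₂ x₁₂ x₂₁ s₁ s₂ : ℕ → ℝ}
    (hF : Feasible α β Smax k N E₁ E₂ σ₁ σ₂ w₁ w₂ c₁ c₂ d₁ d₂ x₁₂ x₂₁ s₁ s₂) :
    (∑ t ∈ Finset.Icc (k+1) N, (w₁ t + w₂ t)) ∈
      JSet α β Smax (k+1) N E₁ E₂ (s₁ (k+1)) (s₂ (k+1)) := by
  refine ⟨w₁, w₂, c₁, c₂, d₁, d₂, x₁₂, x₂₁, s₁, s₂,
    ⟨rfl, rfl, fun t ht => hF.2.2.1 t ?_, fun t ht => hF.2.2.2 t ?_⟩, rfl⟩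
  · simp only [Finset.mem_Icc] at *; omega
  · simp only [Finset.mem_Icc] at *; omega

lemma first_step {α β Smax : ℝ} {k N : ℕ} {E₁ E₂ : ℕ → ℝ} {σ₁ σ₂ r : ℝ}
    (hkN : k ≤ N) (hr : r ∈ JSet α β Smax k N E₁ E₂ σ₁ σ₂) :
    ∃ w₁ w₂ c₁ c₂ d₁ d₂ x₁₂ x₂₁ : ℝ,
      OneStep α β Smax σ₁ σ₂ (E₁ k) (E₂ k) w₁ w₂ c₁ c₂ d₁ d₂ x₁₂ x₂₁ ∧
      w₁ + w₂ + Jstar α β Smax (k+1) N E₁ E₂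
        (σ₁ + α * c₁ - d₁) (σ₂ + α * c₂ - d₂) ≤ r := by
  obtain ⟨w₁, w₂, c₁, c₂, d₁, d₂, x₁₂, x₂₁, s₁, s₂, hF, hsum⟩ := hr
  have hk : k ∈ Finset.Icc k N := by simp [Finset.mem_Icc]; omega
  have h := hF.2.2.1 k hk
  have hbox : 0 ≤ s₁ (k+1) ∧ s₁ (k+1) ≤ Smax ∧ 0 ≤ s₂ (k+1) ∧ s₂ (k+1) ≤ Smax :=
    hF.2.2.2 (k+1) (by simp [Finset.mem_Icc]; omega)
  have hs1 : s₁ k = σ₁ := hF.1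
  have hs2 : s₂ k = σ₂ := hF.2.1
  have e1 : σ₁ + α * c₁ k - d₁ k = s₁ (k+1) := by rw [h.2.2.2.2.2.2.2.2.1, hs1]
  have e2 : σ₂ + α * c₂ k - d₂ k = s₂ (k+1) := by rw [h.2.2.2.2.2.2.2.2.2.1, hs2]
  refine ⟨w₁ k, w₂ k, c₁ k, c₂ k, d₁ k, d₂ k, x₁₂ k, x₂₁ k,
    ⟨h.1, h.2.1, h.2.2.1, h.2.2.2.1, h.2.2.2.2.1, h.2.2.2.2.2.1, h.2.2.2.2.2.2.1,
      h.2.2.2.2.2.2.2.1, by rw [← hs1]; exact h.2.2.2.2.2.2.2.2.2.2.1,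
      by rw [← hs2]; exact h.2.2.2.2.2.2.2.2.2.2.2.1,
      by rw [e1]; exact hbox.1, by rw [e1]; exact hbox.2.1,
      by rw [e2]; exact hbox.2.2.1, by rw [e2]; exact hbox.2.2.2,
      h.2.2.2.2.2.2.2.2.2.2.2.2.1, h.2.2.2.2.2.2.2.2.2.2.2.2.2⟩, ?_⟩
  rw [e1, e2, ← hsum, sum_split hkN]
  have htail := csInf_le (JSet_bddBelow α β Smax (k+1) N E₁ E₂ (s₁ (k+1)) (s₂ (k+1))) (tail_mem hF)
  rw [Jstar_eq_sInf]
  linarith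

lemma concat {α β Smax : ℝ} {k N : ℕ} {E₁ E₂ : ℕ → ℝ} {σ₁ σ₂ : ℝ}
    (hkN : k ≤ N)
    (h1 : 0 ≤ σ₁) (h2 : σ₁ ≤ Smax) (h3 : 0 ≤ σ₂) (h4 : σ₂ ≤ Smax)
    {w₁ w₂ c₁ c₂ d₁ d₂ x₁₂ x₂₁ : ℝ}
    (ha : OneStep α β Smax σ₁ σ₂ (E₁ k) (E₂ k) w₁ w₂ c₁ c₂ d₁ d₂ x₁₂ x₂₁) :
    Jstar α β Smax k N E₁ E₂ σ₁ σ₂ ≤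
      (w₁ + w₂) + Jstar α β Smax (k+1) N E₁ E₂
        (σ₁ + α * c₁ - d₁) (σ₂ + α * c₂ - d₂) := by
  obtain ⟨hw₁, hw₂, hc₁, hc₂, hd₁, hd₂, hx₁₂, hx₂₁, hds₁, hds₂, hn1, hn2, hn3, hn4, hA, hB⟩ := ha
  have hne : (JSet α β Smax (k+1) N E₁ E₂ (σ₁ + α * c₁ - d₁) (σ₂ + α * c₂ - d₂)).Nonempty :=
    JSet_nonempty _ _ _ _ hn1 hn2 hn3 hn4
  have hkey : ∀ r ∈ JSet α β Smax (k+1) N E₁ E₂ (σ₁ + α * c₁ - d₁) (σ₂ + α * c₂ - d₂),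
      Jstar α β Smax k N E₁ E₂ σ₁ σ₂ - (w₁ + w₂) ≤ r := by
    rintro r ⟨W₁, W₂, C₁, C₂, D₁, D₂, X₁₂, X₂₁, S₁, S₂, hF, hsum⟩
    have hmem : (w₁ + w₂ + r) ∈ JSet α β Smax k N E₁ E₂ σ₁ σ₂ := by
      refine ⟨(fun t => if t = k then w₁ else W₁ t), (fun t => if t = k then w₂ else W₂ t),
        (fun t => if t = k then c₁ else C₁ t), (fun t => if t = k then c₂ else C₂ t),
        (fun t => if t = k then d₁ else D₁ t), (fun t => if t = k then d₂ else D₂ t),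
        (fun t => if t = k then x₁₂ else X₁₂ t), (fun t => if t = k then x₂₁ else X₂₁ t),
        (fun t => if t = k then σ₁ else S₁ t), (fun t => if t = k then σ₂ else S₂ t),
        ⟨by simp, by simp, ?_, ?_⟩, ?_⟩
      · intro t ht
        by_cases htk : t = k
        · subst htk
          simp only [if_pos rfl, if_neg (by omega : ¬ t + 1 = t)]
          exact ⟨hw₁, hw₂, hc₁, hc₂, hd₁, hd₂, hx₁₂, hx₂₁, hF.1, hF.2.1,
            hds₁, hds₂, hA, hB⟩
        · have htk2 : k + 1 ≤ t ∧ t ≤ N := by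
            simp only [Finset.mem_Icc] at ht; omega
          have ht' : t ∈ Finset.Icc (k+1) N := by
            simp only [Finset.mem_Icc]; omega
          have h := hF.2.2.1 t ht'
          simp only [if_neg htk, if_neg (show ¬ t + 1 = k by omega)]
          exact h
      · intro t ht
        by_cases htk : t = k
        · subst htk; simp only [if_pos rfl]; exact ⟨h1, h2, h3, h4⟩
        · have ht' : t ∈ Finset.Icc (k+1) (N+1) := by
            simp only [Finset.mem_Icc] at *; omega
          simp only [if_neg htk]
          exact hF.2.2.2 t ht'
      · rw [sum_split hkN]
        simp only [if_pos rfl]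
        have hcong : (∑ t ∈ Finset.Icc (k+1) N,
            ((if t = k then w₁ else W₁ t) + (if t = k then w₂ else W₂ t)))
            = ∑ t ∈ Finset.Icc (k+1) N, (W₁ t + W₂ t) := by
          refine Finset.sum_congr rfl fun t ht => ?_
          have : ¬ t = k := by simp only [Finset.mem_Icc] at ht; omega
          simp only [if_neg this]
        rw [hcong, hsum]
        simp
    have := csInf_le (JSet_bddBelow α β Smax k N E₁ E₂ σ₁ σ₂) hmem
    rw [Jstar_eq_sInf]
    linarith [this]
  have hfin := le_csInf hne hkey
  rw [Jstar_eq_sInf α β Smax (k+1)]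
  linarith [hfin]

lemma key_ineq {α β Smax σ₁ σ₂ e₁ e₂ w₁ w₂ c₁ c₂ d₁ d₂ x₁₂ x₂₁ : ℝ}
    (hα : 0 < α) (hα1 : α ≤ 1) (hβ0 : 0 < β) (hβ : β ≤ 1)
    (ha : OneStep α β Smax σ₁ σ₂ e₁ e₂ w₁ w₂ c₁ c₂ d₁ d₂ x₁₂ x₂₁) :
    α*β*(σ₁ + α*c₁ - d₁) + α*(σ₂ + α*c₂ - d₂) ≤
      α*β*σ₁ + α*σ₂ + β*e₁ + e₂ + w₁ + w₂ := by
  obtain ⟨hw₁, hw₂, hc₁, hc₂, hd₁, hd₂, hx₁₂, hx₂₁, _, _, _, _, _, _, hA, hB⟩ := ha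
  have p1 : 0 ≤ β * (e₁ + w₁ - c₁ + α * d₁ - x₁₂ + β * x₂₁) := mul_nonneg hβ0.le hA
  have p2 : 0 ≤ (1 - β) * w₁ := mul_nonneg (by linarith) hw₁
  have p3 : 0 ≤ (1 - β*β) * x₂₁ := mul_nonneg (by nlinarith) hx₂₁
  have p4 : 0 ≤ β * (1 - α*α) * c₁ := mul_nonneg (mul_nonneg hβ0.le (by nlinarith)) hc₁
  have p5 : 0 ≤ (1 - α*α) * c₂ := mul_nonneg (by nlinarith) hc₂
  nlinarith [hB, p1, p2, p3, p4, p5]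

end EC2

namespace EC3
open EC EC2

set_option maxHeartbeats 1000000 in
lemma mono_lip {α β Smax : ℝ} (hα : 0 < α) (hα1 : α ≤ 1) (hβ0 : 0 < β) (hβ : β ≤ 1)
    (N : ℕ) (E₁ E₂ : ℕ → ℝ) :
    ∀ n m, N + 1 ≤ m + n → (∀ t ∈ Finset.Icc m N, 0 ≤ E₁ t) →
    ∀ σ₁ σ₂ τ₁ τ₂, 0 ≤ σ₁ → 0 ≤ σ₂ → σ₁ ≤ τ₁ → σ₂ ≤ τ₂ → τ₁ ≤ Smax → τ₂ ≤ Smax →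
      Jstar α β Smax m N E₁ E₂ τ₁ τ₂ ≤ Jstar α β Smax m N E₁ E₂ σ₁ σ₂ ∧
      Jstar α β Smax m N E₁ E₂ σ₁ σ₂ ≤
        Jstar α β Smax m N E₁ E₂ τ₁ τ₂ + α*β*(τ₁ - σ₁) + α*(τ₂ - σ₂) := by
  intro n
  induction n with
  | zero =>
    intro m hm hE σ₁ σ₂ τ₁ τ₂ h01 h02 h1 h2 h3 h4
    have hz1 : Jstar α β Smax m N E₁ E₂ τ₁ τ₂ = 0 :=
      Jstar_of_gt E₁ E₂ (by omega) (by linarith) h3 (by linarith) h4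
    have hz2 : Jstar α β Smax m N E₁ E₂ σ₁ σ₂ = 0 :=
      Jstar_of_gt E₁ E₂ (by omega) h01 (by linarith) h02 (by linarith)
    rw [hz1, hz2]
    refine ⟨le_refl 0, ?_⟩
    have p1 : 0 ≤ α*β*(τ₁ - σ₁) := mul_nonneg (mul_nonneg hα.le hβ0.le) (by linarith)
    have p2 : 0 ≤ α*(τ₂ - σ₂) := mul_nonneg hα.le (by linarith)
    linarith
  | succ n ih =>
    intro m hm hE σ₁ σ₂ τ₁ τ₂ h01 h02 h1 h2 h3 h4
    by_cases hmN : m ≤ N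
    swap
    · have hz1 : Jstar α β Smax m N E₁ E₂ τ₁ τ₂ = 0 :=
        Jstar_of_gt E₁ E₂ (by omega) (by linarith) h3 (by linarith) h4
      have hz2 : Jstar α β Smax m N E₁ E₂ σ₁ σ₂ = 0 :=
        Jstar_of_gt E₁ E₂ (by omega) h01 (by linarith) h02 (by linarith)
      rw [hz1, hz2]
      refine ⟨le_refl 0, ?_⟩
      have p1 : 0 ≤ α*β*(τ₁ - σ₁) := mul_nonneg (mul_nonneg hα.le hβ0.le) (by linarith)
      have p2 : 0 ≤ α*(τ₂ - σ₂) := mul_nonneg hα.le (by linarith)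
      linarith
    have hE' : ∀ t ∈ Finset.Icc (m+1) N, 0 ≤ E₁ t := by
      intro t ht; refine hE t ?_; simp only [Finset.mem_Icc] at *; omega
    have he₁m : 0 ≤ E₁ m := hE m (by simp [Finset.mem_Icc]; omega)
    constructor
    -- MONO
    · rw [Jstar_eq_sInf α β Smax m N E₁ E₂ σ₁ σ₂]
      refine le_csInf (JSet_nonempty m N E₁ E₂ h01 (by linarith) h02 (by linarith)) fun r hr => ?_
      obtain ⟨w₁, w₂, c₁, c₂, d₁, d₂, x₁₂, x₂₁, ha, hle⟩ := first_step hmN hr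
      obtain ⟨hw₁, hw₂, hc₁, hc₂, hd₁, hd₂, hx₁₂, hx₂₁, hds₁, hds₂, hn1, hn2, hn3, hn4, hA, hB⟩ := ha
      obtain ⟨dp₁, hdp₁⟩ : ∃ x, x = max 0 ((σ₁ + α*c₁ - d₁) + (τ₁ - σ₁) - Smax) := ⟨_, rfl⟩
      obtain ⟨dp₂, hdp₂⟩ : ∃ x, x = max 0 ((σ₂ + α*c₂ - d₂) + (τ₂ - σ₂) - Smax) := ⟨_, rfl⟩
      have hdp₁0 : 0 ≤ dp₁ := hdp₁ ▸ le_max_left _ _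
      have hdp₂0 : 0 ≤ dp₂ := hdp₂ ▸ le_max_left _ _
      have hdp₁r : (σ₁ + α*c₁ - d₁) + (τ₁ - σ₁) - Smax ≤ dp₁ := hdp₁ ▸ le_max_right _ _
      have hdp₂r : (σ₂ + α*c₂ - d₂) + (τ₂ - σ₂) - Smax ≤ dp₂ := hdp₂ ▸ le_max_right _ _
      have hdp₁u : dp₁ ≤ τ₁ - σ₁ := hdp₁ ▸ max_le (by linarith) (by linarith)
      have hdp₂u : dp₂ ≤ τ₂ - σ₂ := hdp₂ ▸ max_le (by linarith) (by linarith)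
      have haT : OneStep α β Smax τ₁ τ₂ (E₁ m) (E₂ m) w₁ w₂ c₁ c₂ (d₁ + dp₁) (d₂ + dp₂) x₁₂ x₂₁ := by
        refine ⟨hw₁, hw₂, hc₁, hc₂, by linarith, by linarith, hx₁₂, hx₂₁,
          by linarith, by linarith, by linarith, by linarith, by linarith, by linarith,
          by linarith [mul_nonneg hα.le hdp₁0], by linarith [mul_nonneg hα.le hdp₂0]⟩
      have hcat := concat hmN (by linarith : (0:ℝ) ≤ τ₁) h3 (by linarith : (0:ℝ) ≤ τ₂) h4 haT
      have hIH := (ih (m+1) (by omega) hE' (σ₁ + α * c₁ - d₁) (σ₂ + α * c₂ - d₂)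
        (τ₁ + α * c₁ - (d₁ + dp₁)) (τ₂ + α * c₂ - (d₂ + dp₂))
        hn1 hn3 (by linarith) (by linarith) (by linarith) (by linarith)).1
      linarith
    -- LIP
    · have hmain : ∀ r ∈ JSet α β Smax m N E₁ E₂ τ₁ τ₂,
          Jstar α β Smax m N E₁ E₂ σ₁ σ₂ - (α*β*(τ₁ - σ₁) + α*(τ₂ - σ₂)) ≤ r := by
        intro r hr
        obtain ⟨w₁, w₂, c₁, c₂, d₁, d₂, x₁₂, x₂₁, ha, hle⟩ := first_step hmN hr
        obtain ⟨hw₁, hw₂, hc₁, hc₂, hd₁, hd₂, hx₁₂, hx₂₁, hds₁, hds₂, hn1, hn2, hn3, hn4, hA, hB⟩ := ha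
        obtain ⟨lm₁, hlm₁⟩ : ∃ x, x = min d₁ (τ₁ - σ₁) := ⟨_, rfl⟩
        obtain ⟨lm₂, hlm₂⟩ : ∃ x, x = min d₂ (τ₂ - σ₂) := ⟨_, rfl⟩
        obtain ⟨A, hAd⟩ : ∃ x, x = E₁ m + w₁ - c₁ + α * d₁ - x₁₂ + β * x₂₁ := ⟨_, rfl⟩
        obtain ⟨ν, hνd⟩ : ∃ x, x = min c₁ (max 0 (α*lm₁ - A)) := ⟨_, rfl⟩
        obtain ⟨μ, hμd⟩ : ∃ x, x = max 0 (α*lm₁ - A - ν) := ⟨_, rfl⟩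
        have hA0 : 0 ≤ A := hAd ▸ hA
        have hlm₁0 : 0 ≤ lm₁ := hlm₁ ▸ le_min hd₁ (by linarith)
        have hlm₂0 : 0 ≤ lm₂ := hlm₂ ▸ le_min hd₂ (by linarith)
        have hlm₁d : lm₁ ≤ d₁ := hlm₁ ▸ min_le_left _ _
        have hlm₂d : lm₂ ≤ d₂ := hlm₂ ▸ min_le_left _ _
        have hlm₁δ : lm₁ ≤ τ₁ - σ₁ := hlm₁ ▸ min_le_right _ _
        have hlm₂δ : lm₂ ≤ τ₂ - σ₂ := hlm₂ ▸ min_le_right _ _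
        have halm : α * lm₁ ≤ α * d₁ := mul_le_mul_of_nonneg_left hlm₁d hα.le
        have hν0 : 0 ≤ ν := hνd ▸ le_min hc₁ (le_max_left _ _)
        have hνc : ν ≤ c₁ := hνd ▸ min_le_left _ _
        have hvlm : ν ≤ α * lm₁ := by
          rw [hνd]
          exact le_trans (min_le_right _ _) (max_le (by positivity) (by linarith))
        have hμ0 : 0 ≤ μ := hμd ▸ le_max_left _ _
        have hμr : α*lm₁ - A - ν ≤ μ := hμd ▸ le_max_right _ _
        have hkey : α * lm₁ ≤ A + c₁ + x₁₂ := by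
          have h2 : 0 ≤ β * x₂₁ := mul_nonneg hβ0.le hx₂₁
          rw [hAd]; linarith
        have hμx : μ ≤ x₁₂ := by
          rcases min_cases c₁ (max 0 (α*lm₁ - A)) with ⟨he, hc⟩ | ⟨he, hc⟩
          · rw [hμd]
            refine max_le hx₁₂ ?_
            rw [hνd, he]; linarith
          · rw [hμd]
            refine max_le hx₁₂ ?_
            rw [hνd, he]
            have := le_max_right 0 (α*lm₁ - A); linarith
        have pcν : 0 ≤ α*(c₁ - ν) := mul_nonneg hα.le (by linarith)
        have pαν : 0 ≤ α*ν := mul_nonneg hα.le hν0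
        have pαc₂ : 0 ≤ α*c₂ := mul_nonneg hα.le hc₂
        have pαlm₂ : 0 ≤ α*lm₂ := mul_nonneg hα.le hlm₂0
        have pβμ : 0 ≤ β*μ := mul_nonneg hβ0.le hμ0
        have haan : α*(α*ν) ≤ ν := by
          have h1 : α*(α*ν) ≤ 1*(α*ν) := mul_le_mul_of_nonneg_right hα1 pαν
          have h2 : α*ν ≤ 1*ν := mul_le_mul_of_nonneg_right hα1 hν0
          linarith
        have hμb : μ ≤ α*lm₁ - α*(α*ν) := by
          rcases max_cases 0 (α*lm₁ - A - ν) with ⟨he, hc⟩ | ⟨he, hc⟩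
          · rw [hμd, he]; linarith
          · rw [hμd, he]; linarith
        have hd₁σ : d₁ - lm₁ ≤ σ₁ := by
          rcases min_cases d₁ (τ₁ - σ₁) with ⟨he, hc⟩ | ⟨he, hc⟩
          · rw [hlm₁, he]; linarith
          · rw [hlm₁, he]; linarith
        have hd₂σ : d₂ - lm₂ ≤ σ₂ := by
          rcases min_cases d₂ (τ₂ - σ₂) with ⟨he, hc⟩ | ⟨he, hc⟩
          · rw [hlm₂, he]; linarith
          · rw [hlm₂, he]; linarith
        have haS : OneStep α β Smax σ₁ σ₂ (E₁ m) (E₂ m) w₁ (w₂ + α*lm₂ + β*μ)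
            (c₁ - ν) c₂ (d₁ - lm₁) (d₂ - lm₂) (x₁₂ - μ) x₂₁ := by
          refine ⟨hw₁, by linarith, by linarith, hc₂, by linarith, by linarith,
            by linarith, hx₂₁, hd₁σ, hd₂σ, by linarith, by linarith,
            by linarith, by linarith, by linarith [hAd ▸ hμr], by linarith⟩
        have hcat := concat hmN h01 (by linarith) h02 (by linarith) haS
        have hIH := (ih (m+1) (by omega) hE'
          (σ₁ + α * (c₁ - ν) - (d₁ - lm₁)) (σ₂ + α * c₂ - (d₂ - lm₂))
          (τ₁ + α * c₁ - d₁) (τ₂ + α * c₂ - d₂)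
          (by linarith) (by linarith) (by linarith) (by linarith) hn2 hn4).2
        have hprod : 0 ≤ β * (α*lm₁ - α*(α*ν) - μ) := mul_nonneg hβ0.le (by linarith)
        linarith
      have hfin := le_csInf (JSet_nonempty m N E₁ E₂ (by linarith) h3 (by linarith) h4) hmain
      rw [Jstar_eq_sInf α β Smax m N E₁ E₂ τ₁ τ₂]
      linarith

end EC3

namespace EC4
open EC EC2

lemma cancel_loop {α β Smax σ₁ σ₂ e₁ e₂ w₁ w₂ c₁ c₂ d₁ d₂ x₁₂ x₂₁ : ℝ}
    (hβ0 : 0 < β) (hβ : β ≤ 1)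
    (ha : OneStep α β Smax σ₁ σ₂ e₁ e₂ w₁ w₂ c₁ c₂ d₁ d₂ x₁₂ x₂₁) :
    OneStep α β Smax σ₁ σ₂ e₁ e₂ w₁ w₂ c₁ c₂ d₁ d₂
      (x₁₂ - min x₁₂ x₂₁) (x₂₁ - min x₁₂ x₂₁) ∧
    (x₁₂ - min x₁₂ x₂₁ = 0 ∨ x₂₁ - min x₁₂ x₂₁ = 0) := by
  obtain ⟨hw₁, hw₂, hc₁, hc₂, hd₁, hd₂, hx₁₂, hx₂₁, hds₁, hds₂, hn1, hn2, hn3, hn4, hA, hB⟩ := ha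
  have hm0 : 0 ≤ min x₁₂ x₂₁ := le_min hx₁₂ hx₂₁
  have hm1 : min x₁₂ x₂₁ ≤ x₁₂ := min_le_left _ _
  have hm2 : min x₁₂ x₂₁ ≤ x₂₁ := min_le_right _ _
  have hp : 0 ≤ (1 - β) * min x₁₂ x₂₁ := mul_nonneg (by linarith) hm0
  refine ⟨⟨hw₁, hw₂, hc₁, hc₂, hd₁, hd₂, by linarith, by linarith, hds₁, hds₂,
    hn1, hn2, hn3, hn4, by linarith, by linarith⟩, ?_⟩
  rcases min_cases x₁₂ x₂₁ with ⟨he, _⟩ | ⟨he, _⟩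
  · left; rw [he]; ring
  · right; rw [he]; ring

set_option maxHeartbeats 1000000 in
lemma absorb {α β Smax σ₁ σ₂ e₁ e₂ w₁ w₂ c₁ c₂ d₁ d₂ x₁₂ x₂₁ : ℝ}
    (hα : 0 < α) (hα1 : α ≤ 1) (hβ0 : 0 < β) (hβ : β ≤ 1)
    (he₁ : 0 ≤ e₁) (hP : 0 ≤ e₂ + α*σ₂ + β*(e₁ + α*σ₁))
    (h01 : 0 ≤ σ₁) (h02 : 0 ≤ σ₂)
    (hx : x₁₂ = 0 ∨ x₂₁ = 0)
    (ha : OneStep α β Smax σ₁ σ₂ e₁ e₂ w₁ w₂ c₁ c₂ d₁ d₂ x₁₂ x₂₁) :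
    ∃ C₁ C₂ D₁ D₂ Y₁₂ Y₂₁ : ℝ,
      OneStep α β Smax σ₁ σ₂ e₁ e₂ 0 0 C₁ C₂ D₁ D₂ Y₁₂ Y₂₁ ∧
      σ₁ + α*C₁ - D₁ ≤ σ₁ + α*c₁ - d₁ ∧
      σ₂ + α*C₂ - D₂ ≤ σ₂ + α*c₂ - d₂ ∧
      α*β*((σ₁ + α*c₁ - d₁) - (σ₁ + α*C₁ - D₁)) +
        α*((σ₂ + α*c₂ - d₂) - (σ₂ + α*C₂ - D₂)) ≤ w₁ + w₂ := by
  obtain ⟨hw₁, hw₂, hc₁, hc₂, hd₁, hd₂, hx₁₂, hx₂₁, hds₁, hds₂, hn1, hn2, hn3, hn4, hA, hB⟩ := ha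
  obtain ⟨A, hAd⟩ : ∃ x, x = e₁ + w₁ - c₁ + α * d₁ - x₁₂ + β * x₂₁ := ⟨_, rfl⟩
  have hA0 : 0 ≤ A := hAd ▸ hA
  obtain ⟨ν₁, hν₁d⟩ : ∃ x, x = min c₁ w₁ := ⟨_, rfl⟩
  obtain ⟨μ₁, hμ₁d⟩ : ∃ x, x = min x₁₂ (w₁ - ν₁) := ⟨_, rfl⟩
  have hν₁0 : 0 ≤ ν₁ := hν₁d ▸ le_min hc₁ hw₁
  have hν₁c : ν₁ ≤ c₁ := hν₁d ▸ min_le_left _ _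
  have hν₁w : ν₁ ≤ w₁ := hν₁d ▸ min_le_right _ _
  have hμ₁0 : 0 ≤ μ₁ := hμ₁d ▸ le_min hx₁₂ (by linarith)
  have hμ₁x : μ₁ ≤ x₁₂ := hμ₁d ▸ min_le_left _ _
  have hμ₁w : μ₁ ≤ w₁ - ν₁ := hμ₁d ▸ min_le_right _ _
  obtain ⟨Ah, hAhd⟩ : ∃ x, x = A - w₁ + ν₁ + μ₁ := ⟨_, rfl⟩
  have pαd₁ : α*d₁ ≤ α*σ₁ := mul_le_mul_of_nonneg_left hds₁ hα.le
  have pαd₁0 : 0 ≤ α*d₁ := mul_nonneg hα.le hd₁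
  have pβx₂₁ : 0 ≤ β*x₂₁ := mul_nonneg hβ0.le hx₂₁
  have hAh0 : 0 ≤ Ah := by
    rcases min_cases c₁ w₁ with ⟨he, hcm⟩ | ⟨he, hcm⟩
    · have hν₁e : ν₁ = c₁ := hν₁d.trans he
      rcases min_cases x₁₂ (w₁ - ν₁) with ⟨he2, hcm2⟩ | ⟨he2, hcm2⟩
      · have hμ₁e : μ₁ = x₁₂ := hμ₁d.trans he2
        rw [hAhd, hAd, hν₁e, hμ₁e]; linarith
      · have hμ₁e : μ₁ = w₁ - ν₁ := hμ₁d.trans he2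
        rw [hAhd, hμ₁e]; linarith
    · have hν₁e : ν₁ = w₁ := hν₁d.trans he
      have hμ₁e : μ₁ = 0 := by
        rw [hμ₁d, hν₁e]
        simp [min_eq_right hx₁₂]
      rw [hAhd, hν₁e, hμ₁e]; linarith
  obtain ⟨Z, hZd⟩ : ∃ x, x = max 0 (w₂ + β*μ₁ - (e₂ + w₂ - c₂ + α * d₂ - x₂₁ + β * x₁₂)) := ⟨_, rfl⟩
  have pβμ₁ : 0 ≤ β*μ₁ := mul_nonneg hβ0.le hμ₁0
  have hZ0 : 0 ≤ Z := hZd ▸ le_max_left _ _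
  have hZub : Z ≤ w₂ + β*μ₁ := hZd ▸ max_le (by linarith) (by linarith)
  have hZlb : w₂ + β*μ₁ - (e₂ + w₂ - c₂ + α * d₂ - x₂₁ + β * x₁₂) ≤ Z := hZd ▸ le_max_right _ _
  obtain ⟨ν₂, hν₂d⟩ : ∃ x, x = min c₂ Z := ⟨_, rfl⟩
  have hν₂0 : 0 ≤ ν₂ := hν₂d ▸ le_min hc₂ hZ0
  have hν₂c : ν₂ ≤ c₂ := hν₂d ▸ min_le_left _ _
  have hν₂Z : ν₂ ≤ Z := hν₂d ▸ min_le_right _ _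
  obtain ⟨μ₂, hμ₂d⟩ : ∃ x, x = min x₂₁ (Z - ν₂) := ⟨_, rfl⟩
  have hμ₂0 : 0 ≤ μ₂ := hμ₂d ▸ le_min hx₂₁ (by linarith)
  have hμ₂x : μ₂ ≤ x₂₁ := hμ₂d ▸ min_le_left _ _
  have hμ₂Z : μ₂ ≤ Z - ν₂ := hμ₂d ▸ min_le_right _ _
  obtain ⟨η₂, hη₂d⟩ : ∃ x, x = min (σ₂ - d₂) ((Z - ν₂ - μ₂)/α) := ⟨_, rfl⟩
  have hη₂0 : 0 ≤ η₂ := hη₂d ▸ le_min (by linarith) (div_nonneg (by linarith) hα.le)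
  have hη₂σ : η₂ ≤ σ₂ - d₂ := hη₂d ▸ min_le_left _ _
  have hαη₂ : α*η₂ ≤ Z - ν₂ - μ₂ := by
    have h1 : η₂ ≤ (Z - ν₂ - μ₂)/α := hη₂d ▸ min_le_right _ _
    have := (le_div_iff₀ hα).1 h1
    linarith
  have pαη₂ : 0 ≤ α*η₂ := mul_nonneg hα.le hη₂0
  obtain ⟨Z', hZ'd⟩ : ∃ x, x = Z - ν₂ - μ₂ - α*η₂ := ⟨_, rfl⟩
  have hZ'0 : 0 ≤ Z' := by rw [hZ'd]; linarith
  obtain ⟨ξ, hξd⟩ : ∃ x, x = Z'/β := ⟨_, rfl⟩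
  have hξ0 : 0 ≤ ξ := hξd ▸ div_nonneg hZ'0 hβ0.le
  have hβξ : β*ξ = Z' := by rw [hξd]; field_simp
  obtain ⟨ζ, hζd⟩ : ∃ x, x = min (c₁ - ν₁) (max 0 (ξ + β*μ₂ - Ah)) := ⟨_, rfl⟩
  have hζ0 : 0 ≤ ζ := hζd ▸ le_min (by linarith) (le_max_left _ _)
  have hζc : ζ ≤ c₁ - ν₁ := hζd ▸ min_le_left _ _
  obtain ⟨η₁, hη₁d⟩ : ∃ x, x = min (σ₁ - d₁) (max 0 ((ξ + β*μ₂ - Ah - ζ)/α)) := ⟨_, rfl⟩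
  have hη₁0 : 0 ≤ η₁ := hη₁d ▸ le_min (by linarith) (le_max_left _ _)
  have hη₁σ : η₁ ≤ σ₁ - d₁ := hη₁d ▸ min_le_left _ _
  have pαη₁ : 0 ≤ α*η₁ := mul_nonneg hα.le hη₁0
  have pβμ₂ : 0 ≤ β*μ₂ := mul_nonneg hβ0.le hμ₂0
  -- the claim: total A-side capacity suffices
  have hRHS : Ah + (c₁ - ν₁) + α*(σ₁ - d₁) = e₁ + α*σ₁ - (x₁₂ - μ₁) + β*x₂₁ := by
    rw [hAhd, hAd]; ring
  have hclaim : ξ + β*μ₂ ≤ Ah + (c₁ - ν₁) + α*(σ₁ - d₁) := by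
    rcases lt_or_ge 0 Z' with hZp | hZn
    · -- deep case : all B-side compensations saturated
      have hν₂e : ν₂ = c₂ := by
        rcases min_cases c₂ Z with ⟨he, _⟩ | ⟨he, hlt⟩
        · exact hν₂d.trans he
        · exfalso
          have hν₂e : ν₂ = Z := hν₂d.trans he
          have hμ₂e : μ₂ ≤ 0 := by rw [hν₂e] at hμ₂Z; linarith
          rw [hZ'd] at hZp; linarith
      have hμ₂e : μ₂ = x₂₁ := by
        rcases min_cases x₂₁ (Z - ν₂) with ⟨he, _⟩ | ⟨he, hlt⟩
        · exact hμ₂d.trans he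
        · exfalso
          have : μ₂ = Z - ν₂ := hμ₂d.trans he
          rw [hZ'd] at hZp; linarith
      have hη₂e : η₂ = σ₂ - d₂ := by
        rcases min_cases (σ₂ - d₂) ((Z - ν₂ - μ₂)/α) with ⟨he, _⟩ | ⟨he, hlt⟩
        · exact hη₂d.trans he
        · exfalso
          have h1 : η₂ = (Z - ν₂ - μ₂)/α := hη₂d.trans he
          have h2 : α*η₂ = Z - ν₂ - μ₂ := by rw [h1]; field_simp
          rw [hZ'd] at hZp; linarith
      have hZe2 : Z = w₂ + β*μ₁ - (e₂ + w₂ - c₂ + α * d₂ - x₂₁ + β * x₁₂) := by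
        rcases max_cases (0:ℝ) (w₂ + β*μ₁ - (e₂ + w₂ - c₂ + α * d₂ - x₂₁ + β * x₁₂)) with
          ⟨he, hcm⟩ | ⟨he, hcm⟩
        · exfalso
          have hZe : Z = 0 := hZd.trans he
          rw [hZ'd, hZe] at hZp
          linarith
        · exact hZd.trans he
      have hZ'b : Z' ≤ -e₂ - α*σ₂ - β*(x₁₂ - μ₁) := by
        rw [hZ'd, hν₂e, hμ₂e, hη₂e, hZe2]
        have hexp : α*(σ₂ - d₂) = α*σ₂ - α*d₂ := by ring
        have hexp2 : β*(x₁₂ - μ₁) = β*x₁₂ - β*μ₁ := by ring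
        rw [hexp, hexp2]; linarith
      have hξb : β*ξ ≤ β*(e₁ + α*σ₁ - (x₁₂ - μ₁)) := by
        rw [hβξ]
        have hexp : β*(e₁ + α*σ₁ - (x₁₂ - μ₁)) = β*(e₁ + α*σ₁) - β*(x₁₂ - μ₁) := by ring
        rw [hexp]; linarith
      have hξb2 : ξ ≤ e₁ + α*σ₁ - (x₁₂ - μ₁) := (mul_le_mul_iff_right₀ hβ0).1 hξb
      have hμ₂b : β*μ₂ ≤ β*x₂₁ := mul_le_mul_of_nonneg_left hμ₂x hβ0.le
      rw [hRHS]; linarith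
    · -- Z' = 0
      have hZ'e : Z' = 0 := le_antisymm hZn hZ'0
      have hξe : ξ = 0 := by rw [hξd, hZ'e]; simp
      rcases hx with hx1 | hx2
      · -- x₁₂ = 0 : μ₁ = 0
        have hμ₁e : μ₁ = 0 := by
          rw [hμ₁d, hx1]
          simp [min_eq_left (by linarith : (0:ℝ) ≤ w₁ - ν₁)]
        have hμ₂b : β*μ₂ ≤ β*x₂₁ := mul_le_mul_of_nonneg_left hμ₂x hβ0.le
        rw [hRHS, hξe, hx1, hμ₁e]
        have : 0 ≤ α*σ₁ := mul_nonneg hα.le h01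
        linarith
      · -- x₂₁ = 0 : μ₂ = 0
        have hμ₂e : μ₂ = 0 := by
          rw [hμ₂d, hx2]
          simp [min_eq_left (by linarith : (0:ℝ) ≤ Z - ν₂)]
        rw [hRHS, hξe, hμ₂e, hx2]
        rcases min_cases x₁₂ (w₁ - ν₁) with ⟨he2, _⟩ | ⟨he2, _⟩
        · have hμ₁e : μ₁ = x₁₂ := hμ₁d.trans he2
          have : 0 ≤ α*σ₁ := mul_nonneg hα.le h01
          rw [hμ₁e]; linarith
        · have hμ₁e : μ₁ = w₁ - ν₁ := hμ₁d.trans he2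
          rw [hμ₁e]
          rw [hx2] at hAd
          linarith [pαd₁]
  have hAfin : 0 ≤ Ah + ζ + α*η₁ - ξ - β*μ₂ := by
    rcases le_or_gt (ξ + β*μ₂ - Ah) 0 with h | h
    · linarith
    · rcases le_or_gt (ξ + β*μ₂ - Ah) (c₁ - ν₁) with h2 | h2
      · have hζe : ζ = ξ + β*μ₂ - Ah := by
          rw [hζd, max_eq_right h.le, min_eq_right h2]
        rw [hζe]; linarith
      · have hζe : ζ = c₁ - ν₁ := by
          rw [hζd, max_eq_right h.le, min_eq_left h2.le]
        have hqpos : 0 ≤ ξ + β*μ₂ - Ah - ζ := by rw [hζe]; linarith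
        have hdiv : (ξ + β*μ₂ - Ah - ζ)/α ≤ σ₁ - d₁ := by
          rw [div_le_iff₀ hα, hζe]
          linarith [hclaim]
        have hηe : η₁ = (ξ + β*μ₂ - Ah - ζ)/α := by
          rw [hη₁d, max_eq_right (div_nonneg hqpos hα.le), min_eq_right hdiv]
        have hαη : α*η₁ = ξ + β*μ₂ - Ah - ζ := by rw [hηe]; field_simp
        linarith
  -- the transformed zero-grid action
  refine ⟨c₁ - ν₁ - ζ, c₂ - ν₂, d₁ + η₁, d₂ + η₂, x₁₂ - μ₁ + ξ, x₂₁ - μ₂, ⟨le_refl 0, le_refl 0,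
    by linarith, by linarith, by linarith, by linarith, by linarith, by linarith,
    by linarith, by linarith, ?_, ?_, ?_, ?_, ?_, ?_⟩, ?_, ?_, ?_⟩
  · have : 0 ≤ α*(c₁ - ν₁ - ζ) := mul_nonneg hα.le (by linarith)
    linarith
  · have h1 : α*(c₁ - ν₁ - ζ) ≤ α*c₁ := mul_le_mul_of_nonneg_left (by linarith) hα.le
    linarith
  · have : 0 ≤ α*(c₂ - ν₂) := mul_nonneg hα.le (by linarith)
    linarith
  · have h1 : α*(c₂ - ν₂) ≤ α*c₂ := mul_le_mul_of_nonneg_left (by linarith) hα.le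
    linarith
  · -- A-budget of new action
    have hexp : e₁ + 0 - (c₁ - ν₁ - ζ) + α * (d₁ + η₁) - (x₁₂ - μ₁ + ξ) + β * (x₂₁ - μ₂)
        = Ah + ζ + α*η₁ - ξ - β*μ₂ := by
      rw [hAhd, hAd]; ring
    rw [hexp]; exact hAfin
  · -- B-budget of new action
    have hexp : e₂ + 0 - (c₂ - ν₂) + α * (d₂ + η₂) - (x₂₁ - μ₂) + β * (x₁₂ - μ₁ + ξ)
        = (e₂ + w₂ - c₂ + α * d₂ - x₂₁ + β * x₁₂) + (ν₂ + α*η₂ + μ₂ + β*ξ - β*μ₁ - w₂) := by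
      ring
    rw [hexp, hβξ, hZ'd]
    linarith [hZlb]
  · have h1 : α*(c₁ - ν₁ - ζ) ≤ α*c₁ := mul_le_mul_of_nonneg_left (by linarith) hα.le
    linarith
  · have h1 : α*(c₂ - ν₂) ≤ α*c₂ := mul_le_mul_of_nonneg_left (by linarith) hα.le
    linarith
  · -- price bound
    have f1 : α*(β*(α*ν₁)) ≤ ν₁ := by
      have a1 : β*(α*ν₁) ≤ 1*(α*ν₁) :=
        mul_le_mul_of_nonneg_right hβ (mul_nonneg hα.le hν₁0)
      have a2 : α*(β*(α*ν₁)) ≤ 1*(β*(α*ν₁)) :=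
        mul_le_mul_of_nonneg_right hα1 (mul_nonneg hβ0.le (mul_nonneg hα.le hν₁0))
      have a3 : α*ν₁ ≤ 1*ν₁ := mul_le_mul_of_nonneg_right hα1 hν₁0
      linarith
    have f2 : α*(α*ν₂) ≤ ν₂ := by
      have a1 : α*(α*ν₂) ≤ 1*(α*ν₂) :=
        mul_le_mul_of_nonneg_right hα1 (mul_nonneg hα.le hν₂0)
      have a2 : α*ν₂ ≤ 1*ν₂ := mul_le_mul_of_nonneg_right hα1 hν₂0
      linarith
    have f3 : α*(β*(α*ζ)) ≤ β*ζ := by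
      have a1 : α*(β*(α*ζ)) ≤ 1*(β*(α*ζ)) :=
        mul_le_mul_of_nonneg_right hα1 (mul_nonneg hβ0.le (mul_nonneg hα.le hζ0))
      have a2 : β*(α*ζ) ≤ β*(1*ζ) :=
        mul_le_mul_of_nonneg_left (mul_le_mul_of_nonneg_right hα1 hζ0) hβ0.le
      linarith
    have f5 : β*(β*μ₂) ≤ μ₂ := by
      have a1 : β*(β*μ₂) ≤ 1*(β*μ₂) := mul_le_mul_of_nonneg_right hβ pβμ₂
      have a2 : β*μ₂ ≤ 1*μ₂ := mul_le_mul_of_nonneg_right hβ hμ₂0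
      linarith
    have f8 : β*μ₁ ≤ μ₁ := by
      have := mul_le_mul_of_nonneg_right hβ hμ₁0; linarith
    have hq : α*η₁ ≤ max 0 (ξ + β*μ₂ - Ah - ζ) := by
      rcases max_cases 0 ((ξ + β*μ₂ - Ah - ζ)/α) with ⟨hm, hcm⟩ | ⟨hm, hcm⟩
      · have hη₁e : η₁ = 0 := by
          refine le_antisymm ?_ hη₁0
          have := hη₁d ▸ min_le_right (σ₁ - d₁) (max 0 ((ξ + β*μ₂ - Ah - ζ)/α))
          rw [hm] at this; exact this
        rw [hη₁e]
        simp [le_max_left]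
      · have h1 : η₁ ≤ (ξ + β*μ₂ - Ah - ζ)/α := by
          have := hη₁d ▸ min_le_right (σ₁ - d₁) (max 0 ((ξ + β*μ₂ - Ah - ζ)/α))
          rw [hm] at this; exact this
        have h2 : α*η₁ ≤ α*((ξ + β*μ₂ - Ah - ζ)/α) := mul_le_mul_of_nonneg_left h1 hα.le
        have h3 : α*((ξ + β*μ₂ - Ah - ζ)/α) = ξ + β*μ₂ - Ah - ζ := by field_simp
        refine le_trans (by linarith) (le_max_right _ _)
    have F : α*(β*(α*ζ)) + β*(α*η₁) ≤ β*ξ + β*(β*μ₂) := by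
      rcases max_cases 0 (ξ + β*μ₂ - Ah) with ⟨hm, hcm⟩ | ⟨hm, hcm⟩
      · -- ζ = 0 and η₁ = 0
        have hζe : ζ = 0 := by
          refine le_antisymm ?_ hζ0
          have := hζd ▸ min_le_right (c₁ - ν₁) (max 0 (ξ + β*μ₂ - Ah))
          rw [hm] at this; exact this
        have hη₁e : α*η₁ ≤ 0 := by
          have h2 := hq
          rw [hζe] at h2
          have h3 : (0:ℝ) ⊔ (ξ + β * μ₂ - Ah - 0) = 0 := max_eq_left (by linarith)
          rw [h3] at h2
          exact h2
        have hβη : β*(α*η₁) ≤ 0 := mul_nonpos_of_nonneg_of_nonpos hβ0.le hη₁e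
        have : 0 ≤ β*ξ := by rw [hβξ]; exact hZ'0
        rw [hζe]
        simp only [mul_zero]
        linarith [pβμ₂, mul_nonneg hβ0.le pβμ₂]
      · have hζb : ζ ≤ ξ + β*μ₂ - Ah := by
          have := hζd ▸ min_le_right (c₁ - ν₁) (max 0 (ξ + β*μ₂ - Ah))
          rw [hm] at this; exact this
        have h4 : β*(α*η₁) ≤ β*(max 0 (ξ + β*μ₂ - Ah - ζ)) :=
          mul_le_mul_of_nonneg_left hq hβ0.le
        rcases max_cases 0 (ξ + β*μ₂ - Ah - ζ) with ⟨hm2, hcm2⟩ | ⟨hm2, hcm2⟩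
        · rw [hm2] at h4
          have h5 : β*ζ ≤ β*(ξ + β*μ₂ - Ah) := mul_le_mul_of_nonneg_left hζb hβ0.le
          have h6 : β*(ξ + β*μ₂ - Ah) = β*ξ + β*(β*μ₂) - β*Ah := by ring
          have h7 : 0 ≤ β*Ah := mul_nonneg hβ0.le hAh0
          rw [h6] at h5
          simp only [mul_zero] at h4
          linarith [f3]
        · rw [hm2] at h4
          have h6 : β*(ξ + β*μ₂ - Ah - ζ) = β*ξ + β*(β*μ₂) - β*Ah - β*ζ := by ring
          have h7 : 0 ≤ β*Ah := mul_nonneg hβ0.le hAh0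
          rw [h6] at h4
          linarith [f3]
    have hslack : α*η₂ = Z - ν₂ - μ₂ - Z' := by rw [hZ'd]; ring
    have hβξ' : β*ξ = Z' := hβξ
    linarith [f1, f2, F, f5, f8, hslack, hZub, hβξ', hν₁w, hμ₁w]

end EC4

namespace EC5
open EC EC2 EC4

lemma deepS {α β Smax σ₁ σ₂ e₁ e₂ : ℝ} (hα : 0 < α) (hβ0 : 0 < β)
    (h01 : 0 ≤ σ₁) (h2 : σ₁ ≤ Smax) (h03 : 0 ≤ σ₂) (h4 : σ₂ ≤ Smax) (he₁ : 0 ≤ e₁)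
    (hP : 0 ≤ e₂ + α*σ₂ + β*(e₁ + α*σ₁)) :
    OneStep α β Smax σ₁ σ₂ e₁ e₂ 0 0 0 0 σ₁ σ₂ (e₁ + α*σ₁) 0 := by
  have pασ₁ : 0 ≤ α*σ₁ := mul_nonneg hα.le h01
  have pασ₂ : 0 ≤ α*σ₂ := mul_nonneg hα.le h03
  exact ⟨le_refl 0, le_refl 0, le_refl 0, le_refl 0, h01, h03, by linarith, le_refl 0,
    le_refl σ₁, le_refl σ₂, by linarith, by linarith, by linarith, by linarith,
    by linarith, by linarith⟩

lemma deepD {α β Smax σ₁ σ₂ e₁ e₂ : ℝ} (hα : 0 < α) (hβ0 : 0 < β)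
    (h01 : 0 ≤ σ₁) (h2 : σ₁ ≤ Smax) (h03 : 0 ≤ σ₂) (h4 : σ₂ ≤ Smax) (he₁ : 0 ≤ e₁)
    (hP : e₂ + α*σ₂ + β*(e₁ + α*σ₁) < 0) :
    OneStep α β Smax σ₁ σ₂ e₁ e₂ 0 (-(e₂ + α*σ₂ + β*(e₁ + α*σ₁))) 0 0 σ₁ σ₂ (e₁ + α*σ₁) 0 := by
  have pασ₁ : 0 ≤ α*σ₁ := mul_nonneg hα.le h01
  have pασ₂ : 0 ≤ α*σ₂ := mul_nonneg hα.le h03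
  exact ⟨le_refl 0, by linarith, le_refl 0, le_refl 0, h01, h03, by linarith, le_refl 0,
    le_refl σ₁, le_refl σ₂, by linarith, by linarith, by linarith, by linarith,
    by linarith, by linarith⟩

lemma V1_le {α β Smax σ₁ σ₂ e₁ e₂ w₁ w₂ c₁ c₂ d₁ d₂ x₁₂ x₂₁ : ℝ}
    (ha : OneStep α β Smax σ₁ σ₂ e₁ e₂ w₁ w₂ c₁ c₂ d₁ d₂ x₁₂ x₂₁) :
    V1 α β Smax σ₁ σ₂ e₁ e₂ ≤ w₁ + w₂ := by
  have hbdd : BddBelow {r : ℝ | ∃ w₁ w₂ c₁ c₂ d₁ d₂ x₁₂ x₂₁ : ℝ,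
      OneStep α β Smax σ₁ σ₂ e₁ e₂ w₁ w₂ c₁ c₂ d₁ d₂ x₁₂ x₂₁ ∧ w₁ + w₂ = r} := by
    refine ⟨0, ?_⟩
    rintro r ⟨W₁, W₂, C₁, C₂, D₁, D₂, X₁₂, X₂₁, hb, hsum⟩
    rw [← hsum]
    linarith [hb.1, hb.2.1]
  exact csInf_le hbdd ⟨w₁, w₂, c₁, c₂, d₁, d₂, x₁₂, x₂₁, ha, rfl⟩

lemma V1_ge {α β Smax σ₁ σ₂ e₁ e₂ : ℝ}
    (hα : 0 < α) (hα1 : α ≤ 1) (hβ0 : 0 < β) (hβ : β ≤ 1)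
    (h01 : 0 ≤ σ₁) (h2 : σ₁ ≤ Smax) (h03 : 0 ≤ σ₂) (h4 : σ₂ ≤ Smax) (he₁ : 0 ≤ e₁) :
    max 0 (-(e₂ + α*σ₂ + β*(e₁ + α*σ₁))) ≤ V1 α β Smax σ₁ σ₂ e₁ e₂ := by
  have hne : {r : ℝ | ∃ w₁ w₂ c₁ c₂ d₁ d₂ x₁₂ x₂₁ : ℝ,
      OneStep α β Smax σ₁ σ₂ e₁ e₂ w₁ w₂ c₁ c₂ d₁ d₂ x₁₂ x₂₁ ∧ w₁ + w₂ = r}.Nonempty := by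
    rcases le_or_gt 0 (e₂ + α*σ₂ + β*(e₁ + α*σ₁)) with hP | hP
    · refine ⟨0 + 0, 0, 0, 0, 0, σ₁, σ₂, e₁ + α*σ₁, 0,
        deepS hα hβ0 h01 h2 h03 h4 he₁ hP, rfl⟩
    · refine ⟨0 + -(e₂ + α*σ₂ + β*(e₁ + α*σ₁)), 0, -(e₂ + α*σ₂ + β*(e₁ + α*σ₁)), 0, 0, σ₁, σ₂,
        e₁ + α*σ₁, 0, deepD hα hβ0 h01 h2 h03 h4 he₁ hP, rfl⟩
  refine le_csInf hne ?_
  rintro r ⟨w₁, w₂, c₁, c₂, d₁, d₂, x₁₂, x₂₁, ha, hsum⟩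
  have hk := key_ineq hα hα1 hβ0 hβ ha
  obtain ⟨hw₁, hw₂, _, _, _, _, _, _, _, _, hn1, _, hn3, _, _, _⟩ := ha
  have p1 : 0 ≤ α*β*(σ₁ + α*c₁ - d₁) := mul_nonneg (mul_nonneg hα.le hβ0.le) hn1
  have p2 : 0 ≤ α*(σ₂ + α*c₂ - d₂) := mul_nonneg hα.le hn3
  refine max_le (by linarith) (by nlinarith [hk, p1, p2])

set_option maxHeartbeats 1000000 in
lemma exists_min_action {α β Smax σ₁ σ₂ e₁ e₂ : ℝ}
    (hα : 0 < α) (hα1 : α ≤ 1) (hβ0 : 0 < β) (hβ : β ≤ 1)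
    (h01 : 0 ≤ σ₁) (h2 : σ₁ ≤ Smax) (h03 : 0 ≤ σ₂) (h4 : σ₂ ≤ Smax)
    (he₁ : 0 ≤ e₁) (hP : 0 ≤ e₂ + α*σ₂ + β*(e₁ + α*σ₁))
    (J : ℝ → ℝ → ℝ)
    (hJ : ∀ a₁ a₂ b₁ b₂ : ℝ, 0 ≤ a₁ → 0 ≤ a₂ → a₁ ≤ b₁ → a₂ ≤ b₂ → b₁ ≤ Smax → b₂ ≤ Smax →
       J b₁ b₂ ≤ J a₁ a₂ ∧ J a₁ a₂ ≤ J b₁ b₂ + α*β*(b₁-a₁) + α*(b₂-a₂)) :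
    ∃ C₁ C₂ D₁ D₂ Y₁₂ Y₂₁ : ℝ,
      OneStep α β Smax σ₁ σ₂ e₁ e₂ 0 0 C₁ C₂ D₁ D₂ Y₁₂ Y₂₁ ∧
      ∀ w₁ w₂ c₁ c₂ d₁ d₂ x₁₂ x₂₁ : ℝ,
        OneStep α β Smax σ₁ σ₂ e₁ e₂ w₁ w₂ c₁ c₂ d₁ d₂ x₁₂ x₂₁ →
        J (σ₁ + α*C₁ - D₁) (σ₂ + α*C₂ - D₂) ≤
          w₁ + w₂ + J (σ₁ + α*c₁ - d₁) (σ₂ + α*c₂ - d₂) := by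
  have pασ₁ : 0 ≤ α*σ₁ := mul_nonneg hα.le h01
  have pασ₂ : 0 ≤ α*σ₂ := mul_nonneg hα.le h03
  set M₁ : ℝ := e₁ + α*σ₁ with hM₁
  set M₂ : ℝ := max 0 (e₂ + α*σ₂) with hM₂
  have hM₁0 : 0 ≤ M₁ := by rw [hM₁]; linarith
  have hM₂0 : 0 ≤ M₂ := le_max_left _ _
  set K : Set (ℝ×ℝ×ℝ×ℝ×ℝ×ℝ) :=
    {p | OneStep α β Smax σ₁ σ₂ e₁ e₂ 0 0 p.1 p.2.1 p.2.2.1 p.2.2.2.1 p.2.2.2.2.1 p.2.2.2.2.2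
         ∧ p.2.2.2.2.1 ≤ M₁ ∧ p.2.2.2.2.2 ≤ M₂} with hK
  -- membership criterion for bounded zero-grid actions
  have hbound : ∀ C₁ C₂ D₁ D₂ Y₁₂ Y₂₁ : ℝ,
      OneStep α β Smax σ₁ σ₂ e₁ e₂ 0 0 C₁ C₂ D₁ D₂ Y₁₂ Y₂₁ → (Y₁₂ = 0 ∨ Y₂₁ = 0) →
      Y₁₂ ≤ M₁ ∧ Y₂₁ ≤ M₂ := by
    intro C₁ C₂ D₁ D₂ Y₁₂ Y₂₁ hb hor
    obtain ⟨_, _, hc₁, hc₂, hd₁, hd₂, hy₁₂, hy₂₁, hD₁, hD₂, _, _, _, _, hA, hB⟩ := hb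
    rcases hor with h0 | h0
    · constructor
      · rw [h0]; exact hM₁0
      · rw [h0] at hB
        have pαD₂ : α*D₂ ≤ α*σ₂ := mul_le_mul_of_nonneg_left hD₂ hα.le
        refine le_trans ?_ (le_max_right 0 (e₂ + α*σ₂))
        simp only [mul_zero] at hB
        linarith
    · constructor
      · rw [h0] at hA
        have pαD₁ : α*D₁ ≤ α*σ₁ := mul_le_mul_of_nonneg_left hD₁ hα.le
        rw [hM₁]
        simp only [mul_zero] at hA
        linarith
      · rw [h0]; exact hM₂0
  have hKne : K.Nonempty := by
    refine ⟨(0, 0, σ₁, σ₂, e₁ + α*σ₁, 0), ?_⟩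
    rw [hK]
    refine ⟨deepS hα hβ0 h01 h2 h03 h4 he₁ hP, le_of_eq hM₁.symm, hM₂0⟩
  have hKc : IsClosed K := by
    rw [hK]
    simp only [OneStep]
    repeat rw [Set.setOf_and]
    repeat' apply IsClosed.inter
    all_goals exact isClosed_le (by fun_prop) (by fun_prop)
  have hKsub : K ⊆ Set.Icc (0, 0, 0, 0, 0, 0)
      (e₁ + α*σ₁ + β*M₂, M₂ + β*M₁, σ₁, σ₂, M₁, M₂) := by
    rintro ⟨C₁, C₂, D₁, D₂, Y₁₂, Y₂₁⟩ hp
    rw [hK] at hp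
    obtain ⟨⟨_, _, hc₁, hc₂, hd₁, hd₂, hy₁₂, hy₂₁, hD₁, hD₂, _, _, _, _, hA, hB⟩, hb₁, hb₂⟩ := hp
    have pαD₁ : α*D₁ ≤ α*σ₁ := mul_le_mul_of_nonneg_left hD₁ hα.le
    have pαD₂ : α*D₂ ≤ α*σ₂ := mul_le_mul_of_nonneg_left hD₂ hα.le
    have pβY₂₁ : β*Y₂₁ ≤ β*M₂ := mul_le_mul_of_nonneg_left hb₂ hβ0.le
    have pβY₁₂ : β*Y₁₂ ≤ β*M₁ := mul_le_mul_of_nonneg_left hb₁ hβ0.le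
    have hM₂e : e₂ + α*σ₂ ≤ M₂ := le_max_right _ _
    simp only [Set.mem_Icc, Prod.le_def]
    simp only [mul_zero] at hA hB
    refine ⟨⟨hc₁, hc₂, hd₁, hd₂, hy₁₂, hy₂₁⟩, ⟨by linarith, by linarith, hD₁, hD₂, hb₁, hb₂⟩⟩
  have hKcomp : IsCompact K := IsCompact.of_isClosed_subset isCompact_Icc hKc hKsub
  -- continuity of the objective on K
  have hJtwo : ∀ a₁ a₂ b₁ b₂ : ℝ, a₁ ∈ Set.Icc 0 Smax → a₂ ∈ Set.Icc 0 Smax →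
      b₁ ∈ Set.Icc 0 Smax → b₂ ∈ Set.Icc 0 Smax →
      J a₁ a₂ - J b₁ b₂ ≤ α*β*|a₁ - b₁| + α*|a₂ - b₂| := by
    intro a₁ a₂ b₁ b₂ ha₁ ha₂ hb₁ hb₂
    have h1 := (hJ (min a₁ b₁) (min a₂ b₂) a₁ a₂ (le_min ha₁.1 hb₁.1) (le_min ha₂.1 hb₂.1)
      (min_le_left _ _) (min_le_left _ _) ha₁.2 ha₂.2).1
    have h2 := (hJ (min a₁ b₁) (min a₂ b₂) b₁ b₂ (le_min ha₁.1 hb₁.1) (le_min ha₂.1 hb₂.1)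
      (min_le_right _ _) (min_le_right _ _) hb₁.2 hb₂.2).2
    have h3 : b₁ - min a₁ b₁ ≤ |a₁ - b₁| := by
      rcases min_cases a₁ b₁ with ⟨he, hc⟩ | ⟨he, hc⟩
      · rw [he]; rw [abs_sub_comm]; exact le_abs_self _
      · rw [he]; simp [abs_nonneg]
    have h4 : b₂ - min a₂ b₂ ≤ |a₂ - b₂| := by
      rcases min_cases a₂ b₂ with ⟨he, hc⟩ | ⟨he, hc⟩
      · rw [he]; rw [abs_sub_comm]; exact le_abs_self _
      · rw [he]; simp [abs_nonneg]
    have p3 : α*β*(b₁ - min a₁ b₁) ≤ α*β*|a₁ - b₁| :=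
      mul_le_mul_of_nonneg_left h3 (mul_nonneg hα.le hβ0.le)
    have p4 : α*(b₂ - min a₂ b₂) ≤ α*|a₂ - b₂| := mul_le_mul_of_nonneg_left h4 hα.le
    linarith
  have hf : ContinuousOn
      (fun p : ℝ×ℝ×ℝ×ℝ×ℝ×ℝ => J (σ₁ + α*p.1 - p.2.2.1) (σ₂ + α*p.2.1 - p.2.2.2.1)) K := by
    have hg : Continuous (fun p : ℝ×ℝ×ℝ×ℝ×ℝ×ℝ =>
        ((σ₁ + α*p.1 - p.2.2.1, σ₂ + α*p.2.1 - p.2.2.2.1) : ℝ×ℝ)) := by fun_prop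
    have hJL : LipschitzOnWith (Real.toNNReal (α*β + α))
        (fun q : ℝ×ℝ => J q.1 q.2) (Set.Icc (0,0) (Smax,Smax)) := by
      rw [lipschitzOnWith_iff_dist_le_mul]
      intro x hx y hy
      simp only [Set.mem_Icc, Prod.le_def] at hx hy
      have hx1 : x.1 ∈ Set.Icc (0:ℝ) Smax := ⟨hx.1.1, hx.2.1⟩
      have hx2 : x.2 ∈ Set.Icc (0:ℝ) Smax := ⟨hx.1.2, hx.2.2⟩
      have hy1 : y.1 ∈ Set.Icc (0:ℝ) Smax := ⟨hy.1.1, hy.2.1⟩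
      have hy2 : y.2 ∈ Set.Icc (0:ℝ) Smax := ⟨hy.1.2, hy.2.2⟩
      have d1 := hJtwo x.1 x.2 y.1 y.2 hx1 hx2 hy1 hy2
      have d2 := hJtwo y.1 y.2 x.1 x.2 hy1 hy2 hx1 hx2
      rw [abs_sub_comm y.1 x.1, abs_sub_comm y.2 x.2] at d2
      have hd : dist (J x.1 x.2) (J y.1 y.2) ≤ α*β*|x.1 - y.1| + α*|x.2 - y.2| := by
        rw [Real.dist_eq, abs_sub_le_iff]
        exact ⟨d1, d2⟩
      have hdx1 : |x.1 - y.1| ≤ dist x y := by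
        rw [Prod.dist_eq]
        exact le_trans (le_of_eq (Real.dist_eq x.1 y.1).symm) (le_max_left _ _)
      have hdx2 : |x.2 - y.2| ≤ dist x y := by
        rw [Prod.dist_eq]
        exact le_trans (le_of_eq (Real.dist_eq x.2 y.2).symm) (le_max_right _ _)
      have hC : (Real.toNNReal (α*β + α) : ℝ) = α*β + α :=
        Real.coe_toNNReal _ (by positivity)
      rw [hC]
      have p1 : α*β*|x.1 - y.1| ≤ α*β*(dist x y) :=
        mul_le_mul_of_nonneg_left hdx1 (mul_nonneg hα.le hβ0.le)
      have p2 : α*|x.2 - y.2| ≤ α*(dist x y) := mul_le_mul_of_nonneg_left hdx2 hα.le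
      have : (α*β + α) * dist x y = α*β*(dist x y) + α*(dist x y) := by ring
      linarith
    refine (hJL.continuousOn.comp hg.continuousOn ?_ : ContinuousOn _ K)
    rintro ⟨C₁, C₂, D₁, D₂, Y₁₂, Y₂₁⟩ hp
    rw [hK] at hp
    obtain ⟨⟨_, _, _, _, _, _, _, _, _, _, b1, b2, b3, b4, _, _⟩, _, _⟩ := hp
    simp only [Set.mem_Icc, Prod.le_def]
    exact ⟨⟨b1, b3⟩, b2, b4⟩
  obtain ⟨p, hpK, hpmin'⟩ := hKcomp.exists_isMinOn hKne hf
  have hpmin := isMinOn_iff.1 hpmin'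
  obtain ⟨C₁, C₂, D₁, D₂, Y₁₂, Y₂₁⟩ := p
  rw [hK] at hpK
  obtain ⟨hpOS, hpb₁, hpb₂⟩ := hpK
  refine ⟨C₁, C₂, D₁, D₂, Y₁₂, Y₂₁, hpOS, ?_⟩
  intro w₁ w₂ c₁ c₂ d₁ d₂ x₁₂ x₂₁ ha
  -- cancel the transfer loop, absorb the grid draw, cancel again
  obtain ⟨ha1, hor1⟩ := cancel_loop hβ0 hβ ha
  have hw12 : 0 ≤ w₁ ∧ 0 ≤ w₂ := ⟨ha.1, ha.2.1⟩
  obtain ⟨C₁', C₂', D₁', D₂', Y₁₂', Y₂₁', hb, hle1, hle2, hpr⟩ :=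
    absorb hα hα1 hβ0 hβ he₁ hP h01 h03 hor1 ha1
  obtain ⟨hb2, hor2⟩ := cancel_loop hβ0 hβ hb
  have hmem2 : (C₁', C₂', D₁', D₂', Y₁₂' - min Y₁₂' Y₂₁', Y₂₁' - min Y₁₂' Y₂₁') ∈ K := by
    rw [hK]
    have := hbound _ _ _ _ _ _ hb2 hor2
    exact ⟨hb2, this.1, this.2⟩
  have hmin := hpmin _ hmem2
  simp only at hmin
  -- J at the absorbed next state vs J at the original next state
  obtain ⟨_, _, _, _, _, _, _, _, _, _, n1, n2, n3, n4, _, _⟩ := hb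
  obtain ⟨_, _, _, _, _, _, _, _, _, _, m1, m2, m3, m4, _, _⟩ := ha
  have hJ2 := (hJ (σ₁ + α*C₁' - D₁') (σ₂ + α*C₂' - D₂')
    (σ₁ + α*c₁ - d₁) (σ₂ + α*c₂ - d₂) n1 n3 hle1 hle2 m2 m4).2
  linarith [hmin, hJ2, hpr]

end EC5


open EC EC2 EC3 EC4 EC5 in
/-- Proposition 5: optimality of the greedy policy when BS 1 always
has a surplus and `β > α`. -/
theorem greedy_optimal_surplus
    (α β Smax : ℝ) (hα : 0 < α) (hαβ : α < β) (hβ : β ≤ 1) (hS : 0 < Smax)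
    (k N : ℕ) (hkN : k ≤ N) (E₁ E₂ : ℕ → ℝ)
    (hE₁ : ∀ t ∈ Finset.Icc k N, 0 ≤ E₁ t)
    (σ₁ σ₂ : ℝ) (hσ₁ : 0 ≤ σ₁ ∧ σ₁ ≤ Smax) (hσ₂ : 0 ≤ σ₂ ∧ σ₂ ≤ Smax) :
    ∃ w₁ w₂ c₁ c₂ d₁ d₂ x₁₂ x₂₁ : ℝ,
      OneStep α β Smax σ₁ σ₂ (E₁ k) (E₂ k) w₁ w₂ c₁ c₂ d₁ d₂ x₁₂ x₂₁ ∧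
      w₁ + w₂ = V1 α β Smax σ₁ σ₂ (E₁ k) (E₂ k) ∧
      Jstar α β Smax k N E₁ E₂ σ₁ σ₂ =
        V1 α β Smax σ₁ σ₂ (E₁ k) (E₂ k) +
          Jstar α β Smax (k + 1) N E₁ E₂ (σ₁ + α * c₁ - d₁) (σ₂ + α * c₂ - d₂) := by
  obtain ⟨h01, h2⟩ := hσ₁
  obtain ⟨h03, h4⟩ := hσ₂
  have hβ0 : 0 < β := lt_trans hα hαβ
  have hα1 : α ≤ 1 := le_trans hαβ.le hβ
  have he₁ : 0 ≤ E₁ k := hE₁ k (by simp [Finset.mem_Icc]; omega)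
  have hE₁' : ∀ t ∈ Finset.Icc (k+1) N, 0 ≤ E₁ t := by
    intro t ht
    refine hE₁ t ?_
    simp only [Finset.mem_Icc] at *
    omega
  have hJ : ∀ a₁ a₂ b₁ b₂ : ℝ, 0 ≤ a₁ → 0 ≤ a₂ → a₁ ≤ b₁ → a₂ ≤ b₂ → b₁ ≤ Smax → b₂ ≤ Smax →
      Jstar α β Smax (k+1) N E₁ E₂ b₁ b₂ ≤ Jstar α β Smax (k+1) N E₁ E₂ a₁ a₂ ∧
      Jstar α β Smax (k+1) N E₁ E₂ a₁ a₂ ≤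
        Jstar α β Smax (k+1) N E₁ E₂ b₁ b₂ + α*β*(b₁-a₁) + α*(b₂-a₂) :=
    fun a₁ a₂ b₁ b₂ p1 p2 p3 p4 p5 p6 =>
      mono_lip hα hα1 hβ0 hβ N E₁ E₂ (N - k) (k+1) (by omega) hE₁' a₁ a₂ b₁ b₂ p1 p2 p3 p4 p5 p6
  rcases le_or_gt 0 (E₂ k + α*σ₂ + β*(E₁ k + α*σ₁)) with hP | hP
  · -- surplus case : V1 = 0, take a minimizing zero-grid action
    obtain ⟨C₁, C₂, D₁, D₂, Y₁₂, Y₂₁, hOS, hdom⟩ :=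
      exists_min_action hα hα1 hβ0 hβ h01 h2 h03 h4 he₁ hP
        (fun a b => Jstar α β Smax (k+1) N E₁ E₂ a b) hJ
    have hV1 : V1 α β Smax σ₁ σ₂ (E₁ k) (E₂ k) = 0 := by
      have hle := V1_le hOS
      have hge := V1_ge (e₂ := E₂ k) hα hα1 hβ0 hβ h01 h2 h03 h4 he₁
      rw [max_eq_left (by linarith)] at hge
      linarith
    refine ⟨0, 0, C₁, C₂, D₁, D₂, Y₁₂, Y₂₁, hOS, by rw [hV1]; norm_num, ?_⟩
    rw [hV1, zero_add]
    refine le_antisymm ?_ ?_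
    · have hcat := concat hkN h01 h2 h03 h4 hOS
      linarith
    · rw [Jstar_eq_sInf α β Smax k]
      refine le_csInf (JSet_nonempty k N E₁ E₂ h01 h2 h03 h4) fun r hr => ?_
      obtain ⟨w₁, w₂, c₁, c₂, d₁, d₂, x₁₂, x₂₁, ha, hle2⟩ := first_step hkN hr
      have hd := hdom w₁ w₂ c₁ c₂ d₁ d₂ x₁₂ x₂₁ ha
      linarith
  · -- deficit case : drain everything
    have hdeep := deepD hα hβ0 h01 h2 h03 h4 he₁ hP
    have hV1 : V1 α β Smax σ₁ σ₂ (E₁ k) (E₂ k) = -(E₂ k + α*σ₂ + β*(E₁ k + α*σ₁)) := by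
      have hle := V1_le hdeep
      have hge := V1_ge (e₂ := E₂ k) hα hα1 hβ0 hβ h01 h2 h03 h4 he₁
      rw [max_eq_right (by linarith)] at hge
      linarith
    refine ⟨0, -(E₂ k + α*σ₂ + β*(E₁ k + α*σ₁)), 0, 0, σ₁, σ₂, E₁ k + α*σ₁, 0, hdeep,
      by rw [hV1]; ring, ?_⟩
    have e01 : σ₁ + α * 0 - σ₁ = (0:ℝ) := by ring
    have e02 : σ₂ + α * 0 - σ₂ = (0:ℝ) := by ring
    rw [hV1, e01, e02]
    refine le_antisymm ?_ ?_
    · have hcat := concat hkN h01 h2 h03 h4 hdeep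
      rw [e01, e02] at hcat
      linarith
    · rw [Jstar_eq_sInf α β Smax k]
      refine le_csInf (JSet_nonempty k N E₁ E₂ h01 h2 h03 h4) fun r hr => ?_
      obtain ⟨w₁, w₂, c₁, c₂, d₁, d₂, x₁₂, x₂₁, ha, hle2⟩ := first_step hkN hr
      have hkey := key_ineq hα hα1 hβ0 hβ ha
      obtain ⟨hw₁, hw₂, hc₁, hc₂, hd₁, hd₂, hx₁₂, hx₂₁, hds₁, hds₂, hn1, hn2, hn3, hn4, hA, hB⟩ := ha
      have hJ2 := (hJ 0 0 (σ₁ + α * c₁ - d₁) (σ₂ + α * c₂ - d₂)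
        (le_refl 0) (le_refl 0) hn1 hn3 hn2 hn4).2
      nlinarith [hle2, hJ2, hkey]
end

section
/- (Optimality of the modified greedy policy when BS 1 is always in surplus and BS 2 always in deficit.) Suppose 0 < α ≤ 1, 0 < β ≤ 1, E₁(t) ≥ 0 and E₂(t) ≤ 0 for all t ∈ {k,…,N}. Then for every state (σ₁,σ₂) ∈ [0,S_max]², there exists a one-step feasible action at (σ₁,σ₂) with net energies (E₁(k),E₂(k)) whose grid draw w₁+w₂ equals the one-step minimum V₁(σ₁,σ₂,E₁(k),E₂(k)) and whose next state (σ₁',σ₂') satisfies J*_k(σ₁,σ₂) = V₁(σ₁,σ₂,E₁(k),E₂(k)) + J*_{k+1}(σ₁',σ₂'), where J*_{k+1} denotes the optimal cost of the problem over slots {k+1,…,N} (taken to be 0 when k = N). -/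
set_option maxHeartbeats 1600000

noncomputable def G (α β Smax : ℝ) (N : ℕ) (E₁ E₂ : ℕ → ℝ) (t : ℕ) (θ : ℝ) : ℝ :=
  if h : t ≤ N then
    max 0 (-(θ + (β * E₁ t + E₂ t))) +
      G α β Smax N E₁ E₂ (t+1)
        (if 0 ≤ β * E₁ t + E₂ t then
          min (α*β*Smax + α*Smax) (max 0 (θ + α^2 * (β * E₁ t + E₂ t)))
         else max 0 (θ + (β * E₁ t + E₂ t)))
  else 0
termination_by N + 1 - t
decreasing_by omega

noncomputable def nTh (α β Smax : ℝ) (E₁ E₂ : ℕ → ℝ) (t : ℕ) (θ : ℝ) : ℝ :=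
  if 0 ≤ β * E₁ t + E₂ t then
    min (α*β*Smax + α*Smax) (max 0 (θ + α^2 * (β * E₁ t + E₂ t)))
  else max 0 (θ + (β * E₁ t + E₂ t))

lemma G_of_le (α β Smax : ℝ) (N : ℕ) (E₁ E₂ : ℕ → ℝ) (t : ℕ) (θ : ℝ) (h : t ≤ N) :
    G α β Smax N E₁ E₂ t θ = max 0 (-(θ + (β * E₁ t + E₂ t))) +
      G α β Smax N E₁ E₂ (t+1) (nTh α β Smax E₁ E₂ t θ) := by
  rw [G]; simp [h, nTh]

lemma G_of_gt (α β Smax : ℝ) (N : ℕ) (E₁ E₂ : ℕ → ℝ) (t : ℕ) (θ : ℝ) (h : ¬ t ≤ N) :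
    G α β Smax N E₁ E₂ t θ = 0 := by rw [G]; simp [h]

lemma advA1 (α β : ℝ) (hα : 0 < α) (hα1 : α ≤ 1) (hβ : 0 < β) (hβ1 : β ≤ 1)
    (E1v E2v σ₁ σ₂ w₁ w₂ c₁ c₂ d₁ d₂ x₁₂ x₂₁ τ₁ τ₂ : ℝ)
    (hτ1 : τ₁ = σ₁ + α*c₁ - d₁) (hτ2 : τ₂ = σ₂ + α*c₂ - d₂)
    (hw₁ : 0 ≤ w₁) (hc₁ : 0 ≤ c₁) (hc₂ : 0 ≤ c₂) (hx₂₁ : 0 ≤ x₂₁)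
    (h1 : 0 ≤ E1v + w₁ - c₁ + α * d₁ - x₁₂ + β * x₂₁)
    (h2 : 0 ≤ E2v + w₂ - c₂ + α * d₂ - x₂₁ + β * x₁₂) :
    α*β*τ₁ + α*τ₂ - (α*β*σ₁ + α*σ₂) - (β*E1v + E2v) ≤ w₁ + w₂ := by
  subst hτ1 hτ2
  nlinarith [mul_nonneg hβ.le h1, h2, mul_nonneg (sub_nonneg.2 hβ1) hw₁,
    mul_nonneg (mul_nonneg (sub_nonneg.2 hα1) (by linarith : (0:ℝ) ≤ 1 + α)) hc₂,
    mul_nonneg (mul_nonneg (mul_nonneg hβ.le (sub_nonneg.2 hα1)) (by linarith : (0:ℝ) ≤ 1 + α)) hc₁,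
    mul_nonneg (mul_nonneg (sub_nonneg.2 hβ1) (by linarith : (0:ℝ) ≤ 1 + β)) hx₂₁]

lemma advA2 (α β : ℝ) (hα : 0 < α) (hα1 : α ≤ 1) (hβ : 0 < β) (hβ1 : β ≤ 1)
    (E1v E2v σ₁ σ₂ w₁ w₂ c₁ c₂ d₁ d₂ x₁₂ x₂₁ τ₁ τ₂ : ℝ)
    (hτ1 : τ₁ = σ₁ + α*c₁ - d₁) (hτ2 : τ₂ = σ₂ + α*c₂ - d₂)
    (hw₁ : 0 ≤ w₁) (hw₂ : 0 ≤ w₂) (hd₁ : 0 ≤ d₁) (hd₂ : 0 ≤ d₂) (hx₂₁ : 0 ≤ x₂₁)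
    (h1 : 0 ≤ E1v + w₁ - c₁ + α * d₁ - x₁₂ + β * x₂₁)
    (h2 : 0 ≤ E2v + w₂ - c₂ + α * d₂ - x₂₁ + β * x₁₂) :
    α*β*τ₁ + α*τ₂ - (α*β*σ₁ + α*σ₂) - α^2*(β*E1v + E2v) ≤ w₁ + w₂ := by
  subst hτ1 hτ2
  have ha2 : α^2 ≤ 1 := by nlinarith
  nlinarith [mul_nonneg (mul_nonneg (mul_nonneg hα.le hα.le) hβ.le) h1,
    mul_nonneg (mul_nonneg hα.le hα.le) h2,
    mul_nonneg (sub_nonneg.2 (by nlinarith : α^2*β ≤ 1)) hw₁,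
    mul_nonneg (sub_nonneg.2 ha2) hw₂,
    mul_nonneg (mul_nonneg (mul_nonneg hα.le hβ.le) hd₁) (sub_nonneg.2 ha2),
    mul_nonneg (mul_nonneg hα.le hd₂) (sub_nonneg.2 ha2),
    mul_nonneg (mul_nonneg (mul_nonneg hα.le hα.le) (sub_nonneg.2 (by nlinarith : β^2 ≤ 1))) hx₂₁]
section props
set_option linter.unusedSectionVars false
variable {α β Smax : ℝ} {N : ℕ} {E₁ E₂ : ℕ → ℝ}
variable (hα : 0 < α) (hα1 : α ≤ 1) (hβ : 0 < β) (hβ1 : β ≤ 1) (hS : 0 < Smax)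

include hα hα1 hβ hβ1 hS in
lemma nTh_mono (t : ℕ) {θ θ' : ℝ} (h : θ ≤ θ') :
    nTh α β Smax E₁ E₂ t θ ≤ nTh α β Smax E₁ E₂ t θ' := by
  unfold nTh; split_ifs
  · exact min_le_min le_rfl (max_le_max le_rfl (by linarith))
  · exact max_le_max le_rfl (by linarith)

lemma clamp_key (α C Θ θ θ' : ℝ) (hα : 0 < α) (hα1 : α ≤ 1) (hΘ : 0 ≤ Θ) (h : θ ≤ θ') :
    max 0 (-(θ + C)) - max 0 (-(θ' + C))
      + (if 0 ≤ C then min Θ (max 0 (θ' + α^2 * C)) else max 0 (θ' + C))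
      - (if 0 ≤ C then min Θ (max 0 (θ + α^2 * C)) else max 0 (θ + C)) ≤ θ' - θ := by
  rcases le_or_gt 0 C with hc | hc
  · have ha2 : α^2 ≤ 1 := pow_le_one₀ hα.le hα1
    have h1 : α^2 * C ≤ C := by nlinarith [mul_nonneg (sub_nonneg.2 ha2) hc]
    simp only [max_def, min_def, if_pos hc]
    split_ifs <;> linarith
  · simp only [max_def, min_def, if_neg (not_le.2 hc)]
    split_ifs <;> linarith

include hα hα1 hβ hβ1 hS in
lemma nTh_key (t : ℕ) {θ θ' : ℝ} (h : θ ≤ θ') :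
    max 0 (-(θ + (β * E₁ t + E₂ t))) - max 0 (-(θ' + (β * E₁ t + E₂ t)))
      + nTh α β Smax E₁ E₂ t θ' - nTh α β Smax E₁ E₂ t θ ≤ θ' - θ := by
  have hΘ : 0 ≤ α*β*Smax + α*Smax := by positivity
  have := clamp_key α (β * E₁ t + E₂ t) (α*β*Smax + α*Smax) θ θ' hα hα1 hΘ h
  unfold nTh
  linarith

include hα hα1 hβ hβ1 hS in
lemma G_props : ∀ n t, N + 1 - t ≤ n → ∀ θ θ' : ℝ, θ ≤ θ' →
    0 ≤ G α β Smax N E₁ E₂ t θ ∧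
    G α β Smax N E₁ E₂ t θ' ≤ G α β Smax N E₁ E₂ t θ ∧
    G α β Smax N E₁ E₂ t θ ≤ G α β Smax N E₁ E₂ t θ' + (θ' - θ) := by
  intro n
  induction n with
  | zero =>
    intro t ht θ θ' h
    rw [G_of_gt _ _ _ _ _ _ _ _ (by omega), G_of_gt _ _ _ _ _ _ _ _ (by omega)]
    refine ⟨le_rfl, le_rfl, ?_⟩
    linarith
  | succ n ih =>
    intro t ht θ θ' h
    by_cases htN : t ≤ N
    · have hm := nTh_mono hα hα1 hβ hβ1 hS (E₁ := E₁) (E₂ := E₂) t h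
      have hk := nTh_key hα hα1 hβ hβ1 hS (E₁ := E₁) (E₂ := E₂) t h
      obtain ⟨i0, i1, i2⟩ := ih (t+1) (by omega) _ _ hm
      rw [G_of_le _ _ _ _ _ _ _ _ htN, G_of_le _ _ _ _ _ _ _ _ htN]
      refine ⟨by positivity, ?_, ?_⟩
      · have : max 0 (-(θ' + (β * E₁ t + E₂ t))) ≤ max 0 (-(θ + (β * E₁ t + E₂ t))) :=
          max_le_max le_rfl (by linarith)
        linarith
      · linarith
    · rw [G_of_gt _ _ _ _ _ _ _ _ htN, G_of_gt _ _ _ _ _ _ _ _ htN]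
      refine ⟨le_rfl, le_rfl, ?_⟩
      linarith

end props


lemma greedy_step (α β Smax : ℝ) (hα : 0 < α) (hα1 : α ≤ 1) (hβ : 0 < β) (hβ1 : β ≤ 1)
    (hS : 0 < Smax) (E1v E2v σ₁ σ₂ : ℝ) (hE1 : 0 ≤ E1v) (hE2 : E2v ≤ 0)
    (h10 : 0 ≤ σ₁) (h1S : σ₁ ≤ Smax) (h20 : 0 ≤ σ₂) (h2S : σ₂ ≤ Smax) :
    ∃ w₁ w₂ c₁ c₂ d₁ d₂ x₁₂ x₂₁ : ℝ,
      OneStep α β Smax σ₁ σ₂ E1v E2v w₁ w₂ c₁ c₂ d₁ d₂ x₁₂ x₂₁ ∧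
      w₁ + w₂ = max 0 (-((α*β*σ₁ + α*σ₂) + (β*E1v + E2v))) ∧
      α*β*(σ₁ + α*c₁ - d₁) + α*(σ₂ + α*c₂ - d₂) =
        (if 0 ≤ β*E1v + E2v then
          min (α*β*Smax + α*Smax) (max 0 ((α*β*σ₁+α*σ₂) + α^2*(β*E1v+E2v)))
        else max 0 ((α*β*σ₁+α*σ₂) + (β*E1v+E2v))) := by
  have hα' : α ≠ 0 := ne_of_gt hα
  have hβ' : β ≠ 0 := ne_of_gt hβ
  have ha2 : α^2 ≤ 1 := pow_le_one₀ hα.le hα1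
  have hp1 : 0 ≤ α*β*σ₁ := by positivity
  have hp2 : 0 ≤ α*σ₂ := by positivity
  have hΘ0 : (0:ℝ) ≤ α*β*Smax + α*Smax := by positivity
  rcases le_or_gt ((α*β*σ₁ + α*σ₂) + (β*E1v + E2v)) 0 with hc1 | hc1
  · -- Case 1 : drain everything, buy the rest
    refine ⟨0, -((α*β*σ₁ + α*σ₂) + (β*E1v + E2v)), 0, 0, σ₁, σ₂, E1v + α*σ₁, 0, ?_, ?_, ?_⟩
    · have hx0 : 0 ≤ E1v + α*σ₁ := by positivity
      refine ⟨le_rfl, by linarith, le_rfl, le_rfl, h10, h20, hx0, le_rfl,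
        le_rfl, le_rfl, by linarith, by linarith, by linarith, by linarith,
        by linarith, by linarith⟩
    · rw [max_eq_right (by linarith)]; ring
    · split_ifs with hc
      · have h1 : α^2*(β*E1v + E2v) ≤ β*E1v + E2v := by
          nlinarith [mul_nonneg (sub_nonneg.2 ha2) hc]
        rw [max_eq_left (by linarith), min_eq_right hΘ0]; ring
      · rw [max_eq_left (by linarith)]; ring
  · rcases lt_or_ge (β*E1v + E2v) 0 with hc | hc
    · -- Case 2 : C < 0 < θ + C
      rcases le_or_gt (-(β*E1v + E2v)) (α*σ₂) with h2a | h2a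
      · -- 2a : discharge BS2 only
        have hq : α * (-(β*E1v + E2v)/α) = -(β*E1v + E2v) := by field_simp
        have hd0 : 0 ≤ -(β*E1v + E2v)/α := div_nonneg (by linarith) hα.le
        have hdσ : -(β*E1v + E2v)/α ≤ σ₂ := by
          rw [div_le_iff₀ hα]; linarith
        refine ⟨0, 0, 0, 0, 0, -(β*E1v + E2v)/α, E1v, 0, ?_, ?_, ?_⟩
        · refine ⟨le_rfl, le_rfl, le_rfl, le_rfl, le_rfl, hd0, hE1, le_rfl,
            h10, hdσ, by linarith, by linarith, by linarith [hq], by linarith, by linarith,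
            by linarith [hq]⟩
        · rw [max_eq_left (by linarith)]; ring
        · rw [if_neg (not_le.2 hc), max_eq_right (by linarith)]
          linear_combination (-1 : ℝ) * hq
      · -- 2b : discharge BS2 fully, then BS1
        have hab : (0:ℝ) < α*β := by positivity
        have hq : α*β*((-(β*E1v + E2v) - α*σ₂)/(α*β)) = -(β*E1v + E2v) - α*σ₂ := by
          field_simp
        have hd0 : 0 ≤ (-(β*E1v + E2v) - α*σ₂)/(α*β) := div_nonneg (by linarith) hab.le
        have hdσ : (-(β*E1v + E2v) - α*σ₂)/(α*β) ≤ σ₁ := by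
          rw [div_le_iff₀ hab]; linarith
        have hx0 : 0 ≤ E1v + α*((-(β*E1v + E2v) - α*σ₂)/(α*β)) := by positivity
        refine ⟨0, 0, 0, 0, (-(β*E1v + E2v) - α*σ₂)/(α*β), σ₂,
          E1v + α*((-(β*E1v + E2v) - α*σ₂)/(α*β)), 0, ?_, ?_, ?_⟩
        · refine ⟨le_rfl, le_rfl, le_rfl, le_rfl, hd0, h20, hx0, le_rfl,
            hdσ, le_rfl, by linarith, by linarith, by linarith, by linarith,
            by linarith, by linarith [hq]⟩
        · rw [max_eq_left (by linarith)]; ring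
        · rw [if_neg (not_le.2 hc), max_eq_right (by linarith)]
          linear_combination (-1 : ℝ) * hq
    · -- Case 3 : C ≥ 0, surplus: charge storage
      have hL0 : 0 ≤ (β*E1v + E2v)/β := div_nonneg hc hβ.le
      have ha0 : 0 ≤ (Smax-σ₁)/α := div_nonneg (by linarith) hα.le
      have hb0 : 0 ≤ (Smax-σ₂)/α := div_nonneg (by linarith) hα.le
      set L := (β*E1v + E2v)/β with hLdef
      set a := (Smax-σ₁)/α with hadef
      set b := (Smax-σ₂)/α with hbdef
      have hLL : β * L = β*E1v + E2v := by rw [hLdef]; field_simp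
      have haa : α * a = Smax - σ₁ := by rw [hadef]; field_simp
      have hbb : α * b = Smax - σ₂ := by rw [hbdef]; field_simp
      obtain ⟨c1, hc1def⟩ : ∃ x : ℝ, x = min L a := ⟨_, rfl⟩
      have hc10 : 0 ≤ c1 := hc1def ▸ le_min hL0 ha0
      have hc1L : c1 ≤ L := hc1def ▸ min_le_left _ _
      have hc1a : c1 ≤ a := hc1def ▸ min_le_right _ _
      obtain ⟨c2, hc2def⟩ : ∃ x : ℝ, x = min (β*(L - c1)) b := ⟨_, rfl⟩
      have hc20 : 0 ≤ c2 := hc2def ▸ le_min (mul_nonneg hβ.le (by linarith)) hb0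
      have hc2m : c2 ≤ β*(L - c1) := hc2def ▸ min_le_left _ _
      have hc2b : c2 ≤ b := hc2def ▸ min_le_right _ _
      have hsum_le_L : β*c1 + c2 ≤ β*L := by linarith
      have hsum_le_ab : β*c1 + c2 ≤ β*a + b := by
        have := mul_le_mul_of_nonneg_left hc1a hβ.le
        linarith
      have hsum_ge : β*L ≤ β*c1 + c2 ∨ β*a + b ≤ β*c1 + c2 := by
        rcases min_cases L a with ⟨hA, hA'⟩ | ⟨hA, hA'⟩ <;>
          rcases min_cases (β*(L - c1)) b with ⟨hB, hB'⟩ | ⟨hB, hB'⟩ <;>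
            rw [← hc1def] at hA <;> rw [← hc2def] at hB
        · have hz : β*(L - c1) = 0 := by rw [hA]; ring
          left; linarith
        · have hz : β*(L - c1) = 0 := by rw [hA]; ring
          left; linarith
        · have hz : β*(L - c1) = β*L - β*a := by rw [hA]; ring
          left; linarith
        · have hz : β*(L - c1) = β*L - β*a := by rw [hA]; ring
          right; linarith
      have hx : β * ((-E2v + c2)/β) = -E2v + c2 := by field_simp
      have hx0 : 0 ≤ (-E2v + c2)/β := div_nonneg (by linarith) hβ.le
      have hx12le : (-E2v + c2)/β ≤ E1v - c1 := by
        rw [div_le_iff₀ hβ]; linarith [hLL, hc2m]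
      have hac1 : 0 ≤ α * c1 := mul_nonneg hα.le hc10
      have hac2 : 0 ≤ α * c2 := mul_nonneg hα.le hc20
      have hca : α * c1 ≤ α * a := mul_le_mul_of_nonneg_left hc1a hα.le
      have hcb : α * c2 ≤ α * b := mul_le_mul_of_nonneg_left hc2b hα.le
      refine ⟨0, 0, c1, c2, 0, 0, (-E2v + c2)/β, 0, ?_, ?_, ?_⟩
      · refine ⟨le_rfl, le_rfl, hc10, hc20, le_rfl, le_rfl, hx0, le_rfl,
          h10, h20, by linarith, by linarith, by linarith, by linarith,
          by linarith [hx12le], by linarith [hx]⟩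
      · rw [max_eq_left (by linarith)]; ring
      · have e1 : α*β*(α*a) = α*β*(Smax - σ₁) := by rw [haa]
        have e2 : α*(α*b) = α*(Smax - σ₂) := by rw [hbb]
        have e3 : α^2*(β*L) = α^2*(β*E1v + E2v) := by rw [hLL]
        have hq0 : 0 ≤ α^2*(β*E1v + E2v) := mul_nonneg (sq_nonneg α) hc
        rw [if_pos hc, max_eq_right (by linarith)]
        rcases le_total (β*L) (β*a + b) with h | h
        · have e4 := mul_le_mul_of_nonneg_left h (sq_nonneg α)
          rw [min_eq_right (by linarith [e1, e2, e3, e4])]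
          have hkeyR : β*c1 + c2 = β*L := by
            rcases hsum_ge with hg | hg <;> linarith
          linear_combination (α^2) * hkeyR + (α^2) * hLL
        · have e4 := mul_le_mul_of_nonneg_left h (sq_nonneg α)
          rw [min_eq_left (by linarith [e1, e2, e3, e4])]
          have hkeyR : β*c1 + c2 = β*a + b := by
            rcases hsum_ge with hg | hg <;> linarith
          linear_combination (α^2) * hkeyR + (α*β) * haa + α * hbb

lemma cost_nonneg {α β Smax : ℝ} {k N : ℕ} {E₁ E₂ : ℕ → ℝ} {σ₁ σ₂ : ℝ}
    {w₁ w₂ c₁ c₂ d₁ d₂ x₁₂ x₂₁ s₁ s₂ : ℕ → ℝ}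
    (hF : Feasible α β Smax k N E₁ E₂ σ₁ σ₂ w₁ w₂ c₁ c₂ d₁ d₂ x₁₂ x₂₁ s₁ s₂) :
    0 ≤ ∑ t ∈ Finset.Icc k N, (w₁ t + w₂ t) := by
  refine Finset.sum_nonneg fun t ht => ?_
  obtain ⟨h1, h2, -⟩ := hF.2.2.1 t ht
  linarith

lemma trivial_feasible (α β Smax : ℝ) (k N : ℕ) (E₁ E₂ : ℕ → ℝ)
    (σ₁ σ₂ : ℝ) (h10 : 0 ≤ σ₁) (h1S : σ₁ ≤ Smax) (h20 : 0 ≤ σ₂) (h2S : σ₂ ≤ Smax) :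
    Feasible α β Smax k N E₁ E₂ σ₁ σ₂ (fun t => max 0 (-(E₁ t))) (fun t => max 0 (-(E₂ t)))
      (fun _ => 0) (fun _ => 0) (fun _ => 0) (fun _ => 0) (fun _ => 0) (fun _ => 0)
      (fun _ => σ₁) (fun _ => σ₂) := by
  refine ⟨rfl, rfl, fun t ht => ?_, fun t ht => ⟨h10, h1S, h20, h2S⟩⟩
  refine ⟨le_max_left _ _, le_max_left _ _, le_rfl, le_rfl, le_rfl, le_rfl, le_rfl, le_rfl,
    by simp, by simp, h10, h20, ?_, ?_⟩
  · have := le_max_right 0 (-(E₁ t)); simp only []; linarith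
  · have := le_max_right 0 (-(E₂ t)); simp only []; linarith

lemma Jstar_eq_G (α β Smax : ℝ) (hα : 0 < α) (hα1 : α ≤ 1) (hβ : 0 < β) (hβ1 : β ≤ 1)
    (hS : 0 < Smax) (N : ℕ) (E₁ E₂ : ℕ → ℝ) :
    ∀ n k, k + n = N + 1 →
      (∀ t ∈ Finset.Icc k N, 0 ≤ E₁ t) → (∀ t ∈ Finset.Icc k N, E₂ t ≤ 0) →
      ∀ σ₁ σ₂, 0 ≤ σ₁ → σ₁ ≤ Smax → 0 ≤ σ₂ → σ₂ ≤ Smax →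
      Jstar α β Smax k N E₁ E₂ σ₁ σ₂ = G α β Smax N E₁ E₂ k (α*β*σ₁ + α*σ₂) := by
  intro n
  induction n with
  | zero =>
    intro k hk hE1 hE2 σ₁ σ₂ h10 h1S h20 h2S
    have hkN : ¬ k ≤ N := by omega
    rw [G_of_gt _ _ _ _ _ _ _ _ hkN]
    have hIccE : Finset.Icc k N = ∅ := Finset.Icc_eq_empty (by omega)
    unfold Jstar
    have hmem0 : (0:ℝ) ∈ {r : ℝ | ∃ w₁ w₂ c₁ c₂ d₁ d₂ x₁₂ x₂₁ s₁ s₂ : ℕ → ℝ,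
        Feasible α β Smax k N E₁ E₂ σ₁ σ₂ w₁ w₂ c₁ c₂ d₁ d₂ x₁₂ x₂₁ s₁ s₂ ∧
        (∑ t ∈ Finset.Icc k N, (w₁ t + w₂ t)) = 0} := by
      refine ⟨_, _, _, _, _, _, _, _, _, _,
        trivial_feasible α β Smax k N E₁ E₂ σ₁ σ₂ h10 h1S h20 h2S, ?_⟩
      rw [hIccE, Finset.sum_empty]
    refine le_antisymm (csInf_le ⟨0, fun r hr => ?_⟩ hmem0) (le_csInf ⟨0, hmem0⟩ fun r hr => ?_)
    · obtain ⟨w₁, w₂, c₁, c₂, d₁, d₂, x₁₂, x₂₁, s₁, s₂, hF, hsum⟩ := hr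
      rw [← hsum]; exact cost_nonneg hF
    · obtain ⟨w₁, w₂, c₁, c₂, d₁, d₂, x₁₂, x₂₁, s₁, s₂, hF, hsum⟩ := hr
      rw [← hsum]; exact cost_nonneg hF
  | succ n ih =>
    intro k hk hE1 hE2 σ₁ σ₂ h10 h1S h20 h2S
    have hkN : k ≤ N := by omega
    have hkmem : k ∈ Finset.Icc k N := Finset.mem_Icc.2 ⟨le_rfl, hkN⟩
    have hIcc : Finset.Icc k N = insert k (Finset.Icc (k+1) N) := by
      ext x; simp only [Finset.mem_Icc, Finset.mem_insert]; omega
    have hknotin : k ∉ Finset.Icc (k+1) N := by simp [Finset.mem_Icc]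
    have hE1' : ∀ t ∈ Finset.Icc (k+1) N, 0 ≤ E₁ t := fun t ht => hE1 t (by
      simp only [Finset.mem_Icc] at *; omega)
    have hE2' : ∀ t ∈ Finset.Icc (k+1) N, E₂ t ≤ 0 := fun t ht => hE2 t (by
      simp only [Finset.mem_Icc] at *; omega)
    -- greedy one-step action
    obtain ⟨gw₁, gw₂, gc₁, gc₂, gd₁, gd₂, gx₁₂, gx₂₁, hOS, hcost, hφ⟩ :=
      greedy_step α β Smax hα hα1 hβ hβ1 hS (E₁ k) (E₂ k) σ₁ σ₂ (hE1 k hkmem) (hE2 k hkmem)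
        h10 h1S h20 h2S
    obtain ⟨g1, g2, g3, g4, g5, g6, g7, g8, g9, g10, g11, g12, g13, g14, g15, g16⟩ := hOS
    have hφ' : α*β*(σ₁ + α*gc₁ - gd₁) + α*(σ₂ + α*gc₂ - gd₂) =
        nTh α β Smax E₁ E₂ k (α*β*σ₁ + α*σ₂) := hφ
    have IHg := ih (k+1) (by omega) hE1' hE2' (σ₁ + α*gc₁ - gd₁) (σ₂ + α*gc₂ - gd₂)
      g11 g12 g13 g14
    rw [hφ'] at IHg
    -- G facts at k+1
    have gprops : ∀ θa θb : ℝ, θa ≤ θb →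
        0 ≤ G α β Smax N E₁ E₂ (k+1) θa ∧
        G α β Smax N E₁ E₂ (k+1) θb ≤ G α β Smax N E₁ E₂ (k+1) θa ∧
        G α β Smax N E₁ E₂ (k+1) θa ≤ G α β Smax N E₁ E₂ (k+1) θb + (θb - θa) :=
      fun θa θb h => G_props (N := N) (E₁ := E₁) (E₂ := E₂) hα hα1 hβ hβ1 hS (N+1) (k+1) (by omega) θa θb h
    rw [G_of_le _ _ _ _ _ _ _ _ hkN]
    unfold Jstar
    have hmemtriv : (∑ t ∈ Finset.Icc k N, (max 0 (-(E₁ t)) + max 0 (-(E₂ t))))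
        ∈ {r : ℝ | ∃ w₁ w₂ c₁ c₂ d₁ d₂ x₁₂ x₂₁ s₁ s₂ : ℕ → ℝ,
        Feasible α β Smax k N E₁ E₂ σ₁ σ₂ w₁ w₂ c₁ c₂ d₁ d₂ x₁₂ x₂₁ s₁ s₂ ∧
        (∑ t ∈ Finset.Icc k N, (w₁ t + w₂ t)) = r} :=
      ⟨_, _, _, _, _, _, _, _, _, _,
        trivial_feasible α β Smax k N E₁ E₂ σ₁ σ₂ h10 h1S h20 h2S, rfl⟩
    refine le_antisymm ?_ (le_csInf ⟨_, hmemtriv⟩ fun r hr => ?_)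
    · -- Jstar ≤ greedy cost + Jstar(k+1)(greedy next) = RHS
      refine le_of_forall_pos_le_add fun ε hε => ?_
      have hne' : {r : ℝ | ∃ w₁ w₂ c₁ c₂ d₁ d₂ x₁₂ x₂₁ s₁ s₂ : ℕ → ℝ,
          Feasible α β Smax (k+1) N E₁ E₂ (σ₁ + α*gc₁ - gd₁) (σ₂ + α*gc₂ - gd₂)
            w₁ w₂ c₁ c₂ d₁ d₂ x₁₂ x₂₁ s₁ s₂ ∧
          (∑ t ∈ Finset.Icc (k+1) N, (w₁ t + w₂ t)) = r}.Nonempty :=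
        ⟨_, _, _, _, _, _, _, _, _, _, _,
          trivial_feasible α β Smax (k+1) N E₁ E₂ (σ₁ + α*gc₁ - gd₁) (σ₂ + α*gc₂ - gd₂) g11 g12 g13 g14, rfl⟩
      have hlt : Jstar α β Smax (k+1) N E₁ E₂ (σ₁ + α*gc₁ - gd₁) (σ₂ + α*gc₂ - gd₂) <
          Jstar α β Smax (k+1) N E₁ E₂ (σ₁ + α*gc₁ - gd₁) (σ₂ + α*gc₂ - gd₂) + ε := by
        linarith
      obtain ⟨r', hr'mem, hr'lt⟩ := exists_lt_of_csInf_lt hne' hlt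
      obtain ⟨w₁, w₂, c₁, c₂, d₁, d₂, x₁₂, x₂₁, s₁, s₂, hF', hsum'⟩ := hr'mem
      -- prepend the greedy step
      have hmem : ((gw₁ + gw₂) + r') ∈ {r : ℝ | ∃ w₁ w₂ c₁ c₂ d₁ d₂ x₁₂ x₂₁ s₁ s₂ : ℕ → ℝ,
          Feasible α β Smax k N E₁ E₂ σ₁ σ₂ w₁ w₂ c₁ c₂ d₁ d₂ x₁₂ x₂₁ s₁ s₂ ∧
          (∑ t ∈ Finset.Icc k N, (w₁ t + w₂ t)) = r} := by
        refine ⟨(fun t => if t = k then gw₁ else w₁ t), (fun t => if t = k then gw₂ else w₂ t),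
          (fun t => if t = k then gc₁ else c₁ t), (fun t => if t = k then gc₂ else c₂ t),
          (fun t => if t = k then gd₁ else d₁ t), (fun t => if t = k then gd₂ else d₂ t),
          (fun t => if t = k then gx₁₂ else x₁₂ t), (fun t => if t = k then gx₂₁ else x₂₁ t),
          (fun t => if t = k then σ₁ else s₁ t), (fun t => if t = k then σ₂ else s₂ t),
          ⟨by simp, by simp, fun t ht => ?_, fun t ht => ?_⟩, ?_⟩
        · by_cases htk : t = k
          · subst htk
            have hne1 : t + 1 ≠ t := by omega
            simp only [↓reduceIte, if_neg hne1]
            exact ⟨g1, g2, g3, g4, g5, g6, g7, g8,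
              by rw [hF'.1], by rw [hF'.2.1], g9, g10, g15, g16⟩
          · have ht' : t ∈ Finset.Icc (k+1) N := by
              simp only [Finset.mem_Icc] at *; omega
            have hne1 : t + 1 ≠ k := by
              simp only [Finset.mem_Icc] at ht'; omega
            simp only [if_neg htk, if_neg hne1]
            exact hF'.2.2.1 t ht'
        · by_cases htk : t = k
          · subst htk; simp only [↓reduceIte]; exact ⟨h10, h1S, h20, h2S⟩
          · have ht' : t ∈ Finset.Icc (k+1) (N+1) := by
              simp only [Finset.mem_Icc] at *; omega
            simp only [if_neg htk]
            exact hF'.2.2.2 t ht'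
        · rw [hIcc, Finset.sum_insert hknotin]
          simp only [↓reduceIte]
          congr 1
          rw [← hsum']
          refine Finset.sum_congr rfl fun t ht => ?_
          have htk : t ≠ k := by simp only [Finset.mem_Icc] at ht; omega
          simp [if_neg htk]
      have hle := csInf_le ⟨0, fun r hr => by
        obtain ⟨w₁', w₂', c₁', c₂', d₁', d₂', x₁₂', x₂₁', s₁', s₂', hF'', hsum''⟩ := hr
        rw [← hsum'']; exact cost_nonneg hF''⟩ hmem
      calc sInf _ ≤ (gw₁ + gw₂) + r' := hle
        _ ≤ max 0 (-((α*β*σ₁ + α*σ₂) + (β * E₁ k + E₂ k))) +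
            G α β Smax N E₁ E₂ (k+1) (nTh α β Smax E₁ E₂ k (α*β*σ₁ + α*σ₂)) + ε := by
          rw [hcost]
          rw [IHg] at hr'lt
          linarith
    · -- lower bound : any feasible cost dominates the greedy value
      obtain ⟨w₁, w₂, c₁, c₂, d₁, d₂, x₁₂, x₂₁, s₁, s₂, hF, hsum⟩ := hr
      obtain ⟨p1, p2, p3, p4, p5, p6, p7, p8, p9, p10, p11, p12, p13, p14⟩ := hF.2.2.1 k hkmem
      obtain ⟨hs10, hs1S, hs20, hs2S⟩ := hF.2.2.2 (k+1) (by simp only [Finset.mem_Icc]; omega)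
      have hτ1 : s₁ (k+1) = σ₁ + α * c₁ k - d₁ k := by rw [p9, hF.1]
      have hτ2 : s₂ (k+1) = σ₂ + α * c₂ k - d₂ k := by rw [p10, hF.2.1]
      -- tail is feasible from (s₁(k+1), s₂(k+1))
      have htailmem : (∑ t ∈ Finset.Icc (k+1) N, (w₁ t + w₂ t)) ∈
          {r : ℝ | ∃ u₁ u₂ v₁ v₂ e₁ e₂ y₁₂ y₂₁ z₁ z₂ : ℕ → ℝ,
          Feasible α β Smax (k+1) N E₁ E₂ (s₁ (k+1)) (s₂ (k+1)) u₁ u₂ v₁ v₂ e₁ e₂ y₁₂ y₂₁ z₁ z₂ ∧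
          (∑ t ∈ Finset.Icc (k+1) N, (u₁ t + u₂ t)) = r} := by
        refine ⟨w₁, w₂, c₁, c₂, d₁, d₂, x₁₂, x₂₁, s₁, s₂, ⟨rfl, rfl, fun t ht => ?_, fun t ht => ?_⟩, rfl⟩
        · exact hF.2.2.1 t (by simp only [Finset.mem_Icc] at *; omega)
        · exact hF.2.2.2 t (by simp only [Finset.mem_Icc] at *; omega)
      have htail : Jstar α β Smax (k+1) N E₁ E₂ (s₁ (k+1)) (s₂ (k+1)) ≤
          ∑ t ∈ Finset.Icc (k+1) N, (w₁ t + w₂ t) := by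
        refine csInf_le ⟨0, fun r hr => ?_⟩ htailmem
        obtain ⟨w₁', w₂', c₁', c₂', d₁', d₂', x₁₂', x₂₁', s₁', s₂', hF'', hsum''⟩ := hr
        rw [← hsum'']; exact cost_nonneg hF''
      have IHτ := ih (k+1) (by omega) hE1' hE2' (s₁ (k+1)) (s₂ (k+1)) hs10 hs1S hs20 hs2S
      rw [IHτ] at htail
      -- the master one-step inequality
      have hA1 := advA1 α β hα hα1 hβ hβ1 (E₁ k) (E₂ k) σ₁ σ₂ (w₁ k) (w₂ k) (c₁ k) (c₂ k)
        (d₁ k) (d₂ k) (x₁₂ k) (x₂₁ k) (s₁ (k+1)) (s₂ (k+1)) hτ1 hτ2 p1 p3 p4 p8 p13 p14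
      have hw0 : 0 ≤ w₁ k + w₂ k := by linarith
      have hφn0 : 0 ≤ α*β*(s₁ (k+1)) + α*(s₂ (k+1)) :=
        add_nonneg (mul_nonneg (mul_nonneg hα.le hβ.le) hs10) (mul_nonneg hα.le hs20)
      have hφnΘ : α*β*(s₁ (k+1)) + α*(s₂ (k+1)) ≤ α*β*Smax + α*Smax := by
        have h1 := mul_le_mul_of_nonneg_left hs1S (mul_nonneg hα.le hβ.le)
        have h2 := mul_le_mul_of_nonneg_left hs2S hα.le
        linarith
      have hθ0 : 0 ≤ α*β*σ₁ + α*σ₂ :=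
        add_nonneg (mul_nonneg (mul_nonneg hα.le hβ.le) h10) (mul_nonneg hα.le h20)
      have key : max 0 (-((α*β*σ₁ + α*σ₂) + (β * E₁ k + E₂ k))) +
          G α β Smax N E₁ E₂ (k+1) (nTh α β Smax E₁ E₂ k (α*β*σ₁ + α*σ₂)) ≤
          (w₁ k + w₂ k) + G α β Smax N E₁ E₂ (k+1) (α*β*(s₁ (k+1)) + α*(s₂ (k+1))) := by
        unfold nTh
        split_ifs with hcC
        · have hA2 := advA2 α β hα hα1 hβ hβ1 (E₁ k) (E₂ k) σ₁ σ₂ (w₁ k) (w₂ k) (c₁ k) (c₂ k)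
            (d₁ k) (d₂ k) (x₁₂ k) (x₂₁ k) (s₁ (k+1)) (s₂ (k+1)) hτ1 hτ2 p1 p2 p5 p6 p8 p13 p14
          rw [max_eq_left (by linarith)]
          rcases le_total (α*β*(s₁ (k+1)) + α*(s₂ (k+1)))
              (min (α*β*Smax + α*Smax) (max 0 ((α*β*σ₁ + α*σ₂) + α^2*(β * E₁ k + E₂ k)))) with hmp | hmp
          · have := (gprops _ _ hmp).2.1
            linarith
          · have hlip := (gprops _ _ hmp).2.2
            rcases min_cases (α*β*Smax + α*Smax)
                (max 0 ((α*β*σ₁ + α*σ₂) + α^2*(β * E₁ k + E₂ k))) with ⟨hm, hm'⟩ | ⟨hm, hm'⟩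
            · rw [hm] at hlip hmp ⊢
              linarith
            · rw [hm] at hlip hmp ⊢
              have := le_max_right 0 ((α*β*σ₁ + α*σ₂) + α^2*(β * E₁ k + E₂ k))
              rcases le_or_gt ((α*β*σ₁ + α*σ₂) + α^2*(β * E₁ k + E₂ k)) 0 with hz | hz
              · rw [max_eq_left hz] at hlip hmp ⊢
                linarith
              · rw [max_eq_right hz.le] at hlip hmp ⊢
                linarith
        · push_neg at hcC
          rcases le_total ((α*β*σ₁ + α*σ₂) + (β * E₁ k + E₂ k)) 0 with h0 | h0
          · rw [max_eq_right (by linarith), max_eq_left h0]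
            have hlip := (gprops 0 _ hφn0).2.2
            linarith
          · rw [max_eq_left (by linarith), max_eq_right h0]
            rcases le_total (α*β*(s₁ (k+1)) + α*(s₂ (k+1)))
                ((α*β*σ₁ + α*σ₂) + (β * E₁ k + E₂ k)) with hmp | hmp
            · have := (gprops _ _ hmp).2.1
              linarith
            · have hlip := (gprops _ _ hmp).2.2
              linarith
      rw [← hsum, hIcc, Finset.sum_insert hknotin]
      linarith

lemma V1_eq (α β Smax : ℝ) (hα : 0 < α) (hα1 : α ≤ 1) (hβ : 0 < β) (hβ1 : β ≤ 1)
    (hS : 0 < Smax) (E1v E2v σ₁ σ₂ : ℝ) (hE1 : 0 ≤ E1v) (hE2 : E2v ≤ 0)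
    (h10 : 0 ≤ σ₁) (h1S : σ₁ ≤ Smax) (h20 : 0 ≤ σ₂) (h2S : σ₂ ≤ Smax) :
    V1 α β Smax σ₁ σ₂ E1v E2v = max 0 (-((α*β*σ₁ + α*σ₂) + (β*E1v + E2v))) := by
  obtain ⟨gw₁, gw₂, gc₁, gc₂, gd₁, gd₂, gx₁₂, gx₂₁, hOS, hcost, -⟩ :=
    greedy_step α β Smax hα hα1 hβ hβ1 hS E1v E2v σ₁ σ₂ hE1 hE2 h10 h1S h20 h2S
  have hmem : max 0 (-((α*β*σ₁ + α*σ₂) + (β*E1v + E2v))) ∈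
      {r : ℝ | ∃ w₁ w₂ c₁ c₂ d₁ d₂ x₁₂ x₂₁ : ℝ,
        OneStep α β Smax σ₁ σ₂ E1v E2v w₁ w₂ c₁ c₂ d₁ d₂ x₁₂ x₂₁ ∧ w₁ + w₂ = r} :=
    ⟨gw₁, gw₂, gc₁, gc₂, gd₁, gd₂, gx₁₂, gx₂₁, hOS, hcost⟩
  unfold V1
  refine le_antisymm (csInf_le ⟨0, fun r hr => ?_⟩ hmem) (le_csInf ⟨_, hmem⟩ fun r hr => ?_)
  · obtain ⟨w₁, w₂, c₁, c₂, d₁, d₂, x₁₂, x₂₁, hO, hsum⟩ := hr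
    obtain ⟨q1, q2, -⟩ := hO
    linarith
  · obtain ⟨w₁, w₂, c₁, c₂, d₁, d₂, x₁₂, x₂₁, hO, hsum⟩ := hr
    obtain ⟨q1, q2, q3, q4, q5, q6, q7, q8, q9, q10, q11, q12, q13, q14, q15, q16⟩ := hO
    have hA1 := advA1 α β hα hα1 hβ hβ1 E1v E2v σ₁ σ₂ w₁ w₂ c₁ c₂ d₁ d₂ x₁₂ x₂₁
      (σ₁ + α*c₁ - d₁) (σ₂ + α*c₂ - d₂) rfl rfl q1 q3 q4 q8 q15 q16
    have hφ0 : 0 ≤ α*β*(σ₁ + α*c₁ - d₁) + α*(σ₂ + α*c₂ - d₂) :=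
      add_nonneg (mul_nonneg (mul_nonneg hα.le hβ.le) q11) (mul_nonneg hα.le q13)
    rw [← hsum]
    rcases max_cases 0 (-((α*β*σ₁ + α*σ₂) + (β*E1v + E2v))) with ⟨hm, -⟩ | ⟨hm, -⟩ <;>
      rw [hm] <;> linarith

/-- Proposition 6: optimality of the modified greedy policy when BS 1
is always in surplus and BS 2 always in deficit. -/
theorem modified_greedy_optimal
    (α β Smax : ℝ) (hα : 0 < α ∧ α ≤ 1) (hβ : 0 < β ∧ β ≤ 1) (hS : 0 < Smax)
    (k N : ℕ) (hkN : k ≤ N) (E₁ E₂ : ℕ → ℝ)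
    (hE₁ : ∀ t ∈ Finset.Icc k N, 0 ≤ E₁ t)
    (hE₂ : ∀ t ∈ Finset.Icc k N, E₂ t ≤ 0)
    (σ₁ σ₂ : ℝ) (hσ₁ : 0 ≤ σ₁ ∧ σ₁ ≤ Smax) (hσ₂ : 0 ≤ σ₂ ∧ σ₂ ≤ Smax) :
    ∃ w₁ w₂ c₁ c₂ d₁ d₂ x₁₂ x₂₁ : ℝ,
      OneStep α β Smax σ₁ σ₂ (E₁ k) (E₂ k) w₁ w₂ c₁ c₂ d₁ d₂ x₁₂ x₂₁ ∧
      w₁ + w₂ = V1 α β Smax σ₁ σ₂ (E₁ k) (E₂ k) ∧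
      Jstar α β Smax k N E₁ E₂ σ₁ σ₂ =
        V1 α β Smax σ₁ σ₂ (E₁ k) (E₂ k) +
          Jstar α β Smax (k + 1) N E₁ E₂ (σ₁ + α * c₁ - d₁) (σ₂ + α * c₂ - d₂) := by
  obtain ⟨hα0, hα1⟩ := hα
  obtain ⟨hβ0, hβ1⟩ := hβ
  obtain ⟨h10, h1S⟩ := hσ₁
  obtain ⟨h20, h2S⟩ := hσ₂
  have hkmem : k ∈ Finset.Icc k N := Finset.mem_Icc.2 ⟨le_rfl, hkN⟩
  obtain ⟨gw₁, gw₂, gc₁, gc₂, gd₁, gd₂, gx₁₂, gx₂₁, hOS, hcost, hφ⟩ :=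
    greedy_step α β Smax hα0 hα1 hβ0 hβ1 hS (E₁ k) (E₂ k) σ₁ σ₂ (hE₁ k hkmem) (hE₂ k hkmem)
      h10 h1S h20 h2S
  have hV := V1_eq α β Smax hα0 hα1 hβ0 hβ1 hS (E₁ k) (E₂ k) σ₁ σ₂ (hE₁ k hkmem) (hE₂ k hkmem)
    h10 h1S h20 h2S
  have hE1' : ∀ t ∈ Finset.Icc (k+1) N, 0 ≤ E₁ t := fun t ht => hE₁ t (by
    simp only [Finset.mem_Icc] at *; omega)
  have hE2' : ∀ t ∈ Finset.Icc (k+1) N, E₂ t ≤ 0 := fun t ht => hE₂ t (by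
    simp only [Finset.mem_Icc] at *; omega)
  obtain ⟨g1, g2, g3, g4, g5, g6, g7, g8, g9, g10, g11, g12, g13, g14, g15, g16⟩ := hOS
  have hJk := Jstar_eq_G α β Smax hα0 hα1 hβ0 hβ1 hS N E₁ E₂ (N + 1 - k) k (by omega)
    hE₁ hE₂ σ₁ σ₂ h10 h1S h20 h2S
  have hJk1 := Jstar_eq_G α β Smax hα0 hα1 hβ0 hβ1 hS N E₁ E₂ (N - k) (k + 1) (by omega)
    hE1' hE2' (σ₁ + α*gc₁ - gd₁) (σ₂ + α*gc₂ - gd₂) g11 g12 g13 g14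
  have hφ' : α*β*(σ₁ + α*gc₁ - gd₁) + α*(σ₂ + α*gc₂ - gd₂) =
      nTh α β Smax E₁ E₂ k (α*β*σ₁ + α*σ₂) := hφ
  refine ⟨gw₁, gw₂, gc₁, gc₂, gd₁, gd₂, gx₁₂, gx₂₁,
    ⟨g1, g2, g3, g4, g5, g6, g7, g8, g9, g10, g11, g12, g13, g14, g15, g16⟩,
    by rw [hV]; exact hcost, ?_⟩
  rw [hJk, hV, hJk1, hφ', G_of_le _ _ _ _ _ _ _ _ hkN]
end

section
/- (Closed form for the one-step minimal grid draw in Case 2.1 of the greedy algorithm.) Suppose 0 < α ≤ 1, 0 < β ≤ 1, (s₁,s₂) ∈ [0,S_max]², E₁ ≥ 0, E₂ < 0, and −E₂ ≥ β·E₁ + α·s₂. Then the infimum V₁(s₁,s₂,E₁,E₂) of grid draw over one-step feasible actions equals max{0, −E₂ − β·E₁ − α·s₂ − α·β·s₁}. -/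
/-- Case 2.1 of the greedy algorithm: closed form for the one-step
minimal grid draw when the deficit at BS 2 exceeds `β·E₁ + α·s₂`. -/
theorem one_step_min_grid_draw_case21
    (α β Smax : ℝ) (hα : 0 < α ∧ α ≤ 1) (hβ : 0 < β ∧ β ≤ 1) (hS : 0 < Smax)
    (s₁ s₂ : ℝ) (hs₁ : 0 ≤ s₁ ∧ s₁ ≤ Smax) (hs₂ : 0 ≤ s₂ ∧ s₂ ≤ Smax)
    (E₁ E₂ : ℝ) (hE₁ : 0 ≤ E₁) (hE₂ : E₂ < 0)
    (hdef : -E₂ ≥ β * E₁ + α * s₂) :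
    V1 α β Smax s₁ s₂ E₁ E₂ = max 0 (-E₂ - β * E₁ - α * s₂ - α * β * s₁) := by
  obtain ⟨hα0, hα1⟩ := hα
  obtain ⟨hβ0, hβ1⟩ := hβ
  obtain ⟨hs₁0, hs₁S⟩ := hs₁
  obtain ⟨hs₂0, hs₂S⟩ := hs₂
  set M := -E₂ - β * E₁ - α * s₂ - α * β * s₁ with hM
  -- membership: max 0 M is achieved
  have hmem : max 0 M ∈ {r : ℝ | ∃ w₁ w₂ c₁ c₂ d₁ d₂ x₁₂ x₂₁ : ℝ,
      OneStep α β Smax s₁ s₂ E₁ E₂ w₁ w₂ c₁ c₂ d₁ d₂ x₁₂ x₂₁ ∧ w₁ + w₂ = r} := by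
    refine ⟨0, max 0 M, 0, 0, s₁, s₂, E₁ + α * s₁, 0, ?_, by ring⟩
    have hx : 0 ≤ E₁ + α * s₁ := by positivity
    refine ⟨le_refl 0, le_max_left _ _, le_refl 0, le_refl 0, hs₁0, hs₂0, hx, le_refl 0,
      le_refl s₁, le_refl s₂, by linarith, by linarith, by linarith, by linarith,
      by nlinarith, ?_⟩
    have h2 : E₂ + max 0 M + α * s₂ + β * (E₁ + α * s₁) ≥ 0 := by
      have := le_max_right 0 M
      nlinarith
    nlinarith
  -- lower bound
  have hlb : ∀ r ∈ {r : ℝ | ∃ w₁ w₂ c₁ c₂ d₁ d₂ x₁₂ x₂₁ : ℝ,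
      OneStep α β Smax s₁ s₂ E₁ E₂ w₁ w₂ c₁ c₂ d₁ d₂ x₁₂ x₂₁ ∧ w₁ + w₂ = r},
      max 0 M ≤ r := by
    rintro r ⟨w₁, w₂, c₁, c₂, d₁, d₂, x₁₂, x₂₁,
      ⟨hw₁, hw₂, hc₁, hc₂, hd₁, hd₂, hx₁₂, hx₂₁, hd₁s, hd₂s, _, _, _, _, hA, hB⟩, hr⟩
    have hr0 : 0 ≤ r := by linarith
    have hrM : M ≤ r := by
      nlinarith [mul_nonneg hβ0.le hA, mul_nonneg hα0.le (sub_nonneg.2 hd₂s),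
        mul_nonneg (mul_nonneg hα0.le hβ0.le) (sub_nonneg.2 hd₁s),
        mul_nonneg hx₂₁ (sub_nonneg.2 (mul_le_one₀ hβ1 hβ0.le hβ1 : β * β ≤ 1)),
        mul_nonneg (sub_nonneg.2 hβ1) hw₁, mul_nonneg hβ0.le hc₁]
    exact max_le hr0 hrM
  exact le_antisymm (csInf_le ⟨max 0 M, hlb⟩ hmem) (le_csInf ⟨_, hmem⟩ hlb)
end

section
/- (Closed form for the optimal cost when there is no storage, α = 0.) Suppose α = 0 and 0 ≤ β ≤ 1. Define f(a,b) = 0 if a ≥ 0 and b ≥ 0; f(a,b) = max{0, −b − β·a} if a ≥ 0 > b; f(a,b) = max{0, −a − β·b} if b ≥ 0 > a; and f(a,b) = −a − b if a < 0 and b < 0. Then for every initial state (σ₁,σ₂) ∈ [0,S_max]², J*_k(σ₁,σ₂) = Σ_{t=k}^{N} f(E₁(t), E₂(t)). -/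
/-- Per-slot lower bound. -/
lemma slot_lb (β a b w₁ w₂ x y : ℝ) (hβ0 : 0 ≤ β) (hβ1 : β ≤ 1)
    (hw₁ : 0 ≤ w₁) (hw₂ : 0 ≤ w₂) (hx : 0 ≤ x) (hy : 0 ≤ y)
    (h1 : -a + x - β * y ≤ w₁) (h2 : -b + y - β * x ≤ w₂) :
    (if 0 ≤ a ∧ 0 ≤ b then (0:ℝ) else if 0 ≤ a then max 0 (-b - β * a)
     else if 0 ≤ b then max 0 (-a - β * b) else -a - b) ≤ w₁ + w₂ := by
  split_ifs with hab ha hb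
  · linarith
  · refine max_le (by linarith) ?_
    nlinarith [mul_le_mul_of_nonneg_left h1 hβ0, mul_nonneg (sub_nonneg.2 hβ1) hw₁,
      mul_nonneg (mul_nonneg (sub_nonneg.2 hβ1) (by linarith : (0:ℝ) ≤ 1 + β)) hy]
  · refine max_le (by linarith) ?_
    nlinarith [mul_le_mul_of_nonneg_left h2 hβ0, mul_nonneg (sub_nonneg.2 hβ1) hw₂,
      mul_nonneg (mul_nonneg (sub_nonneg.2 hβ1) (by linarith : (0:ℝ) ≤ 1 + β)) hx]
  · nlinarith [mul_nonneg (sub_nonneg.2 hβ1) hx, mul_nonneg (sub_nonneg.2 hβ1) hy]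

/-- Optimal grid draw for one station. -/
noncomputable def Wopt (β : ℝ) (Ea Eb : ℕ → ℝ) (t : ℕ) : ℝ :=
  if 0 ≤ Ea t then 0 else if 0 ≤ Eb t then max 0 (-(Ea t) - β * Eb t) else -(Ea t)

/-- Optimal transfer from station a to station b. -/
noncomputable def Xopt (Ea Eb : ℕ → ℝ) (t : ℕ) : ℝ :=
  if 0 ≤ Ea t ∧ ¬ 0 ≤ Eb t then Ea t else 0

lemma Wopt_nonneg (β : ℝ) (Ea Eb : ℕ → ℝ) (t : ℕ) : 0 ≤ Wopt β Ea Eb t := by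
  unfold Wopt; split_ifs with h1 h2
  · exact le_rfl
  · exact le_max_left _ _
  · push_neg at h1; linarith

lemma Xopt_nonneg (Ea Eb : ℕ → ℝ) (t : ℕ) : 0 ≤ Xopt Ea Eb t := by
  unfold Xopt; split_ifs with h
  · exact h.1
  · exact le_rfl

lemma energy_ok (β : ℝ) (Ea Eb : ℕ → ℝ) (t : ℕ) :
    0 ≤ Ea t + Wopt β Ea Eb t - Xopt Ea Eb t + β * Xopt Eb Ea t := by
  unfold Wopt Xopt
  by_cases h1 : 0 ≤ Ea t <;> by_cases h2 : 0 ≤ Eb t <;>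
    simp only [h1, h2, if_true, if_false, true_and, false_and, and_true, and_false,
      not_true, not_false_iff, if_neg, if_pos] <;> (try push_neg at *) <;>
    first
      | linarith
      | (have := le_max_right (0:ℝ) (-(Ea t) - β * Eb t); linarith)

lemma cost_eq (β : ℝ) (Ea Eb : ℕ → ℝ) (t : ℕ) :
    Wopt β Ea Eb t + Wopt β Eb Ea t =
      (if 0 ≤ Ea t ∧ 0 ≤ Eb t then (0:ℝ)
       else if 0 ≤ Ea t then max 0 (-(Eb t) - β * Ea t)
       else if 0 ≤ Eb t then max 0 (-(Ea t) - β * Eb t)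
       else -(Ea t) - Eb t) := by
  unfold Wopt
  by_cases h1 : 0 ≤ Ea t <;> by_cases h2 : 0 ≤ Eb t <;>
    simp [h1, h2] <;> ring

/-- closed form for the optimal cost when there is no storage (α = 0). -/
theorem no_storage_closed_form
    (β Smax : ℝ) (hβ : 0 ≤ β ∧ β ≤ 1) (hS : 0 < Smax)
    (k N : ℕ) (hkN : k ≤ N) (E₁ E₂ : ℕ → ℝ)
    (σ₁ σ₂ : ℝ) (hσ₁ : 0 ≤ σ₁ ∧ σ₁ ≤ Smax) (hσ₂ : 0 ≤ σ₂ ∧ σ₂ ≤ Smax) :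
    Jstar 0 β Smax k N E₁ E₂ σ₁ σ₂ =
      ∑ t ∈ Finset.Icc k N,
        (if 0 ≤ E₁ t ∧ 0 ≤ E₂ t then 0
         else if 0 ≤ E₁ t then max 0 (-(E₂ t) - β * E₁ t)
         else if 0 ≤ E₂ t then max 0 (-(E₁ t) - β * E₂ t)
         else -(E₁ t) - E₂ t) := by
  set S : ℝ := ∑ t ∈ Finset.Icc k N,
        (if 0 ≤ E₁ t ∧ 0 ≤ E₂ t then (0:ℝ)
         else if 0 ≤ E₁ t then max 0 (-(E₂ t) - β * E₁ t)
         else if 0 ≤ E₂ t then max 0 (-(E₁ t) - β * E₂ t)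
         else -(E₁ t) - E₂ t) with hSdef
  have hmem : S ∈ {r : ℝ | ∃ w₁ w₂ c₁ c₂ d₁ d₂ x₁₂ x₂₁ s₁ s₂ : ℕ → ℝ,
      Feasible 0 β Smax k N E₁ E₂ σ₁ σ₂ w₁ w₂ c₁ c₂ d₁ d₂ x₁₂ x₂₁ s₁ s₂ ∧
      (∑ t ∈ Finset.Icc k N, (w₁ t + w₂ t)) = r} := by
    refine ⟨Wopt β E₁ E₂, Wopt β E₂ E₁, 0, 0, 0, 0, Xopt E₁ E₂, Xopt E₂ E₁,
      fun _ => σ₁, fun _ => σ₂, ⟨rfl, rfl, ?_, ?_⟩, ?_⟩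
    · intro t ht
      refine ⟨Wopt_nonneg β E₁ E₂ t, Wopt_nonneg β E₂ E₁ t, le_refl 0, le_refl 0,
        le_refl 0, le_refl 0, Xopt_nonneg E₁ E₂ t, Xopt_nonneg E₂ E₁ t,
        by simp, by simp, by simpa using hσ₁.1, by simpa using hσ₂.1, ?_, ?_⟩
      · simpa using energy_ok β E₁ E₂ t
      · simpa using energy_ok β E₂ E₁ t
    · intro t ht
      exact ⟨hσ₁.1, hσ₁.2, hσ₂.1, hσ₂.2⟩
    · rw [hSdef]
      exact Finset.sum_congr rfl fun t _ => cost_eq β E₁ E₂ t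
  have hlb : ∀ r ∈ {r : ℝ | ∃ w₁ w₂ c₁ c₂ d₁ d₂ x₁₂ x₂₁ s₁ s₂ : ℕ → ℝ,
      Feasible 0 β Smax k N E₁ E₂ σ₁ σ₂ w₁ w₂ c₁ c₂ d₁ d₂ x₁₂ x₂₁ s₁ s₂ ∧
      (∑ t ∈ Finset.Icc k N, (w₁ t + w₂ t)) = r}, S ≤ r := by
    rintro r ⟨w₁, w₂, c₁, c₂, d₁, d₂, x₁₂, x₂₁, s₁, s₂, ⟨_, _, hslot, _⟩, hsum⟩
    rw [← hsum, hSdef]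
    refine Finset.sum_le_sum fun t ht => ?_
    obtain ⟨hw1, hw2, hc1, hc2, hd1, hd2, hx1, hx2, _, _, _, _, he1, he2⟩ := hslot t ht
    exact slot_lb β (E₁ t) (E₂ t) (w₁ t) (w₂ t) (x₁₂ t) (x₂₁ t) hβ.1 hβ.2
      hw1 hw2 hx1 hx2 (by linarith) (by linarith)
  exact le_antisymm (csInf_le ⟨S, hlb⟩ hmem) (le_csInf ⟨S, hmem⟩ hlb)
end

section
/- (Claim: no charging at BS 2 is needed when transferred energy does not cover the deficit.) Suppose 0 < α ≤ 1, 0 < β ≤ 1, (s₁,s₂) ∈ [0,S_max]², E₁ ≥ 0 > E₂. For any one-step feasible action with w₁ = w₂ = 0, β·x₁₂ ≤ −E₂, and c₂ > 0, there exists a one-step feasible action with the same grid draw (w₁' = w₂' = 0), with c₂' = 0, and whose next-state storage sum (s₁ + α·c₁' − d₁') + (s₂ + α·c₂' − d₂') is at least the next-state storage sum of the original action. -/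
/-- Claim in Case 2.2: if the transferred energy does not cover the
deficit and no grid energy is drawn, charging BS 2 can be removed without decreasing
the next-state storage sum. -/
theorem no_charging_at_BS2_needed
    (α β Smax : ℝ) (hα : 0 < α ∧ α ≤ 1) (hβ : 0 < β ∧ β ≤ 1) (hS : 0 < Smax)
    (s₁ s₂ : ℝ) (hs₁ : 0 ≤ s₁ ∧ s₁ ≤ Smax) (hs₂ : 0 ≤ s₂ ∧ s₂ ≤ Smax)
    (E₁ E₂ : ℝ) (hE₁ : 0 ≤ E₁) (hE₂ : E₂ < 0)
    (w₁ w₂ c₁ c₂ d₁ d₂ x₁₂ x₂₁ : ℝ)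
    (hfeas : OneStep α β Smax s₁ s₂ E₁ E₂ w₁ w₂ c₁ c₂ d₁ d₂ x₁₂ x₂₁)
    (hw₁ : w₁ = 0) (hw₂ : w₂ = 0)
    (hx : β * x₁₂ ≤ -E₂) (hc₂ : 0 < c₂) :
    ∃ c₁' c₂' d₁' d₂' x₁₂' x₂₁' : ℝ,
      OneStep α β Smax s₁ s₂ E₁ E₂ 0 0 c₁' c₂' d₁' d₂' x₁₂' x₂₁' ∧
      c₂' = 0 ∧
      (s₁ + α * c₁ - d₁) + (s₂ + α * c₂ - d₂) ≤
        (s₁ + α * c₁' - d₁') + (s₂ + α * c₂' - d₂') := by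
  obtain ⟨hα0, hα1⟩ := hα
  obtain ⟨_, _, hc1, hc2, hd1, hd2, hx12, hx21, hd1s, hd2s,
    h1l, h1u, h2l, h2u, hB1, hB2⟩ := hfeas
  subst hw₁; subst hw₂
  have hkey : c₂ ≤ α * d₂ := by nlinarith
  have hdiv : c₂ / α ≤ d₂ := by
    rw [div_le_iff₀ hα0]; nlinarith
  have hdiv2 : α * c₂ ≤ c₂ / α := by
    rw [le_div_iff₀ hα0]
    nlinarith [mul_nonneg (mul_nonneg hc2 (sub_nonneg.2 hα1)) (by linarith : (0:ℝ) ≤ 1 + α)]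
  refine ⟨c₁, 0, d₁, d₂ - c₂ / α, x₁₂, x₂₁,
    ⟨le_refl 0, le_refl 0, hc1, le_refl 0, hd1, by linarith, hx12, hx21,
     hd1s, by linarith, by linarith, by linarith, ?_, ?_, by linarith, ?_⟩,
    rfl, by linarith⟩
  · nlinarith
  · nlinarith
  · have h : α * (d₂ - c₂ / α) = α * d₂ - c₂ := by
      field_simp
    linarith [h, hB2]
end

section
/- (Case 2.2 of the greedy algorithm with β ≥ α².) Suppose 0 < α ≤ 1, 0 < β ≤ 1 with β ≥ α², (s₁,s₂) ∈ [0,S_max]², E₁ ≥ 0, E₂ < 0, and β·E₁ ≤ −E₂ < β·E₁ + α·s₂. Then the one-step minimal grid draw is V₁(s₁,s₂,E₁,E₂) = 0, and the supremum of the next-state storage sum (s₁ + α·c₁ − d₁) + (s₂ + α·c₂ − d₂) over one-step feasible actions with grid draw 0 equals s₁ + s₂ + (β·E₁ + E₂)/α. -/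
set_option maxHeartbeats 1000000 in
/-- Case 2.2 with β ≥ α²: zero grid draw suffices, and the maximal
next-state storage sum equals `s₁ + s₂ + (β·E₁ + E₂)/α`. -/
theorem case22_beta_ge_alpha_sq
    (α β Smax : ℝ) (hα : 0 < α ∧ α ≤ 1) (hβ : 0 < β ∧ β ≤ 1) (hβα : β ≥ α ^ 2)
    (hS : 0 < Smax)
    (s₁ s₂ : ℝ) (hs₁ : 0 ≤ s₁ ∧ s₁ ≤ Smax) (hs₂ : 0 ≤ s₂ ∧ s₂ ≤ Smax)
    (E₁ E₂ : ℝ) (hE₁ : 0 ≤ E₁) (hE₂ : E₂ < 0)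
    (hlo : β * E₁ ≤ -E₂) (hhi : -E₂ < β * E₁ + α * s₂) :
    V1 α β Smax s₁ s₂ E₁ E₂ = 0 ∧
      sSup {r : ℝ | ∃ w₁ w₂ c₁ c₂ d₁ d₂ x₁₂ x₂₁ : ℝ,
          OneStep α β Smax s₁ s₂ E₁ E₂ w₁ w₂ c₁ c₂ d₁ d₂ x₁₂ x₂₁ ∧
          w₁ + w₂ = 0 ∧
          (s₁ + α * c₁ - d₁) + (s₂ + α * c₂ - d₂) = r} =
        s₁ + s₂ + (β * E₁ + E₂) / α := by
  obtain ⟨hα0, hα1⟩ := hα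
  obtain ⟨hβ0, hβ1⟩ := hβ
  have hαne : α ≠ 0 := ne_of_gt hα0
  set D : ℝ := (-E₂ - β * E₁) / α with hD
  have hD0 : 0 ≤ D := div_nonneg (by linarith) hα0.le
  have hDs : D ≤ s₂ := by
    rw [hD, div_le_iff₀ hα0]; nlinarith
  have hαD : α * D = -E₂ - β * E₁ := by
    rw [hD]; field_simp
  -- the witness action
  have hwit : OneStep α β Smax s₁ s₂ E₁ E₂ 0 0 0 0 0 D E₁ 0 := by
    refine ⟨le_refl 0, le_refl 0, le_refl 0, le_refl 0, le_refl 0, hD0, hE₁, le_refl 0,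
      hs₁.1, hDs, ?_, ?_, ?_, ?_, ?_, ?_⟩ <;> nlinarith [hs₁.1, hs₁.2, hs₂.1, hs₂.2]
  constructor
  · -- V1 = 0
    apply le_antisymm
    · apply csInf_le
      · exact ⟨0, fun r ⟨w₁, w₂, _, _, _, _, _, _, h, hr⟩ => by
          obtain ⟨h1, h2, _⟩ := h; linarith⟩
      · exact ⟨0, 0, 0, 0, 0, D, E₁, 0, hwit, by ring⟩
    · apply le_csInf
      · exact ⟨0, 0, 0, 0, 0, 0, D, E₁, 0, hwit, by ring⟩
      · rintro r ⟨w₁, w₂, _, _, _, _, _, _, h, hr⟩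
        obtain ⟨h1, h2, _⟩ := h; linarith
  · -- sSup part
    have hub : ∀ r ∈ {r : ℝ | ∃ w₁ w₂ c₁ c₂ d₁ d₂ x₁₂ x₂₁ : ℝ,
          OneStep α β Smax s₁ s₂ E₁ E₂ w₁ w₂ c₁ c₂ d₁ d₂ x₁₂ x₂₁ ∧
          w₁ + w₂ = 0 ∧
          (s₁ + α * c₁ - d₁) + (s₂ + α * c₂ - d₂) = r},
        r ≤ s₁ + s₂ + (β * E₁ + E₂) / α := by
      rintro r ⟨w₁, w₂, c₁, c₂, d₁, d₂, x₁₂, x₂₁, h, hw, hr⟩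
      obtain ⟨hw₁, hw₂, hc₁, hc₂, hd₁, hd₂, hx₁₂, hx₂₁, _, _, _, _, _, _, he₁, he₂⟩ := h
      have hw₁0 : w₁ = 0 := by linarith
      have hw₂0 : w₂ = 0 := by linarith
      subst hw₁0 hw₂0
      -- key inequality: α²(c₁+c₂) - α(d₁+d₂) ≤ β E₁ + E₂
      have key : α ^ 2 * c₁ + α ^ 2 * c₂ - α * d₁ - α * d₂ ≤ β * E₁ + E₂ := by
        have h1 : 0 ≤ β * (E₁ + 0 - c₁ + α * d₁ - x₁₂ + β * x₂₁) := mul_nonneg hβ0.le he₁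
        have h2 : 0 ≤ (β - α ^ 2) * c₁ := mul_nonneg (by linarith) hc₁
        have h3 : 0 ≤ (1 - α ^ 2) * c₂ := mul_nonneg (by nlinarith) hc₂
        have h4 : 0 ≤ α * (1 - β) * d₁ :=
          mul_nonneg (mul_nonneg hα0.le (by linarith)) hd₁
        have h5 : 0 ≤ (1 - β ^ 2) * x₂₁ := mul_nonneg (by nlinarith) hx₂₁
        nlinarith [he₂]
      have : α * (c₁ + c₂) - d₁ - d₂ ≤ (β * E₁ + E₂) / α := by
        rw [le_div_iff₀ hα0]; nlinarith [key]
      linarith [hr]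
    apply le_antisymm
    · apply csSup_le
      · exact ⟨s₁ + s₂ + (β * E₁ + E₂) / α,
          ⟨0, 0, 0, 0, 0, D, E₁, 0, hwit, by ring, by rw [hD]; field_simp; ring⟩⟩
      · exact hub
    · apply le_csSup
      · exact ⟨s₁ + s₂ + (β * E₁ + E₂) / α, hub⟩
      · exact ⟨0, 0, 0, 0, 0, D, E₁, 0, hwit, by ring, by rw [hD]; field_simp; ring⟩
end

section
/- (Case 2.2 of the greedy algorithm with β < α².) Suppose 0 < α ≤ 1, 0 < β ≤ 1 with β < α², (s₁,s₂) ∈ [0,S_max]², E₁ ≥ 0, E₂ < 0, and β·E₁ ≤ −E₂ < β·E₁ + α·s₂. Let Δ* = min{E₁, (S_max − s₁)/α, E₁ − (−E₂ − α·s₂)/β}. Then the one-step minimal grid draw is V₁(s₁,s₂,E₁,E₂) = 0, and the supremum of the next-state storage sum (s₁ + α·c₁ − d₁) + (s₂ + α·c₂ − d₂) over one-step feasible actions with grid draw 0 equals s₁ + s₂ + (β·E₁ + E₂)/α + (α − β/α)·Δ*. -/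
set_option maxHeartbeats 1000000 in
/-- Case 2.2 with β < α²: zero grid draw suffices, and the maximal
next-state storage sum equals `s₁ + s₂ + (β·E₁ + E₂)/α + (α − β/α)·Δ*`. -/
theorem case22_beta_lt_alpha_sq
    (α β Smax : ℝ) (hα : 0 < α ∧ α ≤ 1) (hβ : 0 < β ∧ β ≤ 1) (hβα : β < α ^ 2)
    (hS : 0 < Smax)
    (s₁ s₂ : ℝ) (hs₁ : 0 ≤ s₁ ∧ s₁ ≤ Smax) (hs₂ : 0 ≤ s₂ ∧ s₂ ≤ Smax)
    (E₁ E₂ : ℝ) (hE₁ : 0 ≤ E₁) (hE₂ : E₂ < 0)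
    (hlo : β * E₁ ≤ -E₂) (hhi : -E₂ < β * E₁ + α * s₂)
    (Δstar : ℝ)
    (hΔstar : Δstar = min E₁ (min ((Smax - s₁) / α) (E₁ - (-E₂ - α * s₂) / β))) :
    V1 α β Smax s₁ s₂ E₁ E₂ = 0 ∧
      sSup {r : ℝ | ∃ w₁ w₂ c₁ c₂ d₁ d₂ x₁₂ x₂₁ : ℝ,
          OneStep α β Smax s₁ s₂ E₁ E₂ w₁ w₂ c₁ c₂ d₁ d₂ x₁₂ x₂₁ ∧
          w₁ + w₂ = 0 ∧
          (s₁ + α * c₁ - d₁) + (s₂ + α * c₂ - d₂) = r} =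
        s₁ + s₂ + (β * E₁ + E₂) / α + (α - β / α) * Δstar := by
  obtain ⟨hα0, hα1⟩ := hα
  obtain ⟨hβ0, hβ1⟩ := hβ
  obtain ⟨hs10, hs1S⟩ := hs₁
  obtain ⟨hs20, hs2S⟩ := hs₂
  have hαne : α ≠ 0 := ne_of_gt hα0
  have hβne : β ≠ 0 := ne_of_gt hβ0
  -- facts about Δstar
  have hΔ1 : Δstar ≤ E₁ := hΔstar ▸ min_le_left _ _
  have hΔ2 : α * Δstar ≤ Smax - s₁ := by
    have h : Δstar ≤ (Smax - s₁) / α :=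
      hΔstar ▸ le_trans (min_le_right _ _) (min_le_left _ _)
    rw [le_div_iff₀ hα0] at h; linarith
  have hΔ3 : β * Δstar ≤ β * E₁ + E₂ + α * s₂ := by
    have h : Δstar ≤ E₁ - (-E₂ - α * s₂) / β :=
      hΔstar ▸ le_trans (min_le_right _ _) (min_le_right _ _)
    have h2 := mul_le_mul_of_nonneg_left h hβ0.le
    have h3 : β * (E₁ - (-E₂ - α * s₂) / β) = β * E₁ + E₂ + α * s₂ := by
      field_simp; ring
    linarith [h3 ▸ h2]
  have hΔ0 : 0 ≤ Δstar := by
    rw [hΔstar]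
    refine le_min hE₁ (le_min (div_nonneg (by linarith) hα0.le) ?_)
    rw [sub_nonneg, div_le_iff₀ hβ0]; nlinarith
  -- the witness action
  set D2 : ℝ := (-E₂ - β * (E₁ - Δstar)) / α with hD2
  have hαD2 : α * D2 = -E₂ - β * (E₁ - Δstar) := by
    rw [hD2]; field_simp
  have hD2nn : 0 ≤ D2 := by
    apply div_nonneg _ hα0.le; nlinarith
  have hD2le : D2 ≤ s₂ := by
    rw [hD2, div_le_iff₀ hα0]; nlinarith
  have hfeas : OneStep α β Smax s₁ s₂ E₁ E₂ 0 0 Δstar 0 0 D2 (E₁ - Δstar) 0 :=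
    ⟨le_refl 0, le_refl 0, hΔ0, le_refl 0, le_refl 0, hD2nn, by linarith, le_refl 0,
     hs10, hD2le, by nlinarith, by nlinarith, by nlinarith, by nlinarith,
     by nlinarith, by nlinarith⟩
  constructor
  · -- V1 = 0
    apply IsLeast.csInf_eq
    constructor
    · exact ⟨0, 0, Δstar, 0, 0, D2, E₁ - Δstar, 0, hfeas, by norm_num⟩
    · rintro r ⟨w₁, w₂, c₁, c₂, d₁, d₂, x₁₂, x₂₁, ⟨hw₁, hw₂, _⟩, hr⟩
      linarith
  · -- the sup
    apply IsGreatest.csSup_eq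
    constructor
    · refine ⟨0, 0, Δstar, 0, 0, D2, E₁ - Δstar, 0, hfeas, by norm_num, ?_⟩
      rw [hD2]; field_simp; ring
    · rintro r ⟨w₁, w₂, c₁, c₂, d₁, d₂, x₁₂, x₂₁,
        ⟨hw₁, hw₂, hc₁, hc₂, hd₁, hd₂, hx₁₂, hx₂₁, hd₁s, hd₂s,
         h1lo, h1hi, h2lo, h2hi, hn₁, hn₂⟩, hw0, hr⟩
      have hw₁0 : w₁ = 0 := by linarith
      have hw₂0 : w₂ = 0 := by linarith
      subst hw₁0 hw₂0
      subst hr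
      have hα2 : α ^ 2 ≤ 1 := by nlinarith
      have hβ2 : β ^ 2 ≤ 1 := by nlinarith
      have hα2β : α ^ 2 * β ≤ 1 := by nlinarith
      have hα3 : α ^ 3 ≤ α := by nlinarith
      rw [hΔstar]
      rcases min_cases E₁ (min ((Smax - s₁) / α) (E₁ - (-E₂ - α * s₂) / β)) with
        ⟨he, _⟩ | ⟨he, _⟩
      · rw [he]
        -- case A : Δ = E₁
        have hid : α * (s₁ + s₂ + (β * E₁ + E₂) / α + (α - β / α) * E₁)
            = α * (s₁ + s₂) + (β * E₁ + E₂) + (α ^ 2 - β) * E₁ := by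
          field_simp
        refine le_of_mul_le_mul_left ?_ hα0
        rw [hid]
        have P1 : 0 ≤ α ^ 2 * (E₁ + 0 - c₁ + α * d₁ - x₁₂ + β * x₂₁) :=
          mul_nonneg (by positivity) hn₁
        have P3 : 0 ≤ (α ^ 2 - β) * x₁₂ := mul_nonneg (by linarith) hx₁₂
        have P4 : 0 ≤ (1 - α ^ 2 * β) * x₂₁ :=
          mul_nonneg (by linarith) hx₂₁
        have P5 : 0 ≤ (1 - α ^ 2) * c₂ := mul_nonneg (by linarith) hc₂
        have P6 : 0 ≤ (α - α ^ 3) * d₁ :=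
          mul_nonneg (by linarith) hd₁
        linarith [P1, hn₂, P3, P4, P5, P6]
      · rw [he]
        rcases min_cases ((Smax - s₁) / α) (E₁ - (-E₂ - α * s₂) / β) with
          ⟨he2, _⟩ | ⟨he2, _⟩
        · rw [he2]
          -- case B : Δ = (Smax - s₁)/α
          have hid : α ^ 2 * (s₁ + s₂ + (β * E₁ + E₂) / α + (α - β / α) * ((Smax - s₁) / α))
              = α ^ 2 * (s₁ + s₂) + α * (β * E₁ + E₂) + (α ^ 2 - β) * (Smax - s₁) := by
            field_simp
          refine le_of_mul_le_mul_left ?_ (by positivity : (0:ℝ) < α ^ 2)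
          rw [hid]
          have Q1 : 0 ≤ α * β * (E₁ + 0 - c₁ + α * d₁ - x₁₂ + β * x₂₁) :=
            mul_nonneg (by positivity) hn₁
          have Q2 : 0 ≤ α * (E₂ + 0 - c₂ + α * d₂ - x₂₁ + β * x₁₂) :=
            mul_nonneg hα0.le hn₂
          have Q3 : 0 ≤ α * (1 - β ^ 2) * x₂₁ :=
            mul_nonneg (mul_nonneg hα0.le (by linarith)) hx₂₁
          have Q4 : 0 ≤ (α ^ 2 - β) * (Smax - s₁ - (α * c₁ - d₁)) :=
            mul_nonneg (by linarith) (by linarith)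
          have Q5 : 0 ≤ (α - α ^ 3) * c₂ := mul_nonneg (by linarith) hc₂
          have Q6 : 0 ≤ β * (1 - α ^ 2) * d₁ :=
            mul_nonneg (mul_nonneg hβ0.le (by linarith)) hd₁
          linarith [Q1, Q2, Q3, Q4, Q5, Q6]
        · rw [he2]
          -- case C : Δ = E₁ - (-E₂ - α s₂)/β
          have hid : α * β * (s₁ + s₂ + (β * E₁ + E₂) / α
                + (α - β / α) * (E₁ - (-E₂ - α * s₂) / β))
              = α * β * (s₁ + s₂) + α ^ 2 * (β * E₁ + E₂) + α * (α ^ 2 - β) * s₂ := by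
            field_simp; ring
          refine le_of_mul_le_mul_left ?_ (by positivity : (0:ℝ) < α * β)
          rw [hid]
          have R1 : 0 ≤ α ^ 2 * β * (E₁ + 0 - c₁ + α * d₁ - x₁₂ + β * x₂₁) :=
            mul_nonneg (by positivity) hn₁
          have R2 : 0 ≤ α ^ 2 * (E₂ + 0 - c₂ + α * d₂ - x₂₁ + β * x₁₂) :=
            mul_nonneg (by positivity) hn₂
          have R3 : 0 ≤ α ^ 2 * (1 - β ^ 2) * x₂₁ :=
            mul_nonneg (mul_nonneg (by positivity) (by linarith)) hx₂₁
          have R4 : 0 ≤ α * (α ^ 2 - β) * (s₂ - d₂) :=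
            mul_nonneg (mul_nonneg hα0.le (by linarith)) (by linarith)
          have R5 : 0 ≤ α ^ 2 * (1 - β) * c₂ :=
            mul_nonneg (mul_nonneg (by positivity) (by linarith)) hc₂
          have R6 : 0 ≤ α * β * (1 - α ^ 2) * d₁ :=
            mul_nonneg (mul_nonneg (by positivity) (by linarith)) hd₁
          linarith [R1, R2, R3, R4, R5, R6]
end
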